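/- arXiv:1407.8353 — 7 statements merged into one kernel-verified Lean document; each statement's English description precedes it below -/
import Mathlib

section
/- Let X be a Markov chain on E with transition kernel P and n-step transition probabilities P_n(x,·), and let μ be an invariant probability measure for X. Assume that for μ ⊗ μ-almost all pairs (x, y) ∈ E × E there exists n = n_{x,y} ∈ ℕ such that the measures P_n(x,·) and P_n(y,·) are not mutually singular. Then for μ-almost all x ∈ E the total variation distance ‖P_n(x,·) − μ‖ tends to 0 as n → ∞. -/
open MeasureTheory ProbabilityTheory Filter ENNReal

/-- The total variation distance `‖μ - ν‖` between two (probability) measures,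
with values in `[0,2]`: `‖μ - ν‖ = 2 ⨆_{A measurable} |μ A - ν A|`. -/
noncomputable def tvDist {E : Type*} [MeasurableSpace E] (μ ν : Measure E) : ℝ≥0∞ :=
  2 * ⨆ (A : Set E) (_ : MeasurableSet A), ((μ A - ν A) ⊔ (ν A - μ A))

/-- The `n`-step transition kernel `P_n` of a Markov kernel `P`. -/
noncomputable def nStep {E : Type*} [MeasurableSpace E] (P : ProbabilityTheory.Kernel E E) :
    ℕ → ProbabilityTheory.Kernel E E
  | 0 => ProbabilityTheory.Kernel.id
  | n + 1 => (nStep P n) ∘ₖ P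

namespace DoobProof

open Set

variable {E : Type*} [MeasurableSpace E]

section NStep

variable (P : Kernel E E) [IsMarkovKernel P]

instance nStep.instIsMarkovKernel : ∀ n, IsMarkovKernel (nStep P n)
  | 0 => by rw [nStep]; infer_instance
  | n + 1 => by
      rw [nStep]
      have := nStep.instIsMarkovKernel n
      infer_instance

lemma nStep_comm (n : ℕ) : nStep P n ∘ₖ P = P ∘ₖ nStep P n := by
  induction n with
  | zero => rw [nStep, Kernel.id_comp, Kernel.comp_id]
  | succ n ih =>
      rw [nStep, ih, Kernel.comp_assoc, ih]

lemma nStep_add (n k : ℕ) : nStep P (n + k) = nStep P k ∘ₖ nStep P n := by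
  induction k with
  | zero => rw [Nat.add_zero, nStep, Kernel.id_comp]
  | succ k ih =>
      rw [← Nat.add_assoc, nStep, nStep, ih, Kernel.comp_assoc, nStep_comm,
        ← Kernel.comp_assoc]

lemma nStep_add_apply (n k : ℕ) (x : E) :
    nStep P (n + k) x = (nStep P n x).bind (nStep P k) := by
  rw [nStep_add, Kernel.comp_apply]

end NStep

section Kernels

variable [MeasurableSpace.CountablyGenerated E] (P : Kernel E E) [IsMarkovKernel P]

/-- first-coordinate `n`-step kernel, as a kernel on pairs -/
noncomputable def kfst (n : ℕ) : Kernel (E × E) E :=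
  (nStep P n).comap Prod.fst measurable_fst

/-- second-coordinate `n`-step kernel, as a kernel on pairs -/
noncomputable def ksnd (n : ℕ) : Kernel (E × E) E :=
  (nStep P n).comap Prod.snd measurable_snd

instance (n : ℕ) : IsMarkovKernel (kfst P n) := by rw [kfst]; infer_instance
instance (n : ℕ) : IsMarkovKernel (ksnd P n) := by rw [ksnd]; infer_instance

lemma kfst_apply (n : ℕ) (z : E × E) : kfst P n z = nStep P n z.1 := rfl
lemma ksnd_apply (n : ℕ) (z : E × E) : ksnd P n z = nStep P n z.2 := rfl

/-- density of `kfst` w.r.t. the sum -/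
noncomputable def df (n : ℕ) : E × E → E → ℝ≥0∞ :=
  Kernel.rnDeriv (kfst P n) (kfst P n + ksnd P n)

/-- density of `ksnd` w.r.t. the sum -/
noncomputable def dg (n : ℕ) : E × E → E → ℝ≥0∞ :=
  Kernel.rnDeriv (ksnd P n) (kfst P n + ksnd P n)

lemma measurable_df (n : ℕ) : Measurable (Function.uncurry (df P n)) :=
  Kernel.measurable_rnDeriv _ _

lemma measurable_dg (n : ℕ) : Measurable (Function.uncurry (dg P n)) :=
  Kernel.measurable_rnDeriv _ _

/-- the "common part" kernel: `lam n z` is the infimum of `P_n(z.1, ·)` and `P_n(z.2, ·)` -/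
noncomputable def lam (n : ℕ) : Kernel (E × E) E :=
  (kfst P n + ksnd P n).withDensity (fun z w => df P n z w ⊓ dg P n z w)

/-- remainder of the first marginal -/
noncomputable def rone (n : ℕ) : Kernel (E × E) E :=
  (kfst P n + ksnd P n).withDensity (fun z w => df P n z w - dg P n z w)

/-- remainder of the second marginal -/
noncomputable def rtwo (n : ℕ) : Kernel (E × E) E :=
  (kfst P n + ksnd P n).withDensity (fun z w => dg P n z w - df P n z w)

/-- mass of the common part -/
noncomputable def mm (n : ℕ) (z : E × E) : ℝ≥0∞ := lam P n z Set.univ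

lemma measurable_mm (n : ℕ) : Measurable (mm P n) :=
  (lam P n).measurable_coe MeasurableSet.univ

lemma measurable_min_df_dg (n : ℕ) :
    Measurable (Function.uncurry (fun z w => df P n z w ⊓ dg P n z w)) := by
  have h1 := measurable_df P n
  have h2 := measurable_dg P n
  exact h1.inf h2

lemma measurable_sub_df_dg (n : ℕ) :
    Measurable (Function.uncurry (fun z w => df P n z w - dg P n z w)) := by
  have h1 := measurable_df P n
  have h2 := measurable_dg P n
  exact h1.sub h2

lemma measurable_sub_dg_df (n : ℕ) :
    Measurable (Function.uncurry (fun z w => dg P n z w - df P n z w)) := by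
  have h1 := measurable_df P n
  have h2 := measurable_dg P n
  exact h2.sub h1

lemma measurable_df_right (n : ℕ) (z : E × E) : Measurable (df P n z) :=
  Kernel.measurable_rnDeriv_right _ _ _

lemma measurable_dg_right (n : ℕ) (z : E × E) : Measurable (dg P n z) :=
  Kernel.measurable_rnDeriv_right _ _ _

lemma lam_apply (n : ℕ) (z : E × E) :
    lam P n z = ((kfst P n + ksnd P n) z).withDensity (fun w => df P n z w ⊓ dg P n z w) :=
  Kernel.withDensity_apply _ (measurable_min_df_dg P n) z

lemma rone_apply (n : ℕ) (z : E × E) :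
    rone P n z = ((kfst P n + ksnd P n) z).withDensity (fun w => df P n z w - dg P n z w) :=
  Kernel.withDensity_apply _ (measurable_sub_df_dg P n) z

lemma rtwo_apply (n : ℕ) (z : E × E) :
    rtwo P n z = ((kfst P n + ksnd P n) z).withDensity (fun w => dg P n z w - df P n z w) :=
  Kernel.withDensity_apply _ (measurable_sub_dg_df P n) z

/-- decomposition of the first marginal -/
lemma kfst_eq_lam_add_rone (n : ℕ) (z : E × E) :
    kfst P n z = lam P n z + rone P n z := by
  have hminz : Measurable (fun w => df P n z w ⊓ dg P n z w) :=
    (measurable_df_right P n z).inf (measurable_dg_right P n z)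
  rw [lam_apply, rone_apply, ← withDensity_add_left hminz]
  have hfun : ((fun w => df P n z w ⊓ dg P n z w) + fun w => df P n z w - dg P n z w)
      = df P n z := by
    funext w
    simp only [Pi.add_apply]
    rcases le_total (df P n z w) (dg P n z w) with h | h
    · simp [inf_eq_left.2 h, tsub_eq_zero_of_le h]
    · simp only [inf_eq_right.2 h]
      exact add_tsub_cancel_of_le h
  rw [hfun]
  have hac : kfst P n z ≪ (kfst P n + ksnd P n) z := by
    refine Measure.absolutelyContinuous_of_le ?_
    rw [Kernel.coe_add, Pi.add_apply]
    exact Measure.le_add_right le_rfl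
  have hae : df P n z =ᵐ[(kfst P n + ksnd P n) z]
      Measure.rnDeriv (kfst P n z) ((kfst P n + ksnd P n) z) :=
    Kernel.rnDeriv_eq_rnDeriv_measure
  rw [withDensity_congr_ae hae, Measure.withDensity_rnDeriv_eq _ _ hac]

/-- decomposition of the second marginal -/
lemma ksnd_eq_lam_add_rtwo (n : ℕ) (z : E × E) :
    ksnd P n z = lam P n z + rtwo P n z := by
  have hminz : Measurable (fun w => df P n z w ⊓ dg P n z w) :=
    (measurable_df_right P n z).inf (measurable_dg_right P n z)
  rw [lam_apply, rtwo_apply, ← withDensity_add_left hminz]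
  have hfun : ((fun w => df P n z w ⊓ dg P n z w) + fun w => dg P n z w - df P n z w)
      = dg P n z := by
    funext w
    simp only [Pi.add_apply]
    rcases le_total (dg P n z w) (df P n z w) with h | h
    · simp [inf_eq_right.2 h, tsub_eq_zero_of_le h]
    · simp only [inf_eq_left.2 h]
      exact add_tsub_cancel_of_le h
  rw [hfun]
  have hac : ksnd P n z ≪ (kfst P n + ksnd P n) z := by
    refine Measure.absolutelyContinuous_of_le ?_
    rw [Kernel.coe_add, Pi.add_apply]
    exact Measure.le_add_left le_rfl
  have hae : dg P n z =ᵐ[(kfst P n + ksnd P n) z]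
      Measure.rnDeriv (ksnd P n z) ((kfst P n + ksnd P n) z) :=
    Kernel.rnDeriv_eq_rnDeriv_measure
  rw [withDensity_congr_ae hae, Measure.withDensity_rnDeriv_eq _ _ hac]

lemma lam_le_kfst (n : ℕ) (z : E × E) : lam P n z ≤ kfst P n z := by
  rw [kfst_eq_lam_add_rone]; exact Measure.le_add_right le_rfl

lemma lam_le_ksnd (n : ℕ) (z : E × E) : lam P n z ≤ ksnd P n z := by
  rw [ksnd_eq_lam_add_rtwo]; exact Measure.le_add_right le_rfl

lemma mm_le_one (n : ℕ) (z : E × E) : mm P n z ≤ 1 := by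
  have := lam_le_kfst P n z Set.univ
  simpa [mm] using this

lemma mm_ne_top (n : ℕ) (z : E × E) : mm P n z ≠ ∞ :=
  ((mm_le_one P n z).trans_lt one_lt_top).ne

lemma rone_univ (n : ℕ) (z : E × E) : rone P n z Set.univ = 1 - mm P n z := by
  have h := congrArg (fun m : Measure E => m Set.univ) (kfst_eq_lam_add_rone P n z)
  simp only [Measure.coe_add, Pi.add_apply, measure_univ] at h
  exact ENNReal.eq_sub_of_add_eq (mm_ne_top P n z) (by rw [mm, add_comm, ← h])

lemma rtwo_univ (n : ℕ) (z : E × E) : rtwo P n z Set.univ = 1 - mm P n z := by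
  have h := congrArg (fun m : Measure E => m Set.univ) (ksnd_eq_lam_add_rtwo P n z)
  simp only [Measure.coe_add, Pi.add_apply, measure_univ] at h
  exact ENNReal.eq_sub_of_add_eq (mm_ne_top P n z) (by rw [mm, add_comm, ← h])

/-- the separating set: where the first density dominates -/
def Aset (n : ℕ) (z : E × E) : Set E := {w | dg P n z w < df P n z w}

lemma measurable_Aset (n : ℕ) (z : E × E) : MeasurableSet (Aset P n z) :=
  measurableSet_lt (Kernel.measurable_rnDeriv_right _ _ _) (Kernel.measurable_rnDeriv_right _ _ _)

lemma rtwo_Aset (n : ℕ) (z : E × E) : rtwo P n z (Aset P n z) = 0 := by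
  rw [rtwo_apply, withDensity_apply _ (measurable_Aset P n z)]
  rw [setLIntegral_congr_fun (measurable_Aset P n z)
    (fun w (hw : dg P n z w < df P n z w) => tsub_eq_zero_of_le hw.le)]
  simp

lemma rone_compl_Aset (n : ℕ) (z : E × E) : rone P n z (Aset P n z)ᶜ = 0 := by
  rw [rone_apply, withDensity_apply _ (measurable_Aset P n z).compl]
  rw [setLIntegral_congr_fun (measurable_Aset P n z).compl
    (fun w (hw : ¬ dg P n z w < df P n z w) =>
      tsub_eq_zero_of_le (not_lt.1 hw))]
  simp

/-- maximality of the common part: any measure below `c•P_n(x,·)` and `c•P_n(y,·)` has mass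
at most `c * mm`. -/
lemma mass_le (n : ℕ) (z : E × E) (ρ : Measure E) (c : ℝ≥0∞)
    (h1 : ρ ≤ c • kfst P n z) (h2 : ρ ≤ c • ksnd P n z) :
    ρ Set.univ ≤ c * mm P n z := by
  have hA := measurable_Aset P n z
  have e1 : ρ (Aset P n z) ≤ c * lam P n z (Aset P n z) := by
    have := h2 (Aset P n z)
    rw [Measure.smul_apply, smul_eq_mul, ksnd_eq_lam_add_rtwo] at this
    simpa [rtwo_Aset P n z] using this
  have e2 : ρ (Aset P n z)ᶜ ≤ c * lam P n z (Aset P n z)ᶜ := by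
    have := h1 (Aset P n z)ᶜ
    rw [Measure.smul_apply, smul_eq_mul, kfst_eq_lam_add_rone] at this
    simpa [rone_compl_Aset P n z] using this
  calc ρ Set.univ = ρ (Aset P n z) + ρ (Aset P n z)ᶜ :=
        (measure_add_measure_compl hA).symm
    _ ≤ c * lam P n z (Aset P n z) + c * lam P n z (Aset P n z)ᶜ := add_le_add e1 e2
    _ = c * (lam P n z (Aset P n z) + lam P n z (Aset P n z)ᶜ) := by rw [mul_add]
    _ = c * mm P n z := by rw [measure_add_measure_compl hA]; rfl

lemma singular_of_mm_eq_zero (n : ℕ) (z : E × E) (h : mm P n z = 0) :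
    nStep P n z.1 ⟂ₘ nStep P n z.2 := by
  refine ⟨(Aset P n z)ᶜ, (measurable_Aset P n z).compl, ?_, ?_⟩
  · rw [← kfst_apply P n z, kfst_eq_lam_add_rone]
    have h1 : lam P n z (Aset P n z)ᶜ = 0 :=
      le_antisymm (le_trans (measure_mono (subset_univ _)) (le_of_eq h)) zero_le
    simp [h1, rone_compl_Aset P n z]
  · rw [compl_compl, ← ksnd_apply P n z, ksnd_eq_lam_add_rtwo]
    have h1 : lam P n z (Aset P n z) = 0 :=
      le_antisymm (le_trans (measure_mono (subset_univ _)) (le_of_eq h)) zero_le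
    simp [h1, rtwo_Aset P n z]

lemma lam_le_kfst_apply (n : ℕ) (z : E × E) (s : Set E) : lam P n z s ≤ kfst P n z s :=
  lam_le_kfst P n z s

/-- `mm` is nondecreasing in `n`. -/
lemma bind_nStep_univ (k : ℕ) (Θ : Measure (E × E))
    (κ : Kernel (E × E) E) : (Θ.bind κ) Set.univ = ∫⁻ z, κ z Set.univ ∂Θ :=
  Measure.bind_apply MeasurableSet.univ κ.measurable.aemeasurable

lemma bind_nStepE_univ (k : ℕ) (Θ : Measure E) : (Θ.bind (nStep P k)) Set.univ = Θ Set.univ := by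
  rw [Measure.bind_apply MeasurableSet.univ (nStep P k).measurable.aemeasurable]
  simp

lemma bind_mono_meas {Θ₁ Θ₂ : Measure E} (h : Θ₁ ≤ Θ₂) (κ : Kernel E E) :
    Θ₁.bind κ ≤ Θ₂.bind κ := by
  refine Measure.le_iff.2 fun s hs => ?_
  rw [Measure.bind_apply hs κ.measurable.aemeasurable, Measure.bind_apply hs κ.measurable.aemeasurable]
  exact lintegral_mono' h le_rfl

/-- key product bound, first marginal -/
lemma bind_lam_prod_le_fst (k : ℕ) (ρ1 ρ2 : Measure E) [IsFiniteMeasure ρ1] [IsFiniteMeasure ρ2] :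
    (ρ1.prod ρ2).bind (lam P k) ≤ (ρ2 Set.univ) • (ρ1.bind (nStep P k)) := by
  refine Measure.le_iff.2 fun s hs => ?_
  rw [Measure.bind_apply hs (lam P k).measurable.aemeasurable, Measure.smul_apply, smul_eq_mul,
    Measure.bind_apply hs (nStep P k).measurable.aemeasurable]
  calc ∫⁻ w, lam P k w s ∂(ρ1.prod ρ2)
      ≤ ∫⁻ w, nStep P k w.1 s ∂(ρ1.prod ρ2) := by
        refine lintegral_mono fun w => ?_
        have := lam_le_kfst P k w s
        rwa [kfst_apply] at this
    _ = ∫⁻ w1, ∫⁻ _, nStep P k w1 s ∂ρ2 ∂ρ1 := by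
        refine lintegral_prod _ ?_
        exact (((nStep P k).measurable_coe hs).comp measurable_fst).aemeasurable
    _ = ρ2 Set.univ * ∫⁻ w1, nStep P k w1 s ∂ρ1 := by
        simp only [lintegral_const]
        rw [lintegral_mul_const _ ((nStep P k).measurable_coe hs), mul_comm]

/-- key product bound, second marginal -/
lemma bind_lam_prod_le_snd (k : ℕ) (ρ1 ρ2 : Measure E) [IsFiniteMeasure ρ1] [IsFiniteMeasure ρ2] :
    (ρ1.prod ρ2).bind (lam P k) ≤ (ρ1 Set.univ) • (ρ2.bind (nStep P k)) := by
  refine Measure.le_iff.2 fun s hs => ?_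
  rw [Measure.bind_apply hs (lam P k).measurable.aemeasurable, Measure.smul_apply, smul_eq_mul,
    Measure.bind_apply hs (nStep P k).measurable.aemeasurable]
  calc ∫⁻ w, lam P k w s ∂(ρ1.prod ρ2)
      ≤ ∫⁻ w, nStep P k w.2 s ∂(ρ1.prod ρ2) := by
        refine lintegral_mono fun w => ?_
        have := lam_le_ksnd P k w s
        rwa [ksnd_apply] at this
    _ = ∫⁻ w1, ∫⁻ w2, nStep P k w2 s ∂ρ2 ∂ρ1 := by
        refine lintegral_prod _ ?_
        exact (((nStep P k).measurable_coe hs).comp measurable_snd).aemeasurable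
    _ = ρ1 Set.univ * ∫⁻ w2, nStep P k w2 s ∂ρ2 := by
        rw [lintegral_const]
        rw [mul_comm]

lemma bind_lam_prod_univ (k : ℕ) (Θ : Measure (E × E)) :
    (Θ.bind (lam P k)) Set.univ = ∫⁻ w, mm P k w ∂Θ :=
  Measure.bind_apply MeasurableSet.univ (lam P k).measurable.aemeasurable

/-- monotonicity of the coupled mass -/
lemma mm_mono_add (n k : ℕ) (z : E × E) : mm P n z ≤ mm P (n + k) z := by
  have hρ1 : (lam P n z).bind (nStep P k) ≤ kfst P (n + k) z := by
    rw [kfst_apply, nStep_add_apply, ← kfst_apply P n z]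
    exact bind_mono_meas (lam_le_kfst P n z) (nStep P k)
  have hρ2 : (lam P n z).bind (nStep P k) ≤ ksnd P (n + k) z := by
    rw [ksnd_apply, nStep_add_apply, ← ksnd_apply P n z]
    exact bind_mono_meas (lam_le_ksnd P n z) (nStep P k)
  have := mass_le P (n + k) z ((lam P n z).bind (nStep P k)) 1
    (by simpa using hρ1) (by simpa using hρ2)
  rwa [one_mul, bind_nStepE_univ P k] at this

lemma mm_mono (z : E × E) : Monotone (fun n => mm P n z) := by
  intro a b hab
  have := mm_mono_add P a (b - a) z
  rwa [Nat.add_sub_cancel' hab] at this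

instance lam_isFinite (n : ℕ) (z : E × E) : IsFiniteMeasure (lam P n z) :=
  ⟨by rw [← mm]; exact (mm_ne_top P n z).lt_top⟩

lemma rone_le_kfst (n : ℕ) (z : E × E) : rone P n z ≤ kfst P n z := by
  rw [kfst_eq_lam_add_rone]; exact Measure.le_add_left le_rfl

lemma rtwo_le_ksnd (n : ℕ) (z : E × E) : rtwo P n z ≤ ksnd P n z := by
  rw [ksnd_eq_lam_add_rtwo]; exact Measure.le_add_left le_rfl

instance rone_isFinite (n : ℕ) (z : E × E) : IsFiniteMeasure (rone P n z) :=
  ⟨lt_of_le_of_lt (rone_le_kfst P n z Set.univ) (by simp [lt_top_iff_ne_top])⟩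

instance rtwo_isFinite (n : ℕ) (z : E × E) : IsFiniteMeasure (rtwo P n z) :=
  ⟨lt_of_le_of_lt (rtwo_le_ksnd P n z Set.univ) (by simp [lt_top_iff_ne_top])⟩

/-- the key superadditivity inequality (independent coupling) -/
lemma mm_superadd_indep (n k : ℕ) (z : E × E) :
    ∫⁻ w, mm P k w ∂((kfst P n z).prod (ksnd P n z)) ≤ mm P (n + k) z := by
  set ρ := ((kfst P n z).prod (ksnd P n z)).bind (lam P k) with hρ
  have h1 : ρ ≤ kfst P (n + k) z := by
    have := bind_lam_prod_le_fst P k (kfst P n z) (ksnd P n z)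
    rw [measure_univ, one_smul] at this
    refine this.trans (le_of_eq ?_)
    rw [kfst_apply P (n+k) z, nStep_add_apply]
    rfl
  have h2 : ρ ≤ ksnd P (n + k) z := by
    have := bind_lam_prod_le_snd P k (kfst P n z) (ksnd P n z)
    rw [measure_univ, one_smul] at this
    refine this.trans (le_of_eq ?_)
    rw [ksnd_apply P (n+k) z, nStep_add_apply]
    rfl
  have := mass_le P (n + k) z ρ 1 (by simpa using h1) (by simpa using h2)
  rwa [one_mul, hρ, bind_lam_prod_univ] at this

/-- the key superadditivity inequality (glued coupling), multiplied by `1 - mm` -/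
lemma mm_superadd_glue (n k : ℕ) (z : E × E) :
    (1 - mm P n z) * mm P n z + ∫⁻ w, mm P k w ∂((rone P n z).prod (rtwo P n z))
      ≤ (1 - mm P n z) * mm P (n + k) z := by
  set a := 1 - mm P n z with ha
  set ρ := a • ((lam P n z).bind (nStep P k))
    + ((rone P n z).prod (rtwo P n z)).bind (lam P k) with hρ
  have key1 : ρ ≤ a • kfst P (n + k) z := by
    have hd : kfst P (n + k) z = (lam P n z).bind (nStep P k) + (rone P n z).bind (nStep P k) := by
      rw [kfst_apply, nStep_add_apply, ← kfst_apply P n z, kfst_eq_lam_add_rone]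
      refine Measure.ext fun s hs => ?_
      rw [Measure.bind_apply hs (nStep P k).measurable.aemeasurable, Measure.coe_add, Pi.add_apply,
        Measure.bind_apply hs (nStep P k).measurable.aemeasurable,
        Measure.bind_apply hs (nStep P k).measurable.aemeasurable, ← lintegral_add_measure]
    rw [hd, smul_add]
    refine add_le_add le_rfl ?_
    have := bind_lam_prod_le_fst P k (rone P n z) (rtwo P n z)
    rwa [rtwo_univ, ← ha] at this
  have key2 : ρ ≤ a • ksnd P (n + k) z := by
    have hd : ksnd P (n + k) z = (lam P n z).bind (nStep P k) + (rtwo P n z).bind (nStep P k) := by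
      rw [ksnd_apply, nStep_add_apply, ← ksnd_apply P n z, ksnd_eq_lam_add_rtwo]
      refine Measure.ext fun s hs => ?_
      rw [Measure.bind_apply hs (nStep P k).measurable.aemeasurable, Measure.coe_add, Pi.add_apply,
        Measure.bind_apply hs (nStep P k).measurable.aemeasurable,
        Measure.bind_apply hs (nStep P k).measurable.aemeasurable, ← lintegral_add_measure]
    rw [hd, smul_add]
    refine add_le_add le_rfl ?_
    have := bind_lam_prod_le_snd P k (rone P n z) (rtwo P n z)
    rwa [rone_univ, ← ha] at this
  have := mass_le P (n + k) z ρ a key1 key2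
  have hmass : ρ Set.univ = a * mm P n z
      + ∫⁻ w, mm P k w ∂((rone P n z).prod (rtwo P n z)) := by
    rw [hρ, Measure.coe_add, Pi.add_apply, Measure.smul_apply, smul_eq_mul,
      bind_nStepE_univ P k, ← mm, bind_lam_prod_univ]
  rw [hmass] at this
  exact this

/-- limit coupled mass -/
noncomputable def hh : E × E → ℝ≥0∞ := fun z => ⨆ n, mm P n z

lemma measurable_hh : Measurable (hh P) := Measurable.iSup (fun n => measurable_mm P n)

lemma mm_le_hh (n : ℕ) (z : E × E) : mm P n z ≤ hh P z := le_iSup (fun n => mm P n z) n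

lemma hh_le_one (z : E × E) : hh P z ≤ 1 := iSup_le fun n => mm_le_one P n z

lemma hh_ne_top (z : E × E) : hh P z ≠ ∞ := ((hh_le_one P z).trans_lt one_lt_top).ne

lemma mm_monotone : Monotone (fun n => mm P n) := by
  intro a b hab z
  exact mm_mono P z hab

/-- product kernel of the two marginals -/
noncomputable def Qk (n : ℕ) : Kernel (E × E) (E × E) := (kfst P n) ×ₖ (ksnd P n)

instance (n : ℕ) : IsMarkovKernel (Qk P n) := by rw [Qk]; infer_instance

lemma Qk_apply (n : ℕ) (z : E × E) : Qk P n z = (kfst P n z).prod (ksnd P n z) :=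
  Kernel.prod_apply _ _ _

/-- `hh` is superharmonic, pointwise -/
lemma hh_superharm (n : ℕ) (z : E × E) :
    ∫⁻ w, hh P w ∂(Qk P n z) ≤ hh P z := by
  rw [Qk_apply]
  simp only [hh]
  rw [lintegral_iSup (fun k => measurable_mm P k) (mm_monotone P)]
  exact iSup_le fun k => (mm_superadd_indep P n k z).trans (le_iSup (fun j => mm P j z) (n + k))

/-- glued coupling inequality with the limit mass -/
lemma hh_glue (n : ℕ) (z : E × E) :
    (1 - mm P n z) * mm P n z + ∫⁻ w, hh P w ∂((rone P n z).prod (rtwo P n z))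
      ≤ (1 - mm P n z) * hh P z := by
  simp only [hh]
  rw [lintegral_iSup (fun k => measurable_mm P k) (mm_monotone P), ENNReal.add_iSup]
  refine iSup_le fun k => (mm_superadd_glue P n k z).trans ?_
  exact mul_le_mul_right (mm_le_hh P (n + k) z) _

variable (μ : Measure E) [IsProbabilityMeasure μ]

lemma mu_bind_nStep (hinv : μ.bind ⇑P = μ) : ∀ n, μ.bind ⇑(nStep P n) = μ := by
  intro n
  induction n with
  | zero =>
      have : ⇑(nStep P 0) = Measure.dirac := by
        funext x
        simp [nStep, Kernel.id, Kernel.deterministic_apply]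
      rw [this, Measure.bind_dirac]
  | succ n ih =>
      have : ⇑(nStep P (n + 1)) = fun x => (P x).bind ⇑(nStep P n) := by
        funext x
        rw [nStep, Kernel.comp_apply]
      rw [this, ← Measure.bind_bind P.measurable.aemeasurable (nStep P n).measurable.aemeasurable, hinv, ih]

lemma mu_nStep_apply (hinv : μ.bind ⇑P = μ) (n : ℕ) {s : Set E} (hs : MeasurableSet s) :
    ∫⁻ x, nStep P n x s ∂μ = μ s := by
  conv_rhs => rw [← mu_bind_nStep P μ hinv n]
  rw [Measure.bind_apply hs (nStep P n).measurable.aemeasurable]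

/-- invariance of the product measure under the product kernel -/
lemma nu_bind_Qk (hinv : μ.bind ⇑P = μ) (n : ℕ) :
    (μ.prod μ).bind ⇑(Qk P n) = μ.prod μ := by
  refine (Measure.prod_eq fun s t hs ht => ?_).symm
  rw [Measure.bind_apply (hs.prod ht) (Qk P n).measurable.aemeasurable]
  have : ∀ z : E × E, Qk P n z (s ×ˢ t) = nStep P n z.1 s * nStep P n z.2 t := by
    intro z
    rw [Qk_apply, Measure.prod_prod, kfst_apply, ksnd_apply]
  simp_rw [this]
  rw [lintegral_prod_mul (((nStep P n).measurable_coe hs).aemeasurable)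
    (((nStep P n).measurable_coe ht).aemeasurable),
    mu_nStep_apply P μ hinv n hs, mu_nStep_apply P μ hinv n ht]

lemma single_set_bound (n : ℕ) (x y : E) {A : Set E} (hA : MeasurableSet A) :
    nStep P n x A - nStep P n y A ≤ 1 - mm P n (x, y) := by
  rw [tsub_le_iff_right]
  have h1 : nStep P n x A = lam P n (x, y) A + rone P n (x, y) A := by
    have := congrArg (fun m : Measure E => m A) (kfst_eq_lam_add_rone P n (x, y))
    simpa [kfst_apply] using this
  have h2 : lam P n (x, y) A ≤ nStep P n y A := by
    have := lam_le_ksnd P n (x, y) A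
    rwa [ksnd_apply] at this
  calc nStep P n x A = lam P n (x, y) A + rone P n (x, y) A := h1
    _ ≤ nStep P n y A + rone P n (x, y) Set.univ :=
        add_le_add h2 (measure_mono (Set.subset_univ _))
    _ = nStep P n y A + (1 - mm P n (x, y)) := by rw [rone_univ]
    _ = 1 - mm P n (x, y) + nStep P n y A := by rw [add_comm]

lemma single_set_bound' (n : ℕ) (x y : E) {A : Set E} (hA : MeasurableSet A) :
    nStep P n y A - nStep P n x A ≤ 1 - mm P n (x, y) := by
  rw [tsub_le_iff_right]
  have h1 : nStep P n y A = lam P n (x, y) A + rtwo P n (x, y) A := by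
    have := congrArg (fun m : Measure E => m A) (ksnd_eq_lam_add_rtwo P n (x, y))
    simpa [ksnd_apply] using this
  have h2 : lam P n (x, y) A ≤ nStep P n x A := by
    have := lam_le_kfst P n (x, y) A
    rwa [kfst_apply] at this
  calc nStep P n y A = lam P n (x, y) A + rtwo P n (x, y) A := h1
    _ ≤ nStep P n x A + rtwo P n (x, y) Set.univ :=
        add_le_add h2 (measure_mono (Set.subset_univ _))
    _ = nStep P n x A + (1 - mm P n (x, y)) := by rw [rtwo_univ]
    _ = 1 - mm P n (x, y) + nStep P n x A := by rw [add_comm]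

lemma tvDist_le_lintegral (hinv : μ.bind ⇑P = μ) (n : ℕ) (x : E) :
    tvDist (nStep P n x) μ ≤ 2 * ∫⁻ y, (1 - mm P n (x, y)) ∂μ := by
  rw [tvDist]
  refine mul_le_mul_right (iSup₂_le fun A hA => ?_) 2
  have hmeasA : Measurable fun y => nStep P n y A := (nStep P n).measurable_coe hA
  have hmuA : μ A = ∫⁻ y, nStep P n y A ∂μ := (mu_nStep_apply P μ hinv n hA).symm
  refine max_le ?_ ?_
  · rw [hmuA, tsub_le_iff_right]
    calc nStep P n x A = ∫⁻ _, nStep P n x A ∂μ := by simp [lintegral_const]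
      _ ≤ ∫⁻ y, ((nStep P n x A - nStep P n y A) + nStep P n y A) ∂μ :=
          lintegral_mono fun y => le_tsub_add
      _ = ∫⁻ y, (nStep P n x A - nStep P n y A) ∂μ + ∫⁻ y, nStep P n y A ∂μ :=
          lintegral_add_right _ hmeasA
      _ ≤ ∫⁻ y, (1 - mm P n (x, y)) ∂μ + ∫⁻ y, nStep P n y A ∂μ := by
          refine add_le_add (lintegral_mono fun y => single_set_bound P n x y hA) le_rfl
  · rw [hmuA, tsub_le_iff_right]
    calc ∫⁻ y, nStep P n y A ∂μ
        ≤ ∫⁻ y, ((nStep P n y A - nStep P n x A) + nStep P n x A) ∂μ :=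
          lintegral_mono fun y => le_tsub_add
      _ = ∫⁻ y, (nStep P n y A - nStep P n x A) ∂μ + ∫⁻ _, nStep P n x A ∂μ := by
          rw [lintegral_add_right _ measurable_const]
      _ ≤ ∫⁻ y, (1 - mm P n (x, y)) ∂μ + nStep P n x A := by
          refine add_le_add (lintegral_mono fun y => single_set_bound' P n x y hA) ?_
          simp [lintegral_const]

lemma lintegral_Qk_invariant (hinv : μ.bind ⇑P = μ) (n : ℕ) {F : E × E → ℝ≥0∞}
    (hF : Measurable F) :
    ∫⁻ z, ∫⁻ w, F w ∂(Qk P n z) ∂(μ.prod μ) = ∫⁻ z, F z ∂(μ.prod μ) := by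
  conv_rhs => rw [← nu_bind_Qk P μ hinv n]
  rw [Measure.lintegral_bind (Qk P n).measurable.aemeasurable hF.aemeasurable]

end Kernels

section Helpers

lemma ae_eq_of_forall_le_of_lintegral_le {α : Type*} [MeasurableSpace α] {θ : Measure α}
    {f g : α → ℝ≥0∞} (hf : Measurable f) (hg : Measurable g) (hfg : ∀ x, g x ≤ f x)
    (hfin : ∫⁻ x, f x ∂θ ≠ ∞) (hle : ∫⁻ x, f x ∂θ ≤ ∫⁻ x, g x ∂θ) : f =ᵐ[θ] g := by
  have hgfin : ∫⁻ x, g x ∂θ ≠ ∞ := by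
    refine ne_top_of_le_ne_top hfin (lintegral_mono fun x => hfg x)
  have hsub : ∫⁻ x, f x - g x ∂θ = ∫⁻ x, f x ∂θ - ∫⁻ x, g x ∂θ :=
    lintegral_sub hg hgfin (ae_of_all _ hfg)
  have hzero : ∫⁻ x, f x - g x ∂θ = 0 := by
    rw [hsub]
    exact tsub_eq_zero_of_le hle
  have := (lintegral_eq_zero_iff (hf.sub hg)).1 hzero
  filter_upwards [this] with x hx
  exact le_antisymm (tsub_eq_zero_iff_le.1 hx) (hfg x)

/-- Cauchy-Schwarz / Jensen for `lintegral` against a probability measure -/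
lemma lintegral_sq_le {α : Type*} [MeasurableSpace α] {θ : Measure α} [IsProbabilityMeasure θ]
    {f : α → ℝ≥0∞} (hf : Measurable f) :
    (∫⁻ x, f x ∂θ) * (∫⁻ x, f x ∂θ) ≤ ∫⁻ x, f x * f x ∂θ := by
  have key : ∀ a b : ℝ≥0∞, 2 * (a * b) ≤ a * a + b * b := by
    intro a b
    rcases le_total a b with h | h
    · obtain ⟨c, rfl⟩ := exists_add_of_le h
      calc 2 * (a * (a + c)) ≤ 2 * (a * (a + c)) + c * c := le_add_right le_rfl
        _ = a * a + (a + c) * (a + c) := by ring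
    · obtain ⟨c, rfl⟩ := exists_add_of_le h
      calc 2 * ((b + c) * b) ≤ 2 * ((b + c) * b) + c * c := le_add_right le_rfl
        _ = (b + c) * (b + c) + b * b := by ring
  have h2 : 2 * ((∫⁻ x, f x ∂θ) * (∫⁻ x, f x ∂θ)) ≤ 2 * ∫⁻ x, f x * f x ∂θ := by
    have hdouble : (∫⁻ x, f x ∂θ) * (∫⁻ x, f x ∂θ)
        = ∫⁻ x, ∫⁻ y, f x * f y ∂θ ∂θ := (lintegral_lintegral_mul hf.aemeasurable
          hf.aemeasurable).symm
    rw [hdouble]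
    calc 2 * ∫⁻ x, ∫⁻ y, f x * f y ∂θ ∂θ = ∫⁻ x, ∫⁻ y, 2 * (f x * f y) ∂θ ∂θ := by
          rw [← lintegral_const_mul' _ _ (ENNReal.ofNat_ne_top)]
          congr 1
          funext x
          rw [← lintegral_const_mul' _ _ (ENNReal.ofNat_ne_top)]
      _ ≤ ∫⁻ x, ∫⁻ y, f x * f x + f y * f y ∂θ ∂θ := by
          refine lintegral_mono fun x => lintegral_mono fun y => key _ _
      _ = ∫⁻ x, f x * f x + ∫⁻ y, f y * f y ∂θ ∂θ := by
          congr 1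
          funext x
          rw [lintegral_add_left (by fun_prop), lintegral_const]
          simp
      _ = 2 * ∫⁻ x, f x * f x ∂θ := by
          rw [lintegral_add_right _ (by fun_prop), lintegral_const]
          simp [two_mul]
  exact (ENNReal.mul_le_mul_iff_right (by norm_num) (by norm_num)).1 h2

/-- zero variance implies a.e. constant -/
lemma ae_const_of_moments {α : Type*} [MeasurableSpace α] {θ : Measure α}
    [IsProbabilityMeasure θ] {f : α → ℝ≥0∞} (hf : Measurable f) (hb : ∀ x, f x ≤ 1)
    {c : ℝ≥0∞} (hc : c ≤ 1) (h1 : ∫⁻ x, f x ∂θ = c) (h2 : ∫⁻ x, f x * f x ∂θ = c * c) :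
    ∀ᵐ x ∂θ, f x = c := by
  set v : α → ℝ := fun x => (f x).toReal with hv
  set c' : ℝ := c.toReal with hc'
  have hfin : ∀ x, f x ≠ ∞ := fun x => ((hb x).trans_lt one_lt_top).ne
  have hcfin : c ≠ ∞ := (hc.trans_lt one_lt_top).ne
  have hvmeas : Measurable v := hf.ennreal_toReal
  have hvb : ∀ x, ‖v x‖ ≤ 1 := by
    intro x
    rw [Real.norm_eq_abs, abs_of_nonneg ENNReal.toReal_nonneg]
    exact ENNReal.toReal_le_of_le_ofReal zero_le_one (by simpa using hb x)
  have hint : Integrable v θ :=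
    Integrable.mono' (integrable_const 1) hvmeas.aestronglyMeasurable (ae_of_all _ hvb)
  have hint2 : Integrable (fun x => v x * v x) θ := by
    refine Integrable.mono' (integrable_const 1) (hvmeas.mul hvmeas).aestronglyMeasurable
      (ae_of_all _ fun x => ?_)
    rw [Real.norm_eq_abs, abs_of_nonneg (mul_nonneg ENNReal.toReal_nonneg
      ENNReal.toReal_nonneg)]
    calc v x * v x ≤ 1 * 1 := by
          refine mul_le_mul ?_ ?_ ENNReal.toReal_nonneg zero_le_one <;>
            exact (le_abs_self _).trans (by rw [← Real.norm_eq_abs]; exact hvb x)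
      _ = 1 := by ring
  have hIv : ∫ x, v x ∂θ = c' := by
    rw [hv, hc', ← h1]
    exact integral_toReal hf.aemeasurable (ae_of_all _ fun x => (hfin x).lt_top)
  have hIv2 : ∫ x, v x * v x ∂θ = c' * c' := by
    have heq : (fun x => v x * v x) = fun x => (f x * f x).toReal := by
      funext x; rw [ENNReal.toReal_mul]
    rw [heq, integral_toReal (f := fun x => f x * f x) (hf.mul hf).aemeasurable
      (ae_of_all _ fun x => ENNReal.mul_lt_top (hfin x).lt_top (hfin x).lt_top), h2,
      ENNReal.toReal_mul]
  set w : α → ℝ := fun x => v x * v x - 2 * c' * v x + c' * c' with hw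
  have hInt_w : Integrable w θ := ((hint2.sub (hint.const_mul _)).add (integrable_const _) : _)
  have hint4 : Integrable (fun x => 2 * c' * v x) θ := hint.const_mul _
  have hint3 : Integrable (fun x => v x * v x - 2 * c' * v x) θ := hint2.sub hint4
  have hIw : ∫ x, w x ∂θ = 0 := by
    show ∫ x, v x * v x - 2 * c' * v x + c' * c' ∂θ = 0
    rw [integral_add hint3 (integrable_const _),
      integral_sub hint2 hint4, integral_const_mul, hIv, hIv2, integral_const]
    simp only [measure_univ, ENNReal.toReal_one, one_smul, smul_eq_mul, probReal_univ]
    ring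
  have hwnn : 0 ≤ w := by
    intro x
    have : w x = (v x - c') ^ 2 := by rw [hw]; ring
    rw [this]
    exact sq_nonneg _
  have := (integral_eq_zero_iff_of_nonneg hwnn hInt_w).1 hIw
  filter_upwards [this] with x hx
  have hvx : v x = c' := by
    have hsq : (v x - c') ^ 2 = 0 := by
      have : w x = (v x - c') ^ 2 := by rw [hw]; ring
      rw [← this]; exact hx
    have := pow_eq_zero_iff (n := 2) (by norm_num) |>.1 hsq
    linarith [this, sub_eq_zero.1 this]
  exact (ENNReal.toReal_eq_toReal_iff' (hfin x) hcfin).1 hvx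

/-- ENNReal arithmetic endgame -/
lemma ennreal_endgame {m H : ℝ≥0∞} (hm1 : m ≤ 1) (hH1 : H ≤ 1) (hmH : m ≤ H)
    (hineq : (1 - m) * m + H * ((1 - m) * (1 - m)) ≤ (1 - m) * H) : m = 0 ∨ H = 1 := by
  by_cases hm0 : m = 0
  · exact Or.inl hm0
  right
  by_cases ha0 : (1 : ℝ≥0∞) - m = 0
  · exact le_antisymm hH1 ((tsub_eq_zero_iff_le.1 ha0).trans hmH)
  have ha_top : (1 : ℝ≥0∞) - m ≠ ∞ := (tsub_le_self.trans_lt one_lt_top).ne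
  have hre : (1 - m) * m + H * ((1 - m) * (1 - m)) = (1 - m) * (m + (1 - m) * H) := by ring
  rw [hre] at hineq
  have h1 : m + (1 - m) * H ≤ H := (ENNReal.mul_le_mul_iff_right ha0 ha_top).1 hineq
  have hsplit : H = m * H + (1 - m) * H := by
    rw [← add_mul, add_tsub_cancel_of_le hm1, one_mul]
  have h1x : m + (1 - m) * H ≤ m * H + (1 - m) * H := h1.trans (le_of_eq hsplit)
  have hfin : (1 - m) * H ≠ ∞ :=
    ((mul_le_mul' tsub_le_self hH1).trans_lt (by simp)).ne
  have h2 : m ≤ m * H := (ENNReal.add_le_add_iff_right hfin).1 h1x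
  have h3 : m * 1 ≤ m * H := by simpa using h2
  have h4 : (1 : ℝ≥0∞) ≤ H :=
    (ENNReal.mul_le_mul_iff_right hm0 ((hm1.trans_lt one_lt_top).ne)).1 h3
  exact le_antisymm hH1 h4

end Helpers

section Core

variable [MeasurableSpace.CountablyGenerated E] (P : Kernel E E) [IsMarkovKernel P]

/-- complementary limit mass -/
noncomputable def uu : E × E → ℝ≥0∞ := fun z => 1 - hh P z

lemma measurable_uu : Measurable (uu P) := measurable_const.sub (measurable_hh P)

lemma uu_le_one (z : E × E) : uu P z ≤ 1 := tsub_le_self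

lemma hh_of_uu (z : E × E) : 1 - uu P z = hh P z :=
  ENNReal.sub_sub_cancel one_ne_top (hh_le_one P z)

lemma lintegral_hh_le_one (n : ℕ) (z : E × E) : ∫⁻ w, hh P w ∂(Qk P n z) ≤ 1 := by
  calc ∫⁻ w, hh P w ∂(Qk P n z) ≤ ∫⁻ _, 1 ∂(Qk P n z) := lintegral_mono (hh_le_one P)
    _ = 1 := by simp

lemma lintegral_uu (n : ℕ) (z : E × E) :
    ∫⁻ w, uu P w ∂(Qk P n z) = 1 - ∫⁻ w, hh P w ∂(Qk P n z) := by
  simp only [uu]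
  have hne : ∫⁻ w, hh P w ∂(Qk P n z) ≠ ∞ := ((lintegral_hh_le_one P n z).trans_lt one_lt_top).ne
  rw [lintegral_sub (measurable_hh P) hne (ae_of_all _ (hh_le_one P))]
  simp

lemma uu_subharm (n : ℕ) (z : E × E) : uu P z ≤ ∫⁻ w, uu P w ∂(Qk P n z) := by
  rw [lintegral_uu]
  exact tsub_le_tsub_left (hh_superharm P n z) 1

variable (μ : Measure E) [IsProbabilityMeasure μ]

lemma meas_lint_uu (n : ℕ) : Measurable fun z => ∫⁻ w, uu P w ∂(Qk P n z) :=
  Measurable.lintegral_kernel_prod_right' ((measurable_uu P).comp measurable_snd)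

lemma meas_lint_uu2 (n : ℕ) : Measurable fun z => ∫⁻ w, uu P w * uu P w ∂(Qk P n z) :=
  Measurable.lintegral_kernel_prod_right'
    (((measurable_uu P).comp measurable_snd).mul ((measurable_uu P).comp measurable_snd))

lemma uu_harm_ae (hinv : μ.bind ⇑P = μ) (n : ℕ) :
    (fun z => ∫⁻ w, uu P w ∂(Qk P n z)) =ᵐ[μ.prod μ] uu P := by
  refine ae_eq_of_forall_le_of_lintegral_le (meas_lint_uu P n) (measurable_uu P)
    (fun z => uu_subharm P n z) ?_ ?_
  · refine ne_top_of_le_ne_top one_ne_top ?_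
    calc ∫⁻ z, ∫⁻ w, uu P w ∂(Qk P n z) ∂(μ.prod μ)
        ≤ ∫⁻ _, 1 ∂(μ.prod μ) := by
          refine lintegral_mono fun z => ?_
          calc ∫⁻ w, uu P w ∂(Qk P n z) ≤ ∫⁻ _, 1 ∂(Qk P n z) :=
                lintegral_mono (uu_le_one P)
            _ = 1 := by simp
      _ = 1 := by simp
  · rw [lintegral_Qk_invariant P μ hinv n (measurable_uu P)]

lemma uu_sq_harm_ae (hinv : μ.bind ⇑P = μ) (n : ℕ) :
    (fun z => ∫⁻ w, uu P w * uu P w ∂(Qk P n z)) =ᵐ[μ.prod μ] fun z => uu P z * uu P z := by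
  refine ae_eq_of_forall_le_of_lintegral_le (meas_lint_uu2 P n)
    ((measurable_uu P).mul (measurable_uu P)) (fun z => ?_) ?_ ?_
  · calc uu P z * uu P z ≤ (∫⁻ w, uu P w ∂(Qk P n z)) * (∫⁻ w, uu P w ∂(Qk P n z)) :=
        mul_le_mul' (uu_subharm P n z) (uu_subharm P n z)
      _ ≤ ∫⁻ w, uu P w * uu P w ∂(Qk P n z) := lintegral_sq_le (measurable_uu P)
  · refine ne_top_of_le_ne_top one_ne_top ?_
    calc ∫⁻ z, ∫⁻ w, uu P w * uu P w ∂(Qk P n z) ∂(μ.prod μ)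
        ≤ ∫⁻ _, 1 ∂(μ.prod μ) := by
          refine lintegral_mono fun z => ?_
          calc ∫⁻ w, uu P w * uu P w ∂(Qk P n z) ≤ ∫⁻ _, 1 ∂(Qk P n z) :=
                lintegral_mono (fun w => mul_le_one' (uu_le_one P w) (uu_le_one P w))
            _ = 1 := by simp
      _ = 1 := by simp
  · rw [lintegral_Qk_invariant P μ hinv n (F := fun z => uu P z * uu P z) ((measurable_uu P).mul (measurable_uu P))]

lemma uu_const_ae (hinv : μ.bind ⇑P = μ) (n : ℕ) :
    ∀ᵐ z ∂(μ.prod μ), (Qk P n z) {w | ¬ uu P w = uu P z} = 0 := by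
  filter_upwards [uu_harm_ae P μ hinv n, uu_sq_harm_ae P μ hinv n] with z h1 h2
  exact ae_iff.1 (ae_const_of_moments (measurable_uu P) (uu_le_one P) (uu_le_one P z) h1 h2)

lemma R_le_Qk (n : ℕ) (z : E × E) : (rone P n z).prod (rtwo P n z) ≤ Qk P n z := by
  rw [Qk_apply]
  refine Measure.le_iff.2 fun s hs => ?_
  rw [Measure.prod_apply hs, Measure.prod_apply hs]
  refine le_trans (lintegral_mono fun w1 => Measure.le_iff'.1 (rtwo_le_ksnd P n z) _) ?_
  exact lintegral_mono' (rone_le_kfst P n z) le_rfl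

/-- The core dichotomy. -/
lemma core_dichotomy (hinv : μ.bind ⇑P = μ) :
    ∀ᵐ z ∂(μ.prod μ), ∀ n, mm P n z = 0 ∨ hh P z = 1 := by
  rw [ae_all_iff]
  intro n
  filter_upwards [uu_const_ae P μ hinv n] with z hz
  set R : Measure (E × E) := (rone P n z).prod (rtwo P n z) with hR
  have hRnull : R {w | ¬ uu P w = uu P z} = 0 :=
    le_antisymm ((Measure.le_iff'.1 (R_le_Qk P n z) _).trans_eq hz) zero_le
  have hconst : ∀ᵐ w ∂ R, uu P w = uu P z := by
    rw [ae_iff]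
    exact hRnull
  have hint : ∫⁻ w, hh P w ∂ R = hh P z * ((1 - mm P n z) * (1 - mm P n z)) := by
    have hcongr : ∀ᵐ w ∂ R, hh P w = hh P z := by
      filter_upwards [hconst] with w hw
      rw [← hh_of_uu P w, hw, hh_of_uu]
    rw [lintegral_congr_ae hcongr, lintegral_const]
    congr 1
    rw [hR, ← Set.univ_prod_univ, Measure.prod_prod, rone_univ, rtwo_univ]
  have hglue := hh_glue P n z
  rw [hR] at hint
  rw [hint] at hglue
  exact ennreal_endgame (mm_le_one P n z) (hh_le_one P z) (mm_le_hh P n z) hglue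

end Core

end DoobProof

/-- **Theorem 2.** If `μ` is an invariant probability measure and for `μ ⊗ μ`-a.a. `(x,y)`
there is `n` with `P_n(x,·)` and `P_n(y,·)` not mutually singular, then
`‖P_n(x,·) - μ‖ → 0` for `μ`-a.a. `x`. -/
theorem doob_nonsingular_ae
    {E : Type*} [MeasurableSpace E] [MeasurableSpace.CountablyGenerated E]
    (hΔ : MeasurableSet {p : E × E | p.1 = p.2})
    (P : ProbabilityTheory.Kernel E E) [IsMarkovKernel P]
    (μ : Measure E) [IsProbabilityMeasure μ]
    (hinv : ∀ A : Set E, MeasurableSet A → μ A = ∫⁻ x, P x A ∂μ)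
    (hns : ∀ᵐ p ∂(μ.prod μ), ∃ n : ℕ, ¬ nStep P n p.1 ⟂ₘ nStep P n p.2) :
    ∀ᵐ x ∂μ, Tendsto (fun n => tvDist (nStep P n x) μ) atTop (nhds 0) := by
  classical
  open DoobProof in
  have hbind : μ.bind ⇑P = μ := by
    refine Measure.ext fun s hs => ?_
    rw [Measure.bind_apply hs P.measurable.aemeasurable]
    exact (hinv s hs).symm
  have hone : ∀ᵐ z ∂(μ.prod μ), hh P z = 1 := by
    filter_upwards [core_dichotomy P μ hbind, hns] with z h1 h2
    obtain ⟨n, hn⟩ := h2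
    rcases h1 n with h | h
    · exact absurd (singular_of_mm_eq_zero P n z h) hn
    · exact h
  have hx : ∀ᵐ x ∂μ, ∀ᵐ y ∂μ, hh P (x, y) = 1 := Measure.ae_ae_of_ae_prod hone
  filter_upwards [hx] with x hxy
  set W : ℕ → ℝ≥0∞ := fun n => ∫⁻ y, (1 - mm P n (x, y)) ∂μ with hW
  have hmeasy : ∀ n, Measurable fun y => 1 - mm P n (x, y) :=
    fun n => measurable_const.sub ((measurable_mm P n).comp measurable_prodMk_left)
  have hanti_fun : Antitone fun n => (fun y => 1 - mm P n (x, y)) := by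
    intro a b hab y
    exact tsub_le_tsub_left (mm_mono P (x, y) hab) 1
  have hanti : Antitone W := fun a b hab => lintegral_mono (hanti_fun hab)
  have hfin : ∫⁻ y, (1 - mm P 0 (x, y)) ∂μ ≠ ∞ := by
    refine ne_top_of_le_ne_top one_ne_top ?_
    calc ∫⁻ y, (1 - mm P 0 (x, y)) ∂μ ≤ ∫⁻ _, 1 ∂μ := lintegral_mono fun y => tsub_le_self
      _ = 1 := by simp
  have hiInf : ⨅ n, W n = 0 := by
    rw [hW]
    rw [← lintegral_iInf hmeasy hanti_fun hfin]
    have hzero : ∫⁻ y, ⨅ n, (1 - mm P n (x, y)) ∂μ = ∫⁻ _, (0 : ℝ≥0∞) ∂μ := by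
      refine lintegral_congr_ae ?_
      filter_upwards [hxy] with y hy
      have : ⨅ n, (1 - mm P n (x, y)) = 1 - hh P (x, y) :=
        (ENNReal.sub_iSup one_ne_top).symm
      rw [this, hy, tsub_self]
    rw [hzero]
    simp
  have htendW : Tendsto W atTop (nhds 0) := by
    rw [← hiInf]
    exact tendsto_atTop_iInf hanti
  have htendb : Tendsto (fun n => 2 * W n) atTop (nhds 0) := by
    have := ENNReal.Tendsto.const_mul (a := 2) htendW (Or.inr ENNReal.ofNat_ne_top)
    rwa [mul_zero] at this
  refine tendsto_of_tendsto_of_tendsto_of_le_of_le tendsto_const_nhds htendb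
    (fun n => zero_le) (fun n => ?_)
  exact tvDist_le_lintegral P μ hbind n x
end

section
/- (Coupling Lemma for transition probabilities.) Let (E, 𝓔) be a countably generated measurable space and let P(x, dy) be a Markov kernel on (E, 𝓔). Then there exists a Markov kernel Q((x₁,x₂), dy₁dy₂) on (E × E, 𝓔 ⊗ 𝓔) such that for every (x₁, x₂) ∈ E × E: (i) Q((x₁,x₂), Δ) = 1 − (1/2)‖P(x₁,·) − P(x₂,·)‖, where Δ is the diagonal of E × E; and (ii) the restriction of the measure Q((x₁,x₂), ·) to (E × E) \ Δ is absolutely continuous with respect to the product measure P(x₁, dy₁) ⊗ P(x₂, dy₂). -/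
open MeasureTheory ProbabilityTheory Filter ENNReal

namespace CouplingAux

variable {E : Type*} [MeasurableSpace E] [MeasurableSpace.CountablyGenerated E]
  (P : Kernel E E) [IsMarkovKernel P]

/-- The kernel `(x₁,x₂) ↦ P x₁`. -/
noncomputable def k1 : Kernel (E × E) E := P.comap Prod.fst measurable_fst

/-- The kernel `(x₁,x₂) ↦ P x₂`. -/
noncomputable def k2 : Kernel (E × E) E := P.comap Prod.snd measurable_snd

instance : IsMarkovKernel (k1 P) := Kernel.IsMarkovKernel.comap P measurable_fst
instance : IsMarkovKernel (k2 P) := Kernel.IsMarkovKernel.comap P measurable_snd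

lemma k1_apply (x : E × E) : k1 P x = P x.1 := Kernel.comap_apply P measurable_fst x
lemma k2_apply (x : E × E) : k2 P x = P x.2 := Kernel.comap_apply P measurable_snd x

/-- The (kernel) Radon–Nikodym derivative of `P x₁` w.r.t. `P x₂`. -/
noncomputable def f (x : E × E) (y : E) : ℝ≥0∞ := Kernel.rnDeriv (k1 P) (k2 P) x y

lemma measurable_f : Measurable (Function.uncurry (f P)) :=
  Kernel.measurable_rnDeriv (k1 P) (k2 P)

lemma measurable_f_right (x : E × E) : Measurable (f P x) :=
  Kernel.measurable_rnDeriv_right (k1 P) (k2 P) x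

/-- The "minimum" kernel `x ↦ P x₁ ⊓ P x₂`. -/
noncomputable def L : Kernel (E × E) E :=
  Kernel.withDensity (k2 P) (fun x y => min (f P x y) 1)

/-- The excess of `P x₁` over the minimum. -/
noncomputable def Psi : Kernel (E × E) E :=
  Kernel.withDensity (k2 P) (fun x y => f P x y - 1) + Kernel.singularPart (k1 P) (k2 P)

/-- The excess of `P x₂` over the minimum. -/
noncomputable def Phi : Kernel (E × E) E :=
  Kernel.withDensity (k2 P) (fun x y => 1 - f P x y)

lemma L_apply (x : E × E) :
    L P x = (P x.2).withDensity (fun y => min (f P x y) 1) := by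
  rw [L, Kernel.withDensity_apply _ ((measurable_f P).min measurable_const), k2_apply]

lemma Psi_apply (x : E × E) :
    Psi P x = (P x.2).withDensity (fun y => f P x y - 1)
      + Kernel.singularPart (k1 P) (k2 P) x := by
  rw [Psi, Kernel.add_apply, Kernel.withDensity_apply _ ((measurable_f P).sub measurable_const),
    k2_apply]

lemma Phi_apply (x : E × E) :
    Phi P x = (P x.2).withDensity (fun y => 1 - f P x y) := by
  rw [Phi, Kernel.withDensity_apply _ (measurable_const.sub (measurable_f P)), k2_apply]

lemma min_add_sub (a : ℝ≥0∞) : min a 1 + (a - 1) = a := by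
  rcases le_total a 1 with h | h
  · rw [min_eq_left h, tsub_eq_zero_of_le h, add_zero]
  · rw [min_eq_right h, add_tsub_cancel_of_le h]

lemma min_add_sub' (a : ℝ≥0∞) : min a 1 + (1 - a) = 1 := by
  rcases le_total a 1 with h | h
  · rw [min_eq_left h, add_tsub_cancel_of_le h]
  · rw [min_eq_right h, tsub_eq_zero_of_le h, add_zero]

lemma decomp1 (x : E × E) : L P x + Psi P x = P x.1 := by
  have h := Kernel.rnDeriv_add_singularPart (k1 P) (k2 P)
  have hx : (P x.2).withDensity (f P x) + Kernel.singularPart (k1 P) (k2 P) x = P x.1 := by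
    conv_rhs => rw [← k1_apply P x, ← h]
    rw [Kernel.add_apply, Kernel.withDensity_apply _ (Kernel.measurable_rnDeriv _ _), k2_apply]
    rfl
  rw [L_apply, Psi_apply, ← add_assoc,
    ← withDensity_add_left ((measurable_f_right P x).min measurable_const)]
  have : ((fun y => min (f P x y) 1) + fun y => f P x y - 1) = f P x :=
    funext fun y => min_add_sub _
  rw [this, hx]

lemma decomp2 (x : E × E) : L P x + Phi P x = P x.2 := by
  rw [L_apply, Phi_apply,
    ← withDensity_add_left ((measurable_f_right P x).min measurable_const)]
  have : ((fun y => min (f P x y) 1) + fun y => 1 - f P x y) = fun _ => (1 : ℝ≥0∞) :=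
    funext fun y => min_add_sub' _
  rw [this]
  exact withDensity_one (μ := P x.2)

instance : IsFiniteKernel (L P) := by
  refine ⟨1, one_lt_top, fun x => ?_⟩
  have := decomp2 P x
  calc L P x Set.univ ≤ L P x Set.univ + Phi P x Set.univ := le_self_add
    _ = P x.2 Set.univ := by rw [← this]; rfl
    _ = 1 := measure_univ

instance : IsFiniteKernel (Psi P) := by
  refine ⟨1, one_lt_top, fun x => ?_⟩
  have := decomp1 P x
  calc Psi P x Set.univ ≤ L P x Set.univ + Psi P x Set.univ := le_add_self
    _ = P x.1 Set.univ := by rw [← this]; rfl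
    _ = 1 := measure_univ

instance : IsFiniteKernel (Phi P) := by
  refine ⟨1, one_lt_top, fun x => ?_⟩
  have := decomp2 P x
  calc Phi P x Set.univ ≤ L P x Set.univ + Phi P x Set.univ := le_add_self
    _ = P x.2 Set.univ := by rw [← this]; rfl
    _ = 1 := measure_univ

/-- The two excesses are mutually singular: there is a measurable set carrying all of `Psi`
and none of `Phi`. -/
lemma exists_T (x : E × E) :
    ∃ T : Set E, MeasurableSet T ∧ Phi P x T = 0 ∧ Psi P x Tᶜ = 0 := by
  obtain ⟨S0, hS0m, hS0, hS0c⟩ := Kernel.mutuallySingular_singularPart (k1 P) (k2 P) x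
  rw [k2_apply] at hS0c
  have hA : MeasurableSet {y | 1 < f P x y} := measurableSet_lt measurable_const
    (measurable_f_right P x)
  refine ⟨{y | 1 < f P x y} ∪ S0ᶜ, hA.union hS0m.compl, ?_, ?_⟩
  · refine le_antisymm ?_ (zero_le)
    calc Phi P x ({y | 1 < f P x y} ∪ S0ᶜ)
        ≤ Phi P x {y | 1 < f P x y} + Phi P x S0ᶜ := measure_union_le _ _
      _ = 0 + 0 := by
          congr 1
          · rw [Phi_apply, withDensity_apply _ hA]
            rw [setLIntegral_congr_fun hA (fun y hy => ?_), lintegral_zero]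
            exact tsub_eq_zero_of_le hy.le
          · rw [Phi_apply]
            exact withDensity_absolutelyContinuous _ _ hS0c
      _ = 0 := by rw [add_zero]
  · have hTc : ({y | 1 < f P x y} ∪ S0ᶜ)ᶜ = {y | 1 < f P x y}ᶜ ∩ S0 := by
      rw [Set.compl_union, compl_compl]
    rw [Psi_apply, Measure.add_apply, hTc]
    have h1 : (P x.2).withDensity (fun y => f P x y - 1) ({y | 1 < f P x y}ᶜ ∩ S0) = 0 := by
      rw [withDensity_apply _ (hA.compl.inter hS0m)]
      rw [setLIntegral_congr_fun (hA.compl.inter hS0m) (fun y hy => ?_),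
        lintegral_zero]
      exact tsub_eq_zero_of_le (not_lt.mp hy.1)
    have h2 : Kernel.singularPart (k1 P) (k2 P) x ({y | 1 < f P x y}ᶜ ∩ S0) = 0 :=
      measure_mono_null Set.inter_subset_right hS0
    rw [h1, h2, add_zero]

lemma L_univ_le_one (x : E × E) : L P x Set.univ ≤ 1 := by
  have := decomp2 P x
  calc L P x Set.univ ≤ L P x Set.univ + Phi P x Set.univ := le_self_add
    _ = P x.2 Set.univ := by rw [← this]; rfl
    _ = 1 := measure_univ

lemma Psi_univ (x : E × E) : Psi P x Set.univ = 1 - L P x Set.univ := by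
  have h : L P x Set.univ + Psi P x Set.univ = 1 := by
    have := decomp1 P x
    calc L P x Set.univ + Psi P x Set.univ = P x.1 Set.univ := by rw [← this]; rfl
      _ = 1 := measure_univ
  rw [add_comm] at h
  exact ENNReal.eq_sub_of_add_eq (measure_ne_top _ _) h

lemma Phi_univ (x : E × E) : Phi P x Set.univ = 1 - L P x Set.univ := by
  have h : L P x Set.univ + Phi P x Set.univ = 1 := by
    have := decomp2 P x
    calc L P x Set.univ + Phi P x Set.univ = P x.2 Set.univ := by rw [← this]; rfl
      _ = 1 := measure_univ
  rw [add_comm] at h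
  exact ENNReal.eq_sub_of_add_eq (measure_ne_top _ _) h

lemma tv_eq (x : E × E) :
    tvDist (P x.1) (P x.2) = 2 * (1 - L P x Set.univ) := by
  rw [tvDist]
  congr 1
  have hμA : ∀ A : Set E, P x.1 A = L P x A + Psi P x A := fun A => by
    rw [← decomp1 P x]; rfl
  have hνA : ∀ A : Set E, P x.2 A = L P x A + Phi P x A := fun A => by
    rw [← decomp2 P x]; rfl
  rw [← Psi_univ P x]
  refine le_antisymm (iSup₂_le fun A hA => sup_le ?_ ?_) ?_
  · calc P x.1 A - P x.2 A ≤ Psi P x A := by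
          rw [hμA, hνA]
          refine tsub_le_iff_right.mpr ?_
          rw [add_comm (L P x A)]
          exact add_le_add_right le_self_add _
      _ ≤ Psi P x Set.univ := measure_mono (Set.subset_univ A)
  · calc P x.2 A - P x.1 A ≤ Phi P x A := by
          rw [hμA, hνA]
          refine tsub_le_iff_right.mpr ?_
          rw [add_comm (L P x A)]
          exact add_le_add_right le_self_add _
      _ ≤ Phi P x Set.univ := measure_mono (Set.subset_univ A)
      _ = Psi P x Set.univ := by rw [Phi_univ, Psi_univ]
  · obtain ⟨T, hT, hφT, hψTc⟩ := exists_T P x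
    have hψT : Psi P x T = Psi P x Set.univ := by
      have h := measure_add_measure_compl (μ := Psi P x) hT
      rwa [hψTc, add_zero] at h
    have key : P x.1 T - P x.2 T = Psi P x Set.univ := by
      rw [hμA, hνA, hφT, add_zero, hψT, ENNReal.add_sub_cancel_left (measure_ne_top _ _)]
    calc Psi P x Set.univ = P x.1 T - P x.2 T := key.symm
      _ ≤ (P x.1 T - P x.2 T) ⊔ (P x.2 T - P x.1 T) := le_sup_left
      _ ≤ ⨆ (A : Set E) (_ : MeasurableSet A), ((P x.1 A - P x.2 A) ⊔ (P x.2 A - P x.1 A)) :=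
          le_iSup₂ (f := fun (A : Set E) (_ : MeasurableSet A) =>
            ((P x.1 A - P x.2 A) ⊔ (P x.2 A - P x.1 A))) T hT

/-- The coupling kernel. -/
noncomputable def Qk : Kernel (E × E) (E × E) where
  toFun x := (Kernel.map (L P) (fun y : E => (y, y))) x
    + (1 - L P x Set.univ)⁻¹ • ((Psi P ×ₖ Phi P) x)
  measurable' := by
    refine Measure.measurable_of_measurable_coe _ fun B hB => ?_
    simp only [Measure.coe_add, Pi.add_apply, Measure.smul_apply, smul_eq_mul]
    exact ((Kernel.map (L P) (fun y : E => (y, y))).measurable_coe hB).add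
      (((measurable_const.sub ((L P).measurable_coe MeasurableSet.univ)).inv).mul
        ((Psi P ×ₖ Phi P).measurable_coe hB))

lemma Qk_apply (x : E × E) :
    Qk P x = (Kernel.map (L P) (fun y : E => (y, y))) x
      + (1 - L P x Set.univ)⁻¹ • ((Psi P x).prod (Phi P x)) := by
  rw [← Kernel.prod_apply]; rfl

lemma measurable_diag : Measurable (fun y : E => (y, y)) :=
  measurable_id.prodMk measurable_id

end CouplingAux

/-- **The Coupling Lemma for transition probabilities (Lemma 1).** For any Markov kernel `P`
on a countably generated measurable space whose diagonal is product-measurable, there is a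
Markov kernel `Q` on `E × E` such that for every `(x₁, x₂)`:
(i) `Q((x₁,x₂), Δ) = 1 - (1/2)‖P(x₁,·) - P(x₂,·)‖`, and
(ii) `Q((x₁,x₂), ·)` restricted to the complement of the diagonal is absolutely continuous
with respect to `P(x₁,·) ⊗ P(x₂,·)`. -/
theorem coupling_lemma
    {E : Type*} [MeasurableSpace E] [MeasurableSpace.CountablyGenerated E]
    (hΔ : MeasurableSet {p : E × E | p.1 = p.2})
    (P : ProbabilityTheory.Kernel E E) [IsMarkovKernel P] :
    ∃ Q : ProbabilityTheory.Kernel (E × E) (E × E), IsMarkovKernel Q ∧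
      (∀ x : E × E,
        Q x {p : E × E | p.1 = p.2} = 1 - (1 / 2 : ℝ≥0∞) * tvDist (P x.1) (P x.2)) ∧
      (∀ x : E × E,
        (Q x).restrict {p : E × E | p.1 = p.2}ᶜ ≪ (P x.1).prod (P x.2)) := by
  classical
  open CouplingAux in
  refine ⟨Qk P, ?_, ?_, ?_⟩
  · -- Markov kernel
    refine ⟨fun x => ⟨?_⟩⟩
    rw [Qk_apply, Measure.add_apply, Measure.smul_apply, smul_eq_mul]
    have h1 : (Kernel.map (L P) (fun y : E => (y, y))) x Set.univ = L P x Set.univ := by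
      rw [Kernel.map_apply' _ (CouplingAux.measurable_diag) _ MeasurableSet.univ, Set.preimage_univ]
    have h2 : (Psi P x).prod (Phi P x) Set.univ
        = (1 - L P x Set.univ) * (1 - L P x Set.univ) := by
      rw [← Set.univ_prod_univ, Measure.prod_prod, Psi_univ, Phi_univ]
    rw [h1, h2]
    set b := 1 - L P x Set.univ with hb
    by_cases hb0 : b = 0
    · have : L P x Set.univ = 1 := by
        have h := tsub_add_cancel_of_le (L_univ_le_one P x)
        rwa [← hb, hb0, zero_add] at h
      rw [hb0, mul_zero, mul_zero, add_zero, this]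
    · have hbt : b ≠ ∞ := by
        rw [hb]
        exact (tsub_le_self.trans_lt one_lt_top).ne
      rw [← mul_assoc, ENNReal.inv_mul_cancel hb0 hbt, one_mul, hb]
      exact add_tsub_cancel_of_le (L_univ_le_one P x)
  · -- diagonal mass
    intro x
    rw [Qk_apply, Measure.add_apply, Measure.smul_apply, smul_eq_mul]
    have h1 : (Kernel.map (L P) (fun y : E => (y, y))) x {p : E × E | p.1 = p.2}
        = L P x Set.univ := by
      rw [Kernel.map_apply' _ (CouplingAux.measurable_diag) _ hΔ]
      congr 1
      ext y; simp
    have h2 : (Psi P x).prod (Phi P x) {p : E × E | p.1 = p.2} = 0 := by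
      obtain ⟨T, hT, hφT, hψTc⟩ := exists_T P x
      refine measure_mono_null (fun p hp => ?_) (le_antisymm ?_ (zero_le) :
        (Psi P x).prod (Phi P x) (T ×ˢ T ∪ Tᶜ ×ˢ Tᶜ) = 0)
      · rcases Classical.em (p.1 ∈ T) with h | h
        · exact Or.inl ⟨h, hp ▸ h⟩
        · exact Or.inr ⟨h, fun hc => h (hp ▸ hc)⟩
      · calc (Psi P x).prod (Phi P x) (T ×ˢ T ∪ Tᶜ ×ˢ Tᶜ)
            ≤ (Psi P x).prod (Phi P x) (T ×ˢ T) + (Psi P x).prod (Phi P x) (Tᶜ ×ˢ Tᶜ) :=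
              measure_union_le _ _
          _ = 0 := by rw [Measure.prod_prod, Measure.prod_prod, hφT, hψTc, mul_zero, zero_mul,
              add_zero]
    rw [h1, h2, mul_zero, add_zero, tv_eq P x, ← mul_assoc]
    have : (1 / 2 : ℝ≥0∞) * 2 = 1 := by
      rw [one_div, ENNReal.inv_mul_cancel two_ne_zero ENNReal.ofNat_ne_top]
    rw [this, one_mul]
    exact (ENNReal.sub_sub_cancel one_ne_top (L_univ_le_one P x)).symm
  · -- absolute continuity off the diagonal
    intro x
    rw [Qk_apply, Measure.restrict_add]
    refine Measure.AbsolutelyContinuous.add_left ?_ ?_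
    · have h0 : (Kernel.map (L P) (fun y : E => (y, y))) x {p : E × E | p.1 = p.2}ᶜ = 0 := by
        rw [Kernel.map_apply' _ (CouplingAux.measurable_diag) _ hΔ.compl]
        convert measure_empty (μ := L P x)
        ext y; simp
      rw [Measure.restrict_eq_zero.mpr h0]
      intro s _; simp
    · intro s hs
      have hψac : Psi P x ≪ P x.1 := by
        intro t ht
        have h : L P x t + Psi P x t = 0 := by
          rw [← Measure.add_apply, decomp1 P x, ht]
        exact (add_eq_zero.mp h).2
      have hφac : Phi P x ≪ P x.2 := by
        intro t ht
        have h : L P x t + Phi P x t = 0 := by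
          rw [← Measure.add_apply, decomp2 P x, ht]
        exact (add_eq_zero.mp h).2
      have h0 : (Psi P x).prod (Phi P x) s = 0 := (hψac.prod hφac) hs
      rw [Measure.restrict_apply' hΔ.compl, Measure.smul_apply, smul_eq_mul,
        measure_mono_null Set.inter_subset_left h0, mul_zero]
end

section
/- Let (E, 𝓔) be a countably generated measurable space and let P(x, dy) be a Markov kernel on (E, 𝓔). Define the kernel Λ(x₁, x₂; dy) = (1/2)(P(x₁, dy) + P(x₂, dy)) on E × E. Then there exist jointly measurable functions f₁, f₂ : E × E × E → [0, ∞) such that for all x₁, x₂ ∈ E and all A ∈ 𝓔, P(xᵢ, A) = ∫_A fᵢ(x₁, x₂, y) Λ(x₁, x₂; dy) for i = 1, 2; that is, the Radon–Nikodym derivatives of P(xᵢ, ·) with respect to Λ(x₁, x₂; ·) can be chosen jointly measurably in (x₁, x₂, y). -/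
open MeasureTheory ProbabilityTheory Filter ENNReal

/-- **Jointly measurable Radon–Nikodym derivatives.** For a Markov kernel `P` on a countably
generated measurable space, setting `Λ(x₁,x₂;·) = (1/2)(P(x₁,·) + P(x₂,·))`, the
Radon–Nikodym derivatives of `P(xᵢ,·)` w.r.t. `Λ(x₁,x₂;·)` can be chosen jointly measurably:
there are measurable `f₁ f₂ : E × E × E → [0,∞]` with
`P(xᵢ, A) = ∫_A fᵢ(x₁,x₂,y) Λ(x₁,x₂; dy)` for all `x₁, x₂, A` and `i = 1, 2`. -/
theorem jointly_measurable_rn_derivatives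
    {E : Type*} [MeasurableSpace E] [MeasurableSpace.CountablyGenerated E]
    (P : ProbabilityTheory.Kernel E E) [IsMarkovKernel P] :
    ∃ f₁ f₂ : E × E × E → ℝ≥0∞, Measurable f₁ ∧ Measurable f₂ ∧
      ∀ x₁ x₂ : E, ∀ A : Set E, MeasurableSet A →
        (P x₁ A =
          ∫⁻ y in A, f₁ (x₁, x₂, y)
            ∂((1 / 2 : ℝ≥0∞) • P x₁ + (1 / 2 : ℝ≥0∞) • P x₂) ∧
         P x₂ A =
          ∫⁻ y in A, f₂ (x₁, x₂, y)
            ∂((1 / 2 : ℝ≥0∞) • P x₁ + (1 / 2 : ℝ≥0∞) • P x₂)) := by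
  set κ₁ : Kernel (E × E) E := P.comap Prod.fst measurable_fst with hκ₁
  set κ₂ : Kernel (E × E) E := P.comap Prod.snd measurable_snd with hκ₂
  set η : Kernel (E × E) E :=
    Kernel.withDensity (κ₁ + κ₂) (fun _ _ ↦ (1 / 2 : ℝ≥0∞)) with hη
  haveI : IsFiniteKernel η := by
    rw [hη]
    exact Kernel.isFiniteKernel_withDensity_of_bounded _ (by norm_num : (1/2 : ℝ≥0∞) ≠ ∞)
      fun _ _ ↦ le_rfl
  have hηapp : ∀ x₁ x₂ : E,
      η (x₁, x₂) = (1 / 2 : ℝ≥0∞) • P x₁ + (1 / 2 : ℝ≥0∞) • P x₂ := by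
    intro x₁ x₂
    rw [hη, Kernel.withDensity_apply _ (by fun_prop)]
    simp [hκ₁, hκ₂, Kernel.comap_apply, withDensity_const, smul_add]
  have hac₁ : ∀ x₁ x₂ : E, κ₁ (x₁, x₂) ≪ η (x₁, x₂) := by
    intro x₁ x₂
    rw [hηapp]
    refine Measure.AbsolutelyContinuous.mk fun s _ hs ↦ ?_
    simp only [Measure.coe_add, Measure.coe_smul, Pi.add_apply, Pi.smul_apply, smul_eq_mul,
      add_eq_zero, mul_eq_zero] at hs
    have : P x₁ s = 0 := by
      rcases hs.1 with h | h
      · norm_num at h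
      · exact h
    simpa [hκ₁, Kernel.comap_apply] using this
  have hac₂ : ∀ x₁ x₂ : E, κ₂ (x₁, x₂) ≪ η (x₁, x₂) := by
    intro x₁ x₂
    rw [hηapp]
    refine Measure.AbsolutelyContinuous.mk fun s _ hs ↦ ?_
    simp only [Measure.coe_add, Measure.coe_smul, Pi.add_apply, Pi.smul_apply, smul_eq_mul,
      add_eq_zero, mul_eq_zero] at hs
    have : P x₂ s = 0 := by
      rcases hs.2 with h | h
      · norm_num at h
      · exact h
    simpa [hκ₂, Kernel.comap_apply] using this
  refine ⟨fun p ↦ Kernel.rnDeriv κ₁ η (p.1, p.2.1) p.2.2,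
    fun p ↦ Kernel.rnDeriv κ₂ η (p.1, p.2.1) p.2.2, ?_, ?_, ?_⟩
  · exact (Kernel.measurable_rnDeriv κ₁ η).comp
      (measurable_fst.prodMk measurable_snd.fst |>.prodMk measurable_snd.snd)
  · exact (Kernel.measurable_rnDeriv κ₂ η).comp
      (measurable_fst.prodMk measurable_snd.fst |>.prodMk measurable_snd.snd)
  · intro x₁ x₂ A hA
    constructor
    · have h := Kernel.withDensity_rnDeriv_eq (hac₁ x₁ x₂)
      have h' : κ₁ (x₁, x₂) A = ∫⁻ y in A, Kernel.rnDeriv κ₁ η (x₁, x₂) y ∂(η (x₁, x₂)) := by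
        conv_lhs => rw [← h]
        rw [Kernel.withDensity_apply _ (Kernel.measurable_rnDeriv κ₁ η),
          withDensity_apply _ hA]
      rw [← hηapp x₁ x₂]
      simpa [hκ₁, Kernel.comap_apply] using h'
    · have h := Kernel.withDensity_rnDeriv_eq (hac₂ x₁ x₂)
      have h' : κ₂ (x₁, x₂) A = ∫⁻ y in A, Kernel.rnDeriv κ₂ η (x₁, x₂) y ∂(η (x₁, x₂)) := by
        conv_lhs => rw [← h]
        rw [Kernel.withDensity_apply _ (Kernel.measurable_rnDeriv κ₂ η),
          withDensity_apply _ hA]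
      rw [← hηapp x₁ x₂]
      simpa [hκ₂, Kernel.comap_apply] using h'
end

section
/- (Splitting representation for a pair of transition probabilities.) Let (E, 𝓔) be a countably generated measurable space and let P(x, dy) be a Markov kernel on (E, 𝓔). Then there exist a measurable function p : E × E → [0, 1] and Markov kernels Θ, Σ₁, Σ₂ from E × E to E such that for every (x₁, x₂) ∈ E × E and i = 1, 2: P(xᵢ, dy) = p(x₁, x₂) Θ(x₁, x₂; dy) + (1 − p(x₁, x₂)) Σᵢ(x₁, x₂; dy), where p(x₁, x₂) = 1 − (1/2)‖P(x₁,·) − P(x₂,·)‖ and Σᵢ(x₁, x₂; ·) is absolutely continuous with respect to P(xᵢ, ·). -/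
open MeasureTheory ProbabilityTheory Filter ENNReal

/-- **Splitting representation for a pair of transition probabilities.** For a Markov kernel
`P` on a countably generated measurable space there are a measurable `p : E × E → [0,1]` and
Markov kernels `Θ, Σ₁, Σ₂` (here `Θ, S₁, S₂`) from `E × E` to `E` such that
`p(x₁,x₂) = 1 - (1/2)‖P(x₁,·) - P(x₂,·)‖`,
`P(xᵢ,·) = p(x₁,x₂) Θ(x₁,x₂;·) + (1 - p(x₁,x₂)) Σᵢ(x₁,x₂;·)` and `Σᵢ(x₁,x₂;·) ≪ P(xᵢ,·)`. -/
theorem splitting_representation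
    {E : Type*} [MeasurableSpace E] [MeasurableSpace.CountablyGenerated E]
    (P : ProbabilityTheory.Kernel E E) [IsMarkovKernel P] :
    ∃ (p : E × E → ℝ≥0∞) (Θ S₁ S₂ : ProbabilityTheory.Kernel (E × E) E),
      Measurable p ∧ (∀ x : E × E, p x ≤ 1) ∧
      IsMarkovKernel Θ ∧ IsMarkovKernel S₁ ∧ IsMarkovKernel S₂ ∧
      ∀ x : E × E,
        p x = 1 - (1 / 2 : ℝ≥0∞) * tvDist (P x.1) (P x.2) ∧
        P x.1 = p x • Θ x + (1 - p x) • S₁ x ∧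
        P x.2 = p x • Θ x + (1 - p x) • S₂ x ∧
        S₁ x ≪ P x.1 ∧ S₂ x ≪ P x.2 := by
  classical
  set κ : Kernel (E × E) E := P.comap Prod.fst measurable_fst with hκdef
  set η : Kernel (E × E) E := P.comap Prod.snd measurable_snd with hηdef
  have hκx : ∀ x : E × E, κ x = P x.1 := fun x => Kernel.comap_apply P measurable_fst x
  have hηx : ∀ x : E × E, η x = P x.2 := fun x => Kernel.comap_apply P measurable_snd x
  set ν : Kernel (E × E) E := κ + η with hνdef
  have hνx : ∀ x : E × E, ν x = P x.1 + P x.2 := by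
    intro x
    rw [hνdef, Kernel.coe_add, Pi.add_apply, hκx, hηx]
  -- Radon-Nikodym derivatives
  set f : (E × E) → E → ℝ≥0∞ := Kernel.rnDeriv κ ν with hfdef
  set g : (E × E) → E → ℝ≥0∞ := Kernel.rnDeriv η ν with hgdef
  have hf : Measurable (Function.uncurry f) := Kernel.measurable_rnDeriv κ ν
  have hg : Measurable (Function.uncurry g) := Kernel.measurable_rnDeriv η ν
  have hfx : ∀ x : E × E, Measurable (f x) := fun x => Kernel.measurable_rnDeriv_right κ ν x
  have hgx : ∀ x : E × E, Measurable (g x) := fun x => Kernel.measurable_rnDeriv_right η ν x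
  have hκν : ∀ x : E × E, κ x ≪ ν x := by
    intro x
    rw [hνdef, Kernel.coe_add, Pi.add_apply]
    exact Measure.absolutelyContinuous_of_le (le_add_of_nonneg_right bot_le)
  have hην : ∀ x : E × E, η x ≪ ν x := by
    intro x
    rw [hνdef, Kernel.coe_add, Pi.add_apply]
    exact Measure.absolutelyContinuous_of_le (le_add_of_nonneg_left bot_le)
  have hκ_eq : ∀ x : E × E, (ν x).withDensity (f x) = P x.1 := by
    intro x
    rw [withDensity_congr_ae (Kernel.rnDeriv_eq_rnDeriv_measure),
      Measure.withDensity_rnDeriv_eq _ _ (hκν x), hκx]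
  have hη_eq : ∀ x : E × E, (ν x).withDensity (g x) = P x.2 := by
    intro x
    rw [withDensity_congr_ae (Kernel.rnDeriv_eq_rnDeriv_measure),
      Measure.withDensity_rnDeriv_eq _ _ (hην x), hηx]
  -- densities for the common part and the two remainders
  set dm : (E × E) → E → ℝ≥0∞ := fun x y => min (f x y) (g x y) with hdmdef
  set d1 : (E × E) → E → ℝ≥0∞ := fun x y => f x y - dm x y with hd1def
  set d2 : (E × E) → E → ℝ≥0∞ := fun x y => g x y - dm x y with hd2def
  have hdm : Measurable (Function.uncurry dm) := hf.min hg
  have hd1 : Measurable (Function.uncurry d1) := hf.sub hdm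
  have hd2 : Measurable (Function.uncurry d2) := hg.sub hdm
  have hdmx : ∀ x, Measurable (dm x) := fun x => (hfx x).min (hgx x)
  have hd1x : ∀ x, Measurable (d1 x) := fun x => (hfx x).sub (hdmx x)
  have hd2x : ∀ x, Measurable (d2 x) := fun x => (hgx x).sub (hdmx x)
  set M : Kernel (E × E) E := Kernel.withDensity ν dm with hMdef
  set D1 : Kernel (E × E) E := Kernel.withDensity ν d1 with hD1def
  set D2 : Kernel (E × E) E := Kernel.withDensity ν d2 with hD2def
  have hMx : ∀ x, M x = (ν x).withDensity (dm x) := fun x => Kernel.withDensity_apply ν hdm x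
  have hD1x : ∀ x, D1 x = (ν x).withDensity (d1 x) := fun x => Kernel.withDensity_apply ν hd1 x
  have hD2x : ∀ x, D2 x = (ν x).withDensity (d2 x) := fun x => Kernel.withDensity_apply ν hd2 x
  -- splitting at the level of measures
  have hsplit1 : ∀ x, M x + D1 x = P x.1 := by
    intro x
    rw [hMx, hD1x, ← withDensity_add_left (hdmx x), ← hκ_eq x]
    congr 1
    ext y
    simp only [Pi.add_apply]
    rw [add_comm]
    exact tsub_add_cancel_of_le (min_le_left _ _)
  have hsplit2 : ∀ x, M x + D2 x = P x.2 := by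
    intro x
    rw [hMx, hD2x, ← withDensity_add_left (hdmx x), ← hη_eq x]
    congr 1
    ext y
    simp only [Pi.add_apply]
    rw [add_comm]
    exact tsub_add_cancel_of_le (min_le_right _ _)
  have happ1 : ∀ (x : E × E) (A : Set E), P x.1 A = M x A + D1 x A := by
    intro x A
    rw [← hsplit1 x]
    simp
  have happ2 : ∀ (x : E × E) (A : Set E), P x.2 A = M x A + D2 x A := by
    intro x A
    rw [← hsplit2 x]
    simp
  set p : E × E → ℝ≥0∞ := fun x => M x Set.univ with hpdef
  have hp_meas : Measurable p := Kernel.measurable_coe M MeasurableSet.univ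
  have hp_le_one : ∀ x, p x ≤ 1 := by
    intro x
    have h := congrArg (fun μ : Measure E => μ Set.univ) (hsplit1 x)
    simp only [Measure.coe_add, Pi.add_apply, measure_univ] at h
    exact le_trans (le_add_of_nonneg_right bot_le) h.le
  have hp_ne_top : ∀ x, p x ≠ ∞ := fun x => (lt_of_le_of_lt (hp_le_one x) one_lt_top).ne
  have hD1_univ : ∀ x, D1 x Set.univ = 1 - p x := by
    intro x
    have h := congrArg (fun μ : Measure E => μ Set.univ) (hsplit1 x)
    simp only [Measure.coe_add, Pi.add_apply, measure_univ] at h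
    rw [← h, hpdef, ENNReal.add_sub_cancel_left (hp_ne_top x)]
  have hD2_univ : ∀ x, D2 x Set.univ = 1 - p x := by
    intro x
    have h := congrArg (fun μ : Measure E => μ Set.univ) (hsplit2 x)
    simp only [Measure.coe_add, Pi.add_apply, measure_univ] at h
    rw [← h, hpdef, ENNReal.add_sub_cancel_left (hp_ne_top x)]
  -- the kernels
  set Θ : Kernel (E × E) E :=
    Kernel.withDensity ν (fun x y => if p x = 0 then f x y else (p x)⁻¹ * dm x y) with hΘdef
  set S₁ : Kernel (E × E) E :=
    Kernel.withDensity ν (fun x y => if p x = 1 then f x y else (1 - p x)⁻¹ * d1 x y) with hS₁def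
  set S₂ : Kernel (E × E) E :=
    Kernel.withDensity ν (fun x y => if p x = 1 then g x y else (1 - p x)⁻¹ * d2 x y) with hS₂def
  have hΘf : Measurable (Function.uncurry fun x y =>
      if p x = 0 then f x y else (p x)⁻¹ * dm x y) := by
    apply Measurable.ite
    · exact (hp_meas.comp measurable_fst) (measurableSet_singleton 0)
    · exact hf
    · exact ((hp_meas.comp measurable_fst).inv).mul hdm
  have hS₁f : Measurable (Function.uncurry fun x y =>
      if p x = 1 then f x y else (1 - p x)⁻¹ * d1 x y) := by
    apply Measurable.ite
    · exact (hp_meas.comp measurable_fst) (measurableSet_singleton 1)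
    · exact hf
    · exact ((measurable_const.sub (hp_meas.comp measurable_fst)).inv).mul hd1
  have hS₂f : Measurable (Function.uncurry fun x y =>
      if p x = 1 then g x y else (1 - p x)⁻¹ * d2 x y) := by
    apply Measurable.ite
    · exact (hp_meas.comp measurable_fst) (measurableSet_singleton 1)
    · exact hg
    · exact ((measurable_const.sub (hp_meas.comp measurable_fst)).inv).mul hd2
  have hΘx : ∀ x, Θ x = if p x = 0 then P x.1 else (p x)⁻¹ • M x := by
    intro x
    rw [hΘdef, Kernel.withDensity_apply ν hΘf]
    by_cases h : p x = 0
    · simp only [h, if_true]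
      exact hκ_eq x
    · simp only [h, if_false]
      rw [hMx]
      have : (fun y => (p x)⁻¹ * dm x y) = (p x)⁻¹ • dm x := by ext y; rfl
      rw [this, withDensity_smul _ (hdmx x)]
  have hS₁x : ∀ x, S₁ x = if p x = 1 then P x.1 else (1 - p x)⁻¹ • D1 x := by
    intro x
    rw [hS₁def, Kernel.withDensity_apply ν hS₁f]
    by_cases h : p x = 1
    · simp only [h, if_true]
      exact hκ_eq x
    · simp only [h, if_false]
      rw [hD1x]
      have : (fun y => (1 - p x)⁻¹ * d1 x y) = (1 - p x)⁻¹ • d1 x := by ext y; rfl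
      rw [this, withDensity_smul _ (hd1x x)]
  have hS₂x : ∀ x, S₂ x = if p x = 1 then P x.2 else (1 - p x)⁻¹ • D2 x := by
    intro x
    rw [hS₂def, Kernel.withDensity_apply ν hS₂f]
    by_cases h : p x = 1
    · simp only [h, if_true]
      exact hη_eq x
    · simp only [h, if_false]
      rw [hD2x]
      have : (fun y => (1 - p x)⁻¹ * d2 x y) = (1 - p x)⁻¹ • d2 x := by ext y; rfl
      rw [this, withDensity_smul _ (hd2x x)]
  have h1p_ne_zero : ∀ x, p x ≠ 1 → 1 - p x ≠ 0 := by
    intro x h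
    rw [ne_eq, tsub_eq_zero_iff_le, not_le]
    exact lt_of_le_of_ne (hp_le_one x) h
  have h1p_ne_top : ∀ x, (1 : ℝ≥0∞) - p x ≠ ∞ :=
    fun x => (lt_of_le_of_lt tsub_le_self one_lt_top).ne
  -- Markov property
  have hΘ_markov : IsMarkovKernel Θ := by
    constructor
    intro x
    constructor
    rw [hΘx]
    by_cases h : p x = 0
    · simp [h]
    · simp only [h, if_false, Measure.smul_apply, smul_eq_mul]
      exact ENNReal.inv_mul_cancel h (hp_ne_top x)
  have hS₁_markov : IsMarkovKernel S₁ := by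
    constructor
    intro x
    constructor
    rw [hS₁x]
    by_cases h : p x = 1
    · simp [h]
    · simp only [h, if_false, Measure.smul_apply, smul_eq_mul]
      rw [hD1_univ]
      exact ENNReal.inv_mul_cancel (h1p_ne_zero x h) (h1p_ne_top x)
  have hS₂_markov : IsMarkovKernel S₂ := by
    constructor
    intro x
    constructor
    rw [hS₂x]
    by_cases h : p x = 1
    · simp [h]
    · simp only [h, if_false, Measure.smul_apply, smul_eq_mul]
      rw [hD2_univ]
      exact ENNReal.inv_mul_cancel (h1p_ne_zero x h) (h1p_ne_top x)
  -- decompositions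
  have hdecomp1 : ∀ x, P x.1 = p x • Θ x + (1 - p x) • S₁ x := by
    intro x
    rw [hΘx, hS₁x]
    by_cases h0 : p x = 0
    · have hM0 : M x = 0 := Measure.measure_univ_eq_zero.mp h0
      have h1 : p x ≠ 1 := by rw [h0]; exact zero_ne_one
      rw [if_pos h0, if_neg h1, h0, zero_smul, zero_add, tsub_zero, inv_one, one_smul,
        one_smul, ← hsplit1 x, hM0, zero_add]
    · by_cases h1 : p x = 1
      · have hD0 : D1 x = 0 := by
          apply Measure.measure_univ_eq_zero.mp
          rw [hD1_univ, h1, tsub_self]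
        rw [if_neg h0, if_pos h1, smul_smul, ENNReal.mul_inv_cancel h0 (hp_ne_top x),
          one_smul, h1, tsub_self, zero_smul, add_zero, ← hsplit1 x, hD0, add_zero]
      · rw [if_neg h0, if_neg h1, smul_smul, ENNReal.mul_inv_cancel h0 (hp_ne_top x),
          one_smul, smul_smul, ENNReal.mul_inv_cancel (h1p_ne_zero x h1) (h1p_ne_top x),
          one_smul, hsplit1 x]
  have hdecomp2 : ∀ x, P x.2 = p x • Θ x + (1 - p x) • S₂ x := by
    intro x
    rw [hΘx, hS₂x]
    by_cases h0 : p x = 0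
    · have hM0 : M x = 0 := Measure.measure_univ_eq_zero.mp h0
      have h1 : p x ≠ 1 := by rw [h0]; exact zero_ne_one
      rw [if_pos h0, if_neg h1, h0, zero_smul, zero_add, tsub_zero, inv_one, one_smul,
        one_smul, ← hsplit2 x, hM0, zero_add]
    · by_cases h1 : p x = 1
      · have hD0 : D2 x = 0 := by
          apply Measure.measure_univ_eq_zero.mp
          rw [hD2_univ, h1, tsub_self]
        rw [if_neg h0, if_pos h1, smul_smul, ENNReal.mul_inv_cancel h0 (hp_ne_top x),
          one_smul, h1, tsub_self, zero_smul, add_zero, ← hsplit2 x, hD0, add_zero]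
      · rw [if_neg h0, if_neg h1, smul_smul, ENNReal.mul_inv_cancel h0 (hp_ne_top x),
          one_smul, smul_smul, ENNReal.mul_inv_cancel (h1p_ne_zero x h1) (h1p_ne_top x),
          one_smul, hsplit2 x]
  -- absolute continuity
  have hac1 : ∀ x, S₁ x ≪ P x.1 := by
    intro x
    rw [hS₁x]
    by_cases h1 : p x = 1
    · rw [if_pos h1]
    · rw [if_neg h1]
      intro s hs
      have hD1le : D1 x s ≤ P x.1 s := by
        rw [← hsplit1 x]
        simp only [Measure.coe_add, Pi.add_apply]
        exact le_add_of_nonneg_left bot_le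
      have : D1 x s = 0 := le_antisymm (hs ▸ hD1le) bot_le
      simp [Measure.smul_apply, this]
  have hac2 : ∀ x, S₂ x ≪ P x.2 := by
    intro x
    rw [hS₂x]
    by_cases h1 : p x = 1
    · rw [if_pos h1]
    · rw [if_neg h1]
      intro s hs
      have hD2le : D2 x s ≤ P x.2 s := by
        rw [← hsplit2 x]
        simp only [Measure.coe_add, Pi.add_apply]
        exact le_add_of_nonneg_left bot_le
      have : D2 x s = 0 := le_antisymm (hs ▸ hD2le) bot_le
      simp [Measure.smul_apply, this]
  -- total variation identity
  have htv : ∀ x, p x = 1 - (1 / 2 : ℝ≥0∞) * tvDist (P x.1) (P x.2) := by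
    intro x
    have hsup : (⨆ (A : Set E) (_ : MeasurableSet A),
        ((P x.1 A - P x.2 A) ⊔ (P x.2 A - P x.1 A))) = 1 - p x := by
      apply le_antisymm
      · refine iSup_le fun A => iSup_le fun hA => ?_
        refine sup_le ?_ ?_
        · calc P x.1 A - P x.2 A = (M x A + D1 x A) - (M x A + D2 x A) := by
                rw [happ1, happ2]
            _ ≤ D1 x A := by
                rw [tsub_le_iff_right, add_comm (M x A)]
                exact add_le_add le_rfl (le_add_of_nonneg_right bot_le)
            _ ≤ D1 x Set.univ := measure_mono (Set.subset_univ A)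
            _ = 1 - p x := hD1_univ x
        · calc P x.2 A - P x.1 A = (M x A + D2 x A) - (M x A + D1 x A) := by
                rw [happ1, happ2]
            _ ≤ D2 x A := by
                rw [tsub_le_iff_right, add_comm (M x A)]
                exact add_le_add le_rfl (le_add_of_nonneg_right bot_le)
            _ ≤ D2 x Set.univ := measure_mono (Set.subset_univ A)
            _ = 1 - p x := hD2_univ x
      · set A : Set E := {y | g x y < f x y} with hAdef
        have hA : MeasurableSet A := measurableSet_lt (hgx x) (hfx x)
        have hd2A : D2 x A = 0 := by
          have hz : ∀ y ∈ A, d2 x y = (fun _ => (0 : ℝ≥0∞)) y := by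
            intro y hy
            have hmin : dm x y = g x y := min_eq_right (le_of_lt hy)
            show g x y - dm x y = 0
            rw [hmin, tsub_self]
          rw [hD2x, withDensity_apply _ hA, setLIntegral_congr_fun hA hz]
          simp
        have hd1Ac : D1 x Aᶜ = 0 := by
          have hz : ∀ y ∈ Aᶜ, d1 x y = (fun _ => (0 : ℝ≥0∞)) y := by
            intro y hy
            have hle : f x y ≤ g x y := not_lt.mp hy
            have hmin : dm x y = f x y := min_eq_left hle
            show f x y - dm x y = 0
            rw [hmin, tsub_self]
          rw [hD1x, withDensity_apply _ hA.compl, setLIntegral_congr_fun hA.compl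
            hz]
          simp
        have hd1A : D1 x A = 1 - p x := by
          have := measure_add_measure_compl (μ := D1 x) hA
          rw [hd1Ac, add_zero, hD1_univ x] at this
          exact this
        have hMA_ne_top : M x A ≠ ∞ := by
          refine (lt_of_le_of_lt (le_trans ?_ (hp_le_one x)) one_lt_top).ne
          exact measure_mono (Set.subset_univ A)
        have hval : P x.1 A - P x.2 A = 1 - p x := by
          have e2 : P x.2 A = M x A := by rw [happ2, hd2A, add_zero]
          rw [happ1, e2, ENNReal.add_sub_cancel_left hMA_ne_top, hd1A]
        calc (1 : ℝ≥0∞) - p x = P x.1 A - P x.2 A := hval.symm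
          _ ≤ (P x.1 A - P x.2 A) ⊔ (P x.2 A - P x.1 A) := le_sup_left
          _ ≤ ⨆ (A : Set E) (_ : MeasurableSet A),
                ((P x.1 A - P x.2 A) ⊔ (P x.2 A - P x.1 A)) :=
              le_iSup₂ (f := fun (B : Set E) (_ : MeasurableSet B) =>
                ((P x.1) B - (P x.2) B) ⊔ ((P x.2) B - (P x.1) B)) A hA
    rw [tvDist, hsup, ← mul_assoc]
    have h2 : (1 / 2 : ℝ≥0∞) * 2 = 1 := by
      rw [ENNReal.div_mul_cancel two_ne_zero ENNReal.ofNat_ne_top]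
    rw [h2, one_mul, ENNReal.sub_sub_cancel one_ne_top (hp_le_one x)]
  exact ⟨p, Θ, S₁, S₂, hp_meas, hp_le_one, hΘ_markov, hS₁_markov, hS₂_markov,
    fun x => ⟨htv x, hdecomp1 x, hdecomp2 x, hac1 x, hac2 x⟩⟩
end

section
/- (Recurrence Lemma, everywhere version.) Let X be a Markov chain on E with transition kernel P and n-step transition probabilities P_n(x,·), and let μ be an invariant probability measure. Assume that for every pair x, y ∈ E there exists n with P_n(x,·) and P_n(y,·) mutually absolutely continuous (equivalent). Then for every B ∈ 𝓔 with μ(B) > 0 and for every x ∈ E one has ℙ_x(X_n ∈ B for infinitely many n) = 1. -/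
open MeasureTheory ProbabilityTheory Filter ENNReal Topology

namespace RecAux

variable {E : Type*} [MeasurableSpace E]

/-- The shift on path space. -/
def shift : (ℕ → E) → (ℕ → E) := fun ω k => ω (k + 1)

lemma measurable_shift : Measurable (shift (E := E)) :=
  measurable_pi_lambda _ fun k => measurable_pi_apply _

/-- Restriction to the first `n+1` coordinates (freezing the rest). -/
def res (n : ℕ) : (ℕ → E) → (ℕ → E) := fun ω k => ω (min k n)

lemma measurable_res (n : ℕ) : Measurable (res (E := E) n) :=
  measurable_pi_lambda _ fun k => measurable_pi_apply _

def cons' (x : E) (v : ℕ → E) : ℕ → E := fun k => Nat.casesOn k x v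

@[simp] lemma cons'_zero (x : E) (v : ℕ → E) : cons' x v 0 = x := rfl
@[simp] lemma cons'_succ (x : E) (v : ℕ → E) (k : ℕ) : cons' x v (k + 1) = v k := rfl

lemma measurable_cons' (x : E) : Measurable (cons' x : (ℕ → E) → (ℕ → E)) := by
  apply measurable_pi_lambda
  intro k
  cases k with
  | zero => exact measurable_const
  | succ k => exact measurable_pi_apply k

lemma res_comp_res {n m : ℕ} (h : n ≤ m) : (res n : (ℕ → E) → _) ∘ res m = res n := by
  funext ω k
  simp only [Function.comp_apply, res]
  congr 1
  omega
  
lemma res_succ_eq (x : E) (ω : ℕ → E) (h0 : ω 0 = x) (n : ℕ) :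
    res (n + 1) ω = cons' x (res n (shift ω)) := by
  funext k
  cases k with
  | zero => simpa [res] using h0
  | succ k =>
    simp only [res, cons'_succ, shift]
    congr 1
    omega



section Chain

variable {E : Type*} [MeasurableSpace E]
  (P : Kernel E E) [IsMarkovKernel P]

lemma nStep_zero_apply (x : E) : nStep P 0 x = Measure.dirac x := by
  simp [nStep, Kernel.id, Kernel.deterministic_apply]

lemma nStep_succ_apply (n : ℕ) (x : E) :
    nStep P (n + 1) x = (P x).bind (fun y => nStep P n y) := by
  simp [nStep, Kernel.comp_apply]

variable {μ : Measure E} [IsProbabilityMeasure μ]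
  (hinv : ∀ A : Set E, MeasurableSet A → μ A = ∫⁻ x, P x A ∂μ)

include hinv in
lemma bind_P_eq : μ.bind (fun x => P x) = μ := by
  ext s hs
  rw [Measure.bind_apply hs (P.measurable.aemeasurable)]
  exact (hinv s hs).symm

include hinv in
lemma bind_nStep_eq (n : ℕ) : μ.bind (fun x => nStep P n x) = μ := by
  induction n with
  | zero =>
    simp only [nStep_zero_apply]
    exact Measure.bind_dirac
  | succ n ih =>
    have : (fun x => nStep P (n+1) x) = fun x => (P x).bind (fun y => nStep P n y) := by
      funext x; exact nStep_succ_apply P n x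
    rw [this, ← Measure.bind_bind P.measurable.aemeasurable (nStep P n).measurable.aemeasurable,
      bind_P_eq P hinv, ih]

end Chain

section Path

variable {E : Type*} [MeasurableSpace E]

lemma map_bind' {α β γ : Type*} [MeasurableSpace α] [MeasurableSpace β] [MeasurableSpace γ]
    (m : Measure α) (f : α → Measure β) (g : β → γ) (hf : Measurable f) (hg : Measurable g) :
    (m.bind f).map g = m.bind (fun a => (f a).map g) := by
  have h1 : (m.bind f).map g = (m.bind f).bind (fun b => Measure.dirac (g b)) :=
    (Measure.bind_dirac_eq_map _ hg).symm
  have hdg : Measurable (fun b : β => Measure.dirac (g b)) := Measure.measurable_dirac.comp hg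
  rw [h1, Measure.bind_bind hf.aemeasurable hdg.aemeasurable]
  congr 1
  funext a
  exact Measure.bind_dirac_eq_map _ hg

lemma measurableSet_singleton' (hΔ : MeasurableSet {p : E × E | p.1 = p.2}) (x : E) :
    MeasurableSet ({x} : Set E) := by
  have : ({x} : Set E) = (fun y => (y, x)) ⁻¹' {p : E × E | p.1 = p.2} := by
    ext y; simp [eq_comm]
  rw [this]
  exact hΔ.preimage (measurable_id.prodMk measurable_const)

variable (P : Kernel E E) [IsMarkovKernel P]
  (ν : Kernel E (ℕ → E)) [IsMarkovKernel ν]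
  (hν0 : ∀ x : E, (ν x).map (fun ω => ω 0) = Measure.dirac x)
  (hνM : ∀ x : E, (ν x).map (fun ω k => ω (k + 1)) = (P x).bind (fun y => ν y))

include hν0 in
lemma ae_zero_eq (hΔ : MeasurableSet {p : E × E | p.1 = p.2}) (x : E) :
    ∀ᵐ ω ∂(ν x), ω 0 = x := by
  have hx : MeasurableSet ({x} : Set E) := measurableSet_singleton' hΔ x
  have hpre : MeasurableSet ((fun ω : ℕ → E => ω 0) ⁻¹' {x}) := (measurable_pi_apply 0) hx
  have h1 : (ν x) ((fun ω : ℕ → E => ω 0) ⁻¹' {x}) = 1 := by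
    rw [← Measure.map_apply (measurable_pi_apply 0) hx, hν0 x, Measure.dirac_apply' _ hx]
    simp
  rw [ae_iff]
  have hset : {ω : ℕ → E | ¬ ω 0 = x} = ((fun ω : ℕ → E => ω 0) ⁻¹' {x})ᶜ := by ext ω; simp
  rw [hset, measure_compl hpre (measure_ne_top _ _), h1]
  simp

include hνM in
lemma map_shift (x : E) : (ν x).map shift = (P x).bind (fun y => ν y) := hνM x

include hνM in
lemma map_shift_iterate (n : ℕ) (x : E) :
    (ν x).map (shift^[n]) = (nStep P n x).bind (fun y => ν y) := by
  induction n generalizing x with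
  | zero =>
    simp only [Function.iterate_zero, Measure.map_id, nStep_zero_apply]
    exact (Measure.dirac_bind ν.measurable x).symm
  | succ n ih =>
    have hiter : (shift^[n+1] : (ℕ → E) → (ℕ → E)) = shift^[n] ∘ shift :=
      Function.iterate_succ shift n
    rw [hiter, ← Measure.map_map (measurable_shift.iterate n) measurable_shift,
      map_shift P ν hνM x,
      map_bind' _ _ _ ν.measurable (measurable_shift.iterate n)]
    have : (fun y => (ν y).map shift^[n]) = fun y => (nStep P n y).bind (fun z => ν z) := by
      funext y; exact ih y
    rw [this, ← Measure.bind_bind (nStep P n).measurable.aemeasurable ν.measurable.aemeasurable,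
      ← nStep_succ_apply]

lemma shift_iterate_apply (n : ℕ) (ω : ℕ → E) (k : ℕ) : shift^[n] ω k = ω (k + n) := by
  induction n generalizing ω k with
  | zero => rfl
  | succ n ih =>
    rw [Function.iterate_succ, Function.comp_apply, ih]
    rfl

include hν0 hνM in
lemma map_eval (n : ℕ) (x : E) :
    (ν x).map (fun ω => ω n) = nStep P n x := by
  have hev : (fun ω : ℕ → E => ω n) = (fun ω : ℕ → E => ω 0) ∘ (shift^[n]) := by
    funext ω
    simp [shift_iterate_apply]
  rw [hev, ← Measure.map_map (measurable_pi_apply 0) (measurable_shift.iterate n),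
    map_shift_iterate P ν hνM n x,
    map_bind' _ _ _ ν.measurable (measurable_pi_apply 0)]
  have : (fun y => (ν y).map (fun ω : ℕ → E => ω 0)) = fun y => Measure.dirac y := by
    funext y; exact hν0 y
  rw [this, Measure.bind_dirac]

end Path

section IOSet

variable {E : Type*} [MeasurableSpace E]

def ioSet (B : Set E) : Set (ℕ → E) := {ω | ∀ N : ℕ, ∃ n ≥ N, ω n ∈ B}

lemma measurableSet_ioSet {B : Set E} (hB : MeasurableSet B) : MeasurableSet (ioSet B) := by
  have : ioSet B = ⋂ N : ℕ, ⋃ n : ℕ, ⋃ (_ : n ≥ N), (fun ω : ℕ → E => ω n) ⁻¹' B := by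
    ext ω; simp [ioSet]
  rw [this]
  exact MeasurableSet.iInter fun N => MeasurableSet.iUnion fun n => MeasurableSet.iUnion
    fun _ => (measurable_pi_apply n) hB

lemma shift_preimage_ioSet (B : Set E) : shift ⁻¹' (ioSet B) = ioSet B := by
  ext ω
  constructor
  · intro h N
    obtain ⟨n, hn, hnB⟩ := h N
    exact ⟨n + 1, by omega, hnB⟩
  · intro h N
    obtain ⟨n, hn, hnB⟩ := h (N + 1)
    refine ⟨n - 1, by omega, ?_⟩
    show ω ((n - 1) + 1) ∈ B
    have : n - 1 + 1 = n := by omega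
    rwa [this]

lemma shift_iterate_preimage_ioSet (B : Set E) (n : ℕ) :
    shift^[n] ⁻¹' (ioSet B) = ioSet B := by
  induction n with
  | zero => rfl
  | succ n ih =>
    rw [Function.iterate_succ, Set.preimage_comp, ih, shift_preimage_ioSet]

variable (ν : Kernel E (ℕ → E)) [IsMarkovKernel ν] (B : Set E)

/-- `harm z = ℙ_z(X_n ∈ B i.o.)`. -/
noncomputable def harm : E → ℝ≥0∞ := fun z => ν z (ioSet B)

lemma measurable_harm (hB : MeasurableSet B) : Measurable (harm ν B) :=
  ν.measurable_coe (measurableSet_ioSet hB)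

lemma harm_le_one (z : E) : harm ν B z ≤ 1 := prob_le_one

variable (P : Kernel E E) [IsMarkovKernel P]
  (hνM : ∀ x : E, (ν x).map (fun ω k => ω (k + 1)) = (P x).bind (fun y => ν y))

include hνM in
lemma harm_harmonic (hB : MeasurableSet B) (n : ℕ) (x : E) :
    harm ν B x = ∫⁻ z, harm ν B z ∂(nStep P n x) := by
  have h1 : harm ν B x = ((ν x).map (shift^[n])) (ioSet B) := by
    rw [Measure.map_apply (measurable_shift.iterate n) (measurableSet_ioSet hB),
      shift_iterate_preimage_ioSet]
    rfl
  rw [h1, map_shift_iterate P ν hνM n x,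
    Measure.bind_apply (measurableSet_ioSet hB) ν.measurable.aemeasurable]
  rfl

end IOSet

section QMeasure

variable {E : Type*} [MeasurableSpace E]
  (P : Kernel E E) [IsMarkovKernel P]
  (ν : Kernel E (ℕ → E)) [IsMarkovKernel ν]
  (μ : Measure E) [IsProbabilityMeasure μ]

lemma isProbabilityMeasure_bind_kernel : IsProbabilityMeasure (μ.bind (fun x => ν x)) := by
  constructor
  rw [Measure.bind_apply MeasurableSet.univ ν.measurable.aemeasurable]
  simp

variable (hν0 : ∀ x : E, (ν x).map (fun ω => ω 0) = Measure.dirac x)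
  (hνM : ∀ x : E, (ν x).map (fun ω k => ω (k + 1)) = (P x).bind (fun y => ν y))
  (hinv : ∀ A : Set E, MeasurableSet A → μ A = ∫⁻ x, P x A ∂μ)

include hν0 hνM hinv in
lemma Q_map_eval (n : ℕ) : (μ.bind (fun x => ν x)).map (fun ω => ω n) = μ := by
  rw [map_bind' _ _ _ ν.measurable (measurable_pi_apply n)]
  have : (fun x => (ν x).map (fun ω : ℕ → E => ω n)) = fun x => nStep P n x := by
    funext x; exact map_eval P ν hν0 hνM n x
  rw [this]
  exact bind_nStep_eq P hinv n

end QMeasure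

section Escape

variable {E : Type*} [MeasurableSpace E]

/-- If almost every path in `V` eventually avoids `W`, then the probability of being in `W`
at time `k` while in `V` tends to `0`. -/
lemma tendsto_visit_zero (Q : Measure (ℕ → E)) [IsFiniteMeasure Q]
    (W : Set E) (hW : MeasurableSet W) (V : Set (ℕ → E)) (hV : MeasurableSet V)
    (hae : ∀ᵐ ω ∂Q, ω ∈ V → ∀ᶠ n in atTop, ω n ∉ W) :
    Tendsto (fun k => Q ({ω : ℕ → E | ω k ∈ W} ∩ V)) atTop (𝓝 0) := by
  set C : ℕ → Set (ℕ → E) := fun N => ⋂ k, ⋂ (_ : N ≤ k), (fun ω : ℕ → E => ω k) ⁻¹' Wᶜ with hC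
  have hCmeas : ∀ N, MeasurableSet (C N) := fun N =>
    MeasurableSet.iInter fun k => MeasurableSet.iInter fun _ => (measurable_pi_apply k) hW.compl
  have hCmono : Monotone C := by
    intro N M hNM ω hω
    simp only [hC, Set.mem_iInter] at hω ⊢
    intro k hk
    exact hω k (le_trans hNM hk)
  set D : ℕ → Set (ℕ → E) := fun k => V \ C k with hD
  have hDmeas : ∀ k, MeasurableSet (D k) := fun k => hV.diff (hCmeas k)
  have hDanti : Antitone D := fun n m hnm => Set.diff_subset_diff_right (hCmono hnm)
  have hInter : ⋂ k, D k = V \ ⋃ k, C k := by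
    ext ω
    simp only [hD, Set.mem_iInter, Set.mem_diff, Set.mem_iUnion, not_exists]
    exact ⟨fun h => ⟨(h 0).1, fun i => (h i).2⟩, fun h i => ⟨h.1, h.2 i⟩⟩
  have hnull : Q (⋂ k, D k) = 0 := by
    rw [hInter, measure_eq_zero_iff_ae_notMem]
    filter_upwards [hae] with ω hω
    rintro ⟨hV', hC'⟩
    obtain ⟨N, hN⟩ := (eventually_atTop).1 (hω hV')
    refine hC' (Set.mem_iUnion.2 ⟨N, ?_⟩)
    simp only [hC, Set.mem_iInter, Set.mem_preimage, Set.mem_compl_iff]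
    intro k hk
    exact hN k hk
  have htend := tendsto_measure_iInter_atTop (μ := Q)
    (fun k => (hDmeas k).nullMeasurableSet) hDanti ⟨0, measure_ne_top _ _⟩
  rw [hnull] at htend
  refine tendsto_of_tendsto_of_tendsto_of_le_of_le tendsto_const_nhds htend
    (fun k => zero_le) ?_
  intro k
  apply measure_mono
  rintro ω ⟨hωk, hωV⟩
  refine ⟨hωV, fun hCk => ?_⟩
  simp only [hC, Set.mem_iInter, Set.mem_preimage, Set.mem_compl_iff] at hCk
  exact hCk k le_rfl hωk

end Escape

section MarkovProp

variable {E : Type*} [MeasurableSpace E]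
  (P : Kernel E E) [IsMarkovKernel P]
  (ν : Kernel E (ℕ → E)) [IsMarkovKernel ν]

/-- The Markov property specialized to the shift-invariant event `ioSet B`. -/
lemma markov_property
    (hν0 : ∀ x : E, (ν x).map (fun ω => ω 0) = Measure.dirac x)
    (hνM : ∀ x : E, (ν x).map (fun ω k => ω (k + 1)) = (P x).bind (fun y => ν y))
    (hΔ : MeasurableSet {p : E × E | p.1 = p.2})
    (B : Set E) (hB : MeasurableSet B) :
    ∀ (n : ℕ) (x : E) (C : Set (ℕ → E)), MeasurableSet C →
      ν x (res n ⁻¹' C ∩ ioSet B)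
        = ∫⁻ ω in res n ⁻¹' C, harm ν B (ω n) ∂(ν x) := by
  have hio : MeasurableSet (ioSet B) := measurableSet_ioSet hB
  have hharm : Measurable (harm ν B) := measurable_harm ν B hB
  intro n
  induction n with
  | zero =>
    intro x C hC
    by_cases hxC : (fun _ : ℕ => x) ∈ C
    · have hsetae : (res 0 ⁻¹' C ∩ ioSet B : Set (ℕ → E)) =ᵐ[ν x] (ioSet B : Set (ℕ → E)) := by
        filter_upwards [ae_zero_eq ν hν0 hΔ x] with ω h0
        have hres : res 0 ω = fun _ : ℕ => x := by
          funext k; simp [res, h0]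
        show (ω ∈ res 0 ⁻¹' C ∩ ioSet B) = (ω ∈ ioSet B)
        simp only [Set.mem_inter_iff, Set.mem_preimage, hres, eq_iff_iff]
        tauto
      rw [measure_congr hsetae, ← lintegral_indicator ((measurable_res 0) hC)]
      have : ∀ᵐ ω ∂(ν x),
          (res 0 ⁻¹' C).indicator (fun ω' => harm ν B (ω' 0)) ω = harm ν B x := by
        filter_upwards [ae_zero_eq ν hν0 hΔ x] with ω h0
        have hres : res 0 ω = fun _ : ℕ => x := by
          funext k; simp [res, h0]
        have hmem : ω ∈ res 0 ⁻¹' C := by rw [Set.mem_preimage, hres]; exact hxC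
        rw [Set.indicator_of_mem hmem, h0]
      rw [lintegral_congr_ae this, lintegral_const]
      simp [harm]
    · have hsetae : (res 0 ⁻¹' C ∩ ioSet B : Set (ℕ → E)) =ᵐ[ν x] (∅ : Set (ℕ → E)) := by
        filter_upwards [ae_zero_eq ν hν0 hΔ x] with ω h0
        have hres : res 0 ω = fun _ : ℕ => x := by
          funext k; simp [res, h0]
        show (ω ∈ res 0 ⁻¹' C ∩ ioSet B) = (ω ∈ (∅ : Set (ℕ → E)))
        simp only [Set.mem_inter_iff, Set.mem_preimage, hres, eq_iff_iff, Set.mem_empty_iff_false,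
          iff_false]
        intro hcon
        exact hxC hcon.1
      rw [measure_congr hsetae, ← lintegral_indicator ((measurable_res 0) hC)]
      have : ∀ᵐ ω ∂(ν x),
          (res 0 ⁻¹' C).indicator (fun ω' => harm ν B (ω' 0)) ω = 0 := by
        filter_upwards [ae_zero_eq ν hν0 hΔ x] with ω h0
        have hres : res 0 ω = fun _ : ℕ => x := by
          funext k; simp [res, h0]
        have hnot : ω ∉ res 0 ⁻¹' C := by
          intro hcon
          exact hxC (by rwa [Set.mem_preimage, hres] at hcon)
        rw [Set.indicator_of_notMem hnot]
      rw [lintegral_congr_ae this]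
      simp
  | succ n ih =>
    intro x C hC
    set Cx : Set (ℕ → E) := cons' x ⁻¹' C with hCx
    have hCxmeas : MeasurableSet Cx := (measurable_cons' x) hC
    have hkey : ∀ ω : ℕ → E, ω 0 = x →
        (ω ∈ res (n+1) ⁻¹' C ↔ shift ω ∈ res n ⁻¹' Cx) := by
      intro ω h0
      simp only [Set.mem_preimage, hCx]
      rw [res_succ_eq x ω h0 n]
    -- LHS
    have hL : ν x (res (n+1) ⁻¹' C ∩ ioSet B)
        = ∫⁻ z, ν z (res n ⁻¹' Cx ∩ ioSet B) ∂(P x) := by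
      have hae : (res (n+1) ⁻¹' C ∩ ioSet B : Set (ℕ → E))
          =ᵐ[ν x] (shift ⁻¹' (res n ⁻¹' Cx ∩ ioSet B) : Set (ℕ → E)) := by
        filter_upwards [ae_zero_eq ν hν0 hΔ x] with ω h0
        have h1 := hkey ω h0
        have h2 : shift ω ∈ ioSet B ↔ ω ∈ ioSet B := by
          rw [← Set.mem_preimage, shift_preimage_ioSet]
        show (ω ∈ res (n+1) ⁻¹' C ∩ ioSet B) = (ω ∈ shift ⁻¹' (res n ⁻¹' Cx ∩ ioSet B))
        simp only [Set.mem_inter_iff, Set.mem_preimage, eq_iff_iff]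
        rw [h2]
        tauto
      rw [measure_congr hae,
        ← Measure.map_apply measurable_shift (((measurable_res n) hCxmeas).inter hio),
        map_shift P ν hνM x,
        Measure.bind_apply (((measurable_res n) hCxmeas).inter hio) ν.measurable.aemeasurable]
    -- RHS
    have hFmeas : Measurable ((res n ⁻¹' Cx).indicator (fun ω' => harm ν B (ω' n))) :=
      (hharm.comp (measurable_pi_apply n)).indicator ((measurable_res n) hCxmeas)
    have hR : ∫⁻ ω in res (n+1) ⁻¹' C, harm ν B (ω (n+1)) ∂(ν x)
        = ∫⁻ z, ∫⁻ ω in res n ⁻¹' Cx, harm ν B (ω n) ∂(ν z) ∂(P x) := by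
      rw [← lintegral_indicator ((measurable_res (n+1)) hC)]
      have hae : ∀ᵐ ω ∂(ν x),
          (res (n+1) ⁻¹' C).indicator (fun ω' => harm ν B (ω' (n+1))) ω
            = (res n ⁻¹' Cx).indicator (fun ω' => harm ν B (ω' n)) (shift ω) := by
        filter_upwards [ae_zero_eq ν hν0 hΔ x] with ω h0
        have h1 := hkey ω h0
        by_cases hmem : ω ∈ res (n+1) ⁻¹' C
        · rw [Set.indicator_of_mem hmem, Set.indicator_of_mem (h1.1 hmem)]
          rfl
        · rw [Set.indicator_of_notMem hmem,
            Set.indicator_of_notMem (fun hc => hmem (h1.2 hc))]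
      rw [lintegral_congr_ae hae]
      have : ∫⁻ ω, (res n ⁻¹' Cx).indicator (fun ω' => harm ν B (ω' n)) (shift ω) ∂(ν x)
          = ∫⁻ ω', (res n ⁻¹' Cx).indicator (fun ω'' => harm ν B (ω'' n)) ω'
              ∂((ν x).map shift) := by
        rw [lintegral_map hFmeas measurable_shift]
      rw [this, map_shift P ν hνM x, Measure.lintegral_bind ν.measurable.aemeasurable hFmeas.aemeasurable]
      congr 1
      funext z
      rw [lintegral_indicator ((measurable_res n) hCxmeas)]
    rw [hL, hR]
    congr 1
    funext z
    exact ih z Cx hCxmeas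

end MarkovProp

section Filtr

variable {E : Type*} [MeasurableSpace E]

/-- The natural filtration on path space by the first `n+1` coordinates. -/
noncomputable def pathFiltration (E : Type*) [MeasurableSpace E] :
    Filtration ℕ (inferInstance : MeasurableSpace (ℕ → E)) where
  seq n := MeasurableSpace.comap (res n) inferInstance
  mono' := by
    intro n m hnm
    have h : (res n : (ℕ → E) → (ℕ → E)) = res n ∘ res m := (res_comp_res hnm).symm
    show MeasurableSpace.comap (res n) inferInstance
      ≤ MeasurableSpace.comap (res m) inferInstance
    conv_lhs => rw [h, ← MeasurableSpace.comap_comp]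
    exact MeasurableSpace.comap_mono ((measurable_res n).comap_le)
  le' n := (measurable_res n).comap_le

lemma iSup_pathFiltration :
    (⨆ n, (pathFiltration E) n) = (inferInstance : MeasurableSpace (ℕ → E)) := by
  apply le_antisymm
  · exact iSup_le fun n => (pathFiltration E).le n
  · have hpi : (inferInstance : MeasurableSpace (ℕ → E)) =
        ⨆ k : ℕ, MeasurableSpace.comap (fun ω : ℕ → E => ω k) inferInstance := rfl
    refine le_trans (le_of_eq hpi) (iSup_le fun k => ?_)
    have h : (fun ω : ℕ → E => ω k) = (fun ω : ℕ → E => ω k) ∘ res k := by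
      funext ω
      simp [res]
    rw [h, ← MeasurableSpace.comap_comp]
    exact le_trans (MeasurableSpace.comap_mono ((measurable_pi_apply k).comap_le))
      (le_iSup (fun n => (pathFiltration E) n) k)

variable (ν : Kernel E (ℕ → E)) [IsMarkovKernel ν] (B : Set E)

/-- The conditional expectation of `1_{ioSet B}` w.r.t. the first `n+1` coordinates is
`harm (ω n)`, given the Markov-property integral identity. -/
lemma condexp_eq (Q : Measure (ℕ → E)) [IsProbabilityMeasure Q] (hB : MeasurableSet B) (n : ℕ)
    (hMP : ∀ C : Set (ℕ → E), MeasurableSet C →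
      Q (res n ⁻¹' C ∩ ioSet B) = ∫⁻ ω in res n ⁻¹' C, harm ν B (ω n) ∂Q) :
    (fun ω => (harm ν B (ω n)).toReal)
      =ᵐ[Q] Q[(ioSet B).indicator (fun _ => (1 : ℝ)) | (pathFiltration E) n] := by
  have hio : MeasurableSet (ioSet B) := measurableSet_ioSet hB
  have hharm : Measurable (harm ν B) := measurable_harm ν B hB
  have hgmeas : Measurable (fun ω : ℕ → E => (harm ν B (ω n)).toReal) :=
    ENNReal.measurable_toReal.comp (hharm.comp (measurable_pi_apply n))
  have hgint : Integrable (fun ω : ℕ → E => (harm ν B (ω n)).toReal) Q := by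
    refine Integrable.mono' (integrable_const (1 : ℝ)) hgmeas.aestronglyMeasurable
      (ae_of_all _ fun ω => ?_)
    rw [Real.norm_eq_abs, abs_of_nonneg ENNReal.toReal_nonneg]
    have := ENNReal.toReal_mono one_ne_top (harm_le_one ν B (ω n))
    simpa using this
  refine ae_eq_condExp_of_forall_setIntegral_eq ((pathFiltration E).le n)
    ((integrable_const (1 : ℝ)).indicator hio) (fun s _ _ => hgint.integrableOn)
    (fun s hs _ => ?_) ?_
  · -- the set-integral identity
    obtain ⟨C, hC, rfl⟩ := hs
    have hsm : MeasurableSet (res n ⁻¹' C) := (measurable_res n) hC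
    have h1 : ∫ ω in res n ⁻¹' C, (ioSet B).indicator (fun _ => (1 : ℝ)) ω ∂Q
        = (Q (res n ⁻¹' C ∩ ioSet B)).toReal := by
      rw [setIntegral_indicator hio, setIntegral_const]
      simp [Measure.real]
    have h2 : ∫ ω in res n ⁻¹' C, (harm ν B (ω n)).toReal ∂Q
        = (∫⁻ ω in res n ⁻¹' C, harm ν B (ω n) ∂Q).toReal := by
      refine integral_toReal ((hharm.comp (measurable_pi_apply n)).aemeasurable)
        (ae_of_all _ fun ω => lt_of_le_of_lt (harm_le_one ν B (ω n)) one_lt_top)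
    rw [h1, h2, hMP C hC]
  · exact StronglyMeasurable.aestronglyMeasurable
      (Measurable.stronglyMeasurable
        ((ENNReal.measurable_toReal.comp hharm).comp
          (by
            have : (fun ω : ℕ → E => ω n) = (fun ω : ℕ → E => ω n) ∘ res n := by
              funext ω; simp [res]
            rw [this]
            exact (measurable_pi_apply n).comp (comap_measurable (res n)))))

end Filtr

section Endgame

variable {E : Type*} [MeasurableSpace E]

lemma isMarkovKernel_nStep (P : Kernel E E) [IsMarkovKernel P] (n : ℕ) :
    IsMarkovKernel (nStep P n) := by
  induction n with
  | zero => rw [show nStep P 0 = Kernel.id from rfl]; infer_instance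
  | succ n ih =>
    haveI := ih
    rw [show nStep P (n + 1) = (nStep P n) ∘ₖ P from rfl]
    infer_instance

theorem recurrence_lemma_everywhere'
    [MeasurableSpace.CountablyGenerated E]
    (hΔ : MeasurableSet {p : E × E | p.1 = p.2})
    (P : ProbabilityTheory.Kernel E E) [IsMarkovKernel P]
    (μ : Measure E) [IsProbabilityMeasure μ]
    (hinv : ∀ A : Set E, MeasurableSet A → μ A = ∫⁻ x, P x A ∂μ)
    (hreg : ∀ x y : E, ∃ n : ℕ,
      nStep P n x ≪ nStep P n y ∧ nStep P n y ≪ nStep P n x)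
    (ν : ProbabilityTheory.Kernel E (ℕ → E)) [IsMarkovKernel ν]
    (hν0 : ∀ x : E, (ν x).map (fun ω => ω 0) = Measure.dirac x)
    (hνM : ∀ x : E, (ν x).map (fun ω k => ω (k + 1)) = (P x).bind (fun y => ν y))
    (B : Set E) (hB : MeasurableSet B) (hBpos : 0 < μ B) :
    ∀ x : E, ν x {ω : ℕ → E | ∀ N : ℕ, ∃ n ≥ N, ω n ∈ B} = 1 := by
  classical
  have hio : MeasurableSet (ioSet B) := measurableSet_ioSet hB
  have hharm : Measurable (harm ν B) := measurable_harm ν B hB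
  set Q : Measure (ℕ → E) := μ.bind (fun x => ν x) with hQ
  haveI : IsProbabilityMeasure Q := isProbabilityMeasure_bind_kernel ν μ
  -- Markov property under Q
  have hQMP : ∀ (n : ℕ) (C : Set (ℕ → E)), MeasurableSet C →
      Q (res n ⁻¹' C ∩ ioSet B) = ∫⁻ ω in res n ⁻¹' C, harm ν B (ω n) ∂Q := by
    intro n C hC
    have hsm : MeasurableSet (res n ⁻¹' C) := (measurable_res n) hC
    have hFmeas : Measurable ((res n ⁻¹' C).indicator (fun ω : ℕ → E => harm ν B (ω n))) :=
      (hharm.comp (measurable_pi_apply n)).indicator hsm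
    rw [hQ, Measure.bind_apply (hsm.inter hio) ν.measurable.aemeasurable,
      ← lintegral_indicator hsm, Measure.lintegral_bind ν.measurable.aemeasurable hFmeas.aemeasurable]
    apply lintegral_congr
    intro x
    rw [lintegral_indicator hsm]
    exact markov_property P ν hν0 hνM hΔ B hB n x C hC
  -- Lévy's upward theorem
  have hgAint : Integrable ((ioSet B).indicator (fun _ => (1 : ℝ))) Q :=
    (integrable_const (1 : ℝ)).indicator hio
  have hgAmeas : StronglyMeasurable[⨆ n, (pathFiltration E) n]
      ((ioSet B).indicator (fun _ => (1 : ℝ))) := by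
    rw [iSup_pathFiltration]
    exact (measurable_const.indicator hio).stronglyMeasurable
  have hlevy := hgAint.tendsto_ae_condExp hgAmeas
  have hce : ∀ᵐ ω ∂Q, ∀ n : ℕ, (harm ν B (ω n)).toReal
      = (Q[(ioSet B).indicator (fun _ => (1 : ℝ)) | (pathFiltration E) n]) ω := by
    rw [ae_all_iff]
    intro n
    exact condexp_eq ν B Q hB n (hQMP n)
  have hconv : ∀ᵐ ω ∂Q, Tendsto (fun n => (harm ν B (ω n)).toReal) atTop
      (𝓝 ((ioSet B).indicator (fun _ => (1 : ℝ)) ω)) := by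
    filter_upwards [hlevy, hce] with ω h1 h2
    exact h1.congr fun n => (h2 n).symm
  -- law of ω k under Q is μ
  have hlaw : ∀ (W : Set E) (_ : MeasurableSet W) (k : ℕ), Q {ω : ℕ → E | ω k ∈ W} = μ W := by
    intro W hW k
    have : Q {ω : ℕ → E | ω k ∈ W} = (Q.map (fun ω : ℕ → E => ω k)) W := by
      rw [Measure.map_apply (measurable_pi_apply k) hW]
      rfl
    rw [this, hQ, Q_map_eval P ν μ hν0 hνM hinv k]
  -- (I) positivity : μ B ≤ Q (ioSet B)
  have hpos : μ B ≤ Q (ioSet B) := by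
    have hesc : ∀ᵐ ω ∂Q, ω ∈ (ioSet B)ᶜ → ∀ᶠ n in atTop, ω n ∉ B := by
      refine ae_of_all _ fun ω hω => ?_
      simp only [Set.mem_compl_iff, ioSet, Set.mem_setOf_eq, not_forall] at hω
      obtain ⟨N, hN⟩ := hω
      rw [eventually_atTop]
      refine ⟨N, fun n hn hnB => ?_⟩
      exact hN ⟨n, hn, hnB⟩
    have htend := tendsto_visit_zero Q B hB (ioSet B)ᶜ hio.compl hesc
    have hbound : ∀ k : ℕ, μ B ≤ Q (ioSet B) + Q ({ω : ℕ → E | ω k ∈ B} ∩ (ioSet B)ᶜ) := by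
      intro k
      rw [← hlaw B hB k]
      calc Q {ω : ℕ → E | ω k ∈ B}
          = Q (({ω : ℕ → E | ω k ∈ B} ∩ ioSet B)
            ∪ ({ω : ℕ → E | ω k ∈ B} ∩ (ioSet B)ᶜ)) := by rw [Set.inter_union_compl]
        _ ≤ Q ({ω : ℕ → E | ω k ∈ B} ∩ ioSet B)
            + Q ({ω : ℕ → E | ω k ∈ B} ∩ (ioSet B)ᶜ) := measure_union_le _ _
        _ ≤ Q (ioSet B) + Q ({ω : ℕ → E | ω k ∈ B} ∩ (ioSet B)ᶜ) :=
            add_le_add_left (measure_mono Set.inter_subset_right) _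
    have hlim : Tendsto (fun k => Q (ioSet B) + Q ({ω : ℕ → E | ω k ∈ B} ∩ (ioSet B)ᶜ))
        atTop (𝓝 (Q (ioSet B) + 0)) := Tendsto.add tendsto_const_nhds htend
    have := ge_of_tendsto hlim (Eventually.of_forall hbound)
    simpa using this
  -- (II) the band argument : harm takes values in {0,1} μ-a.e.
  have hband : ∀ ε : ℝ, 0 < ε →
      μ {z : E | ε ≤ (harm ν B z).toReal ∧ (harm ν B z).toReal ≤ 1 - ε} = 0 := by
    intro ε hε
    set I : Set E := {z : E | ε ≤ (harm ν B z).toReal ∧ (harm ν B z).toReal ≤ 1 - ε} with hI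
    have hImeas : MeasurableSet I := by
      apply MeasurableSet.inter
      · exact measurableSet_le measurable_const (ENNReal.measurable_toReal.comp hharm)
      · exact measurableSet_le (ENNReal.measurable_toReal.comp hharm) measurable_const
    have hesc : ∀ᵐ ω ∂Q, ω ∈ (Set.univ : Set (ℕ → E)) → ∀ᶠ n in atTop, ω n ∉ I := by
      filter_upwards [hconv] with ω hω _
      by_cases hA : ω ∈ ioSet B
      · have h1 : (ioSet B).indicator (fun _ => (1 : ℝ)) ω = 1 := Set.indicator_of_mem hA _
        rw [h1] at hω
        have : ∀ᶠ n in atTop, 1 - ε < (harm ν B (ω n)).toReal :=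
          hω.eventually (eventually_gt_nhds (by linarith))
        filter_upwards [this] with n hn hmem
        exact absurd hmem.2 (not_le.2 hn)
      · have h1 : (ioSet B).indicator (fun _ => (1 : ℝ)) ω = 0 := Set.indicator_of_notMem hA _
        rw [h1] at hω
        have : ∀ᶠ n in atTop, (harm ν B (ω n)).toReal < ε :=
          hω.eventually (eventually_lt_nhds hε)
        filter_upwards [this] with n hn hmem
        exact absurd hmem.1 (not_le.2 hn)
    have htend := tendsto_visit_zero Q I hImeas Set.univ MeasurableSet.univ hesc
    have hconst : ∀ k : ℕ, Q ({ω : ℕ → E | ω k ∈ I} ∩ Set.univ) = μ I := by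
      intro k
      rw [Set.inter_univ]
      exact hlaw I hImeas k
    have : Tendsto (fun _ : ℕ => μ I) atTop (𝓝 0) := by
      refine htend.congr fun k => hconst k
    exact tendsto_nhds_unique tendsto_const_nhds this
  -- harm ∈ {0,1} μ-a.e.
  have hJ : μ {z : E | harm ν B z ≠ 0 ∧ harm ν B z ≠ 1} = 0 := by
    have hsub : {z : E | harm ν B z ≠ 0 ∧ harm ν B z ≠ 1}
        ⊆ ⋃ m : ℕ, {z : E | 1 / (m + 1 : ℝ) ≤ (harm ν B z).toReal
            ∧ (harm ν B z).toReal ≤ 1 - 1 / (m + 1 : ℝ)} := by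
      intro z hz
      have hne_top : harm ν B z ≠ ∞ :=
        ne_of_lt (lt_of_le_of_lt (harm_le_one ν B z) one_lt_top)
      have ht0 : 0 < (harm ν B z).toReal := ENNReal.toReal_pos hz.1 hne_top
      have ht1 : (harm ν B z).toReal < 1 := by
        have hlt : harm ν B z < 1 := lt_of_le_of_ne (harm_le_one ν B z) hz.2
        have := ENNReal.toReal_lt_toReal hne_top one_ne_top |>.2 hlt
        simpa using this
      obtain ⟨m, hm⟩ := exists_nat_one_div_lt
        (show (0 : ℝ) < min (harm ν B z).toReal (1 - (harm ν B z).toReal) by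
          apply lt_min ht0; linarith)
      refine Set.mem_iUnion.2 ⟨m, ?_, ?_⟩
      · exact le_of_lt (lt_of_lt_of_le hm (min_le_left _ _))
      · have := lt_of_lt_of_le hm (min_le_right _ _)
        linarith
    refine measure_mono_null hsub (measure_iUnion_null fun m => hband _ ?_)
    positivity
  -- Q(ioSet B) = ∫ harm dμ, so ∫ harm dμ > 0
  have hQio : Q (ioSet B) = ∫⁻ z, harm ν B z ∂μ := by
    rw [hQ, Measure.bind_apply hio ν.measurable.aemeasurable]
    rfl
  have hint_pos : 0 < ∫⁻ z, harm ν B z ∂μ := by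
    rw [← hQio]
    exact lt_of_lt_of_le hBpos hpos
  -- dichotomy : μ {harm = 0} = 0
  have hzero : μ {z : E | harm ν B z = 0} = 0 := by
    by_contra h0
    obtain ⟨y0, hy0⟩ : ∃ y0 : E, harm ν B y0 = 0 :=
      MeasureTheory.nonempty_of_measure_ne_zero h0
    have hone : μ {z : E | harm ν B z = 1} ≠ 0 := by
      intro h1
      have hae0 : ∀ᵐ z ∂μ, harm ν B z = 0 := by
        have hnm1 : ∀ᵐ z ∂μ, z ∉ {z : E | harm ν B z = 1} :=
          measure_eq_zero_iff_ae_notMem.1 h1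
        have hnmJ : ∀ᵐ z ∂μ, z ∉ {z : E | harm ν B z ≠ 0 ∧ harm ν B z ≠ 1} :=
          measure_eq_zero_iff_ae_notMem.1 hJ
        filter_upwards [hnm1, hnmJ] with z h1' hJ'
        by_contra hne
        exact hJ' ⟨hne, fun hc => h1' hc⟩
      have : ∫⁻ z, harm ν B z ∂μ = 0 := by
        rw [lintegral_congr_ae (hae0.mono fun z hz => hz)]
        simp
      rw [this] at hint_pos
      exact lt_irrefl _ hint_pos
    obtain ⟨y1, hy1⟩ : ∃ y1 : E, harm ν B y1 = 1 :=
      MeasureTheory.nonempty_of_measure_ne_zero hone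
    obtain ⟨n, hac01, hac10⟩ := hreg y0 y1
    haveI := isMarkovKernel_nStep P n
    -- harm = 0 a.e. w.r.t. nStep P n y0
    have h0ae : ∀ᵐ z ∂(nStep P n y0), harm ν B z = 0 := by
      have : ∫⁻ z, harm ν B z ∂(nStep P n y0) = 0 :=
        (harm_harmonic ν B P hνM hB n y0).symm.trans hy0
      have h := (lintegral_eq_zero_iff hharm).1 this
      filter_upwards [h] with z hz using hz
    -- harm = 1 a.e. w.r.t. nStep P n y1
    have h1ae : ∀ᵐ z ∂(nStep P n y1), harm ν B z = 1 := by
      have hint1 : ∫⁻ z, harm ν B z ∂(nStep P n y1) = 1 :=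
        (harm_harmonic ν B P hνM hB n y1).symm.trans hy1
      have hsub' : ∫⁻ z, (1 - harm ν B z) ∂(nStep P n y1) = 0 := by
        rw [lintegral_sub hharm (by rw [hint1]; exact one_ne_top)
          (ae_of_all _ fun z => harm_le_one ν B z), hint1, lintegral_one, measure_univ]
        simp
      have h := (lintegral_eq_zero_iff (measurable_const.sub hharm)).1 hsub'
      filter_upwards [h] with z hz
      have h1le : (1 : ℝ≥0∞) ≤ harm ν B z := by
        have : (1 : ℝ≥0∞) - harm ν B z = 0 := hz
        exact tsub_eq_zero_iff_le.1 this
      exact le_antisymm (harm_le_one ν B z) h1le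
    have hN1 : nStep P n y1 {z : E | ¬ harm ν B z = 1} = 0 := by
      rw [← ae_iff.symm] at h1ae
      exact ae_iff.1 h1ae
    have hN0 : nStep P n y0 {z : E | ¬ harm ν B z = 1} = 0 := hac01 hN1
    have hN0' : nStep P n y0 {z : E | ¬ harm ν B z = 0} = 0 := ae_iff.1 h0ae
    have huniv : (Set.univ : Set E)
        ⊆ {z : E | ¬ harm ν B z = 0} ∪ {z : E | ¬ harm ν B z = 1} := by
      intro z _
      by_cases h : harm ν B z = 0
      · right; simp [h]
      · left; exact h
    have : (1 : ℝ≥0∞) ≤ 0 := by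
      calc (1 : ℝ≥0∞) = nStep P n y0 Set.univ := measure_univ.symm
        _ ≤ nStep P n y0 ({z : E | ¬ harm ν B z = 0} ∪ {z : E | ¬ harm ν B z = 1}) :=
            measure_mono huniv
        _ ≤ nStep P n y0 {z : E | ¬ harm ν B z = 0}
            + nStep P n y0 {z : E | ¬ harm ν B z = 1} := measure_union_le _ _
        _ = 0 := by rw [hN0, hN0']; simp
    simp at this
  -- hence harm = 1 μ-a.e.
  have hZmeas : MeasurableSet {z : E | harm ν B z ≠ 1} :=
    (hharm (measurableSet_singleton 1)).compl
  have hZnull : μ {z : E | harm ν B z ≠ 1} = 0 := by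
    have hsub : {z : E | harm ν B z ≠ 1}
        ⊆ {z : E | harm ν B z = 0} ∪ {z : E | harm ν B z ≠ 0 ∧ harm ν B z ≠ 1} := by
      intro z hz
      by_cases h : harm ν B z = 0
      · exact Or.inl h
      · exact Or.inr ⟨h, hz⟩
    refine measure_mono_null hsub ?_
    refine measure_union_null hzero hJ
  -- bootstrap to every point
  have hZn : ∀ n : ℕ, ∀ᵐ y ∂μ, nStep P n y {z : E | harm ν B z ≠ 1} = 0 := by
    intro n
    have hint0 : ∫⁻ y, nStep P n y {z : E | harm ν B z ≠ 1} ∂μ = 0 := by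
      rw [← Measure.bind_apply hZmeas (nStep P n).measurable.aemeasurable, bind_nStep_eq P hinv n]
      exact hZnull
    have h := (lintegral_eq_zero_iff ((nStep P n).measurable_coe hZmeas)).1 hint0
    filter_upwards [h] with y hy using hy
  haveI : (ae μ).NeBot := MeasureTheory.ae_neBot.2 (IsProbabilityMeasure.ne_zero μ)
  obtain ⟨y, hy⟩ := (ae_all_iff.2 hZn).exists
  intro x
  obtain ⟨n, hacxy, _⟩ := hreg x y
  haveI := isMarkovKernel_nStep P n
  have hZx : nStep P n x {z : E | harm ν B z ≠ 1} = 0 := hacxy (hy n)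
  have haex : ∀ᵐ z ∂(nStep P n x), harm ν B z = 1 := by
    rw [ae_iff]
    exact hZx
  show ν x (ioSet B) = 1
  have : harm ν B x = ∫⁻ z, harm ν B z ∂(nStep P n x) :=
    harm_harmonic ν B P hνM hB n x
  rw [show ν x (ioSet B) = harm ν B x from rfl, this,
    lintegral_congr_ae (haex.mono fun z hz => hz)]
  simp

end Endgame


end RecAux

/-- **The Recurrence Lemma (Lemma 2), everywhere version.** Here `ν x = ℙ_x` is the law on
path space of the Markov chain with transition kernel `P` started at `x`. If `μ` is
invariant and for every pair `x, y` some `P_n(x,·) ∼ P_n(y,·)`, then every set `B` with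
`μ(B) > 0` is visited infinitely often `ℙ_x`-a.s., for every `x`. -/
theorem recurrence_lemma_everywhere
    {E : Type*} [MeasurableSpace E] [MeasurableSpace.CountablyGenerated E]
    (hΔ : MeasurableSet {p : E × E | p.1 = p.2})
    (P : ProbabilityTheory.Kernel E E) [IsMarkovKernel P]
    (μ : Measure E) [IsProbabilityMeasure μ]
    (hinv : ∀ A : Set E, MeasurableSet A → μ A = ∫⁻ x, P x A ∂μ)
    (hreg : ∀ x y : E, ∃ n : ℕ,
      nStep P n x ≪ nStep P n y ∧ nStep P n y ≪ nStep P n x)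
    (ν : ProbabilityTheory.Kernel E (ℕ → E)) [IsMarkovKernel ν]
    (hν0 : ∀ x : E, (ν x).map (fun ω => ω 0) = Measure.dirac x)
    (hνM : ∀ x : E, (ν x).map (fun ω k => ω (k + 1)) = (P x).bind (fun y => ν y))
    (B : Set E) (hB : MeasurableSet B) (hBpos : 0 < μ B) :
    ∀ x : E, ν x {ω : ℕ → E | ∀ N : ℕ, ∃ n ≥ N, ω n ∈ B} = 1 := by
  exact RecAux.recurrence_lemma_everywhere' hΔ P μ hinv hreg ν hν0 hνM B hB hBpos
end

section
/- Let P be a Markov kernel on a measurable space (E, 𝓔) with an invariant probability measure μ, and let B ∈ 𝓔. Define ψ(x) = ℙ_x(X_n ∈ B for infinitely many n). Then ψ(x) ∈ {0, 1} for μ-almost all x ∈ E. -/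
open MeasureTheory ProbabilityTheory Filter ENNReal Set

private lemma ennreal_sq_identity (a b : ℝ≥0∞) (ha : a ≠ ∞) (hb : b ≠ ∞) :
    ((a - b)^2 + (b - a)^2) + 2 * b * a = a^2 + b^2 := by
  rcases le_total a b with h | h
  · obtain ⟨c, rfl⟩ : ∃ c, b = a + c := ⟨b - a, (add_tsub_cancel_of_le h).symm⟩
    rw [tsub_eq_zero_of_le h, ENNReal.add_sub_cancel_left ha]
    ring
  · obtain ⟨c, rfl⟩ : ∃ c, a = b + c := ⟨a - b, (add_tsub_cancel_of_le h).symm⟩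
    rw [tsub_eq_zero_of_le h, ENNReal.add_sub_cancel_left hb]
    ring

private lemma ennreal_eq_of_sq_zero {a b : ℝ≥0∞}
    (h : (a - b)^2 + (b - a)^2 = 0) : a = b := by
  rw [add_eq_zero, pow_eq_zero_iff two_ne_zero, pow_eq_zero_iff two_ne_zero,
    tsub_eq_zero_iff_le, tsub_eq_zero_iff_le] at h
  exact le_antisymm h.1 h.2

private lemma exists_absorbing_full {E : Type*} [MeasurableSpace E]
    (P : ProbabilityTheory.Kernel E E)
    (μ : Measure E)
    (hinv : ∀ A : Set E, MeasurableSet A → μ A = ∫⁻ x, P x A ∂μ)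
    (G : Set E) (hGm : MeasurableSet G) (hG : μ Gᶜ = 0) :
    ∃ F : Set E, MeasurableSet F ∧ μ Fᶜ = 0 ∧ F ⊆ G ∧ ∀ x ∈ F, P x Fᶜ = 0 := by
  let F : ℕ → Set E := fun n => Nat.rec G (fun _ Fn => Fn ∩ {x | P x Fnᶜ = 0}) n
  have hFsucc : ∀ n, F (n+1) = F n ∩ {x | P x (F n)ᶜ = 0} := fun n => rfl
  have hFm : ∀ n, MeasurableSet (F n) := by
    intro n; induction n with
    | zero => exact hGm
    | succ n ih =>
      exact ih.inter ((Kernel.measurable_coe P ih.compl) (measurableSet_singleton 0))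
  have hFnull : ∀ n, μ (F n)ᶜ = 0 := by
    intro n; induction n with
    | zero => exact hG
    | succ n ih =>
      rw [hFsucc, Set.compl_inter]
      refine measure_union_null ih ?_
      have hmeas : Measurable fun x => P x (F n)ᶜ := Kernel.measurable_coe P (hFm n).compl
      have hz : ∫⁻ x, P x (F n)ᶜ ∂μ = 0 := (hinv _ (hFm n).compl).symm.trans ih
      have hae : ∀ᵐ x ∂μ, P x (F n)ᶜ = 0 := by
        filter_upwards [(lintegral_eq_zero_iff hmeas).mp hz] with x hx using hx
      simpa [ae_iff, Set.compl_setOf] using hae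
  refine ⟨⋂ n, F n, MeasurableSet.iInter hFm, ?_, iInter_subset F 0, ?_⟩
  · rw [Set.compl_iInter]
    exact measure_iUnion_null fun n => hFnull n
  · intro x hx
    rw [Set.compl_iInter]
    refine measure_iUnion_null fun n => ?_
    have hx' := (Set.mem_iInter.mp hx) (n+1)
    rw [hFsucc] at hx'
    exact hx'.2

set_option maxHeartbeats 2000000 in
/-- If `μ` is an invariant probability measure for `P`, then
`ψ(x) = ℙ_x(X_n ∈ B infinitely often) ∈ {0, 1}` for `μ`-a.a. `x`. Here `ν x = ℙ_x` is
the law on path space of the chain started at `x`. -/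
theorem psi_zero_one_ae
    {E : Type*} [MeasurableSpace E]
    (P : ProbabilityTheory.Kernel E E) [IsMarkovKernel P]
    (μ : Measure E) [IsProbabilityMeasure μ]
    (hinv : ∀ A : Set E, MeasurableSet A → μ A = ∫⁻ x, P x A ∂μ)
    (ν : ProbabilityTheory.Kernel E (ℕ → E)) [IsMarkovKernel ν]
    (hν0 : ∀ x : E, (ν x).map (fun ω => ω 0) = Measure.dirac x)
    (hνM : ∀ x : E, (ν x).map (fun ω k => ω (k + 1)) = (P x).bind (fun y => ν y))
    (B : Set E) (hB : MeasurableSet B) :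
    ∀ᵐ x ∂μ, ν x {ω : ℕ → E | ∀ N : ℕ, ∃ n ≥ N, ω n ∈ B} = 0 ∨
      ν x {ω : ℕ → E | ∀ N : ℕ, ∃ n ≥ N, ω n ∈ B} = 1 := by
  -- the shift map
  set θ : (ℕ → E) → (ℕ → E) := fun ω k => ω (k + 1) with hθdef
  have hθm : Measurable θ := measurable_pi_lambda _ fun k => measurable_pi_apply _
  -- measure of a shifted set
  have mapθ : ∀ (x : E) (S : Set (ℕ → E)), MeasurableSet S →
      ν x (θ ⁻¹' S) = ∫⁻ y, ν y S ∂(P x) := by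
    intro x S hS
    rw [← Measure.map_apply hθm hS, hνM x, Measure.bind_apply hS (Kernel.measurable ν).aemeasurable]
  -- the sets A_N and A
  set Ai : ℕ → Set (ℕ → E) := fun N => {ω | ∃ n ≥ N, ω n ∈ B} with hAidef
  have hAim : ∀ N, MeasurableSet (Ai N) := by
    intro N
    have : Ai N = ⋃ n, ⋃ _ : n ≥ N, (fun ω : ℕ → E => ω n) ⁻¹' B := by
      ext ω; simp [hAidef]
    rw [this]
    exact MeasurableSet.iUnion fun n => MeasurableSet.iUnion fun _ =>
      (measurable_pi_apply n) hB
  set A : Set (ℕ → E) := {ω | ∀ N : ℕ, ∃ n ≥ N, ω n ∈ B} with hAdef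
  have hAinter : A = ⋂ N, Ai N := by ext ω; simp [hAdef, hAidef]
  have hAm : MeasurableSet A := by
    rw [hAinter]; exact MeasurableSet.iInter fun N => hAim N
  -- shift relations
  have hshiftAi : ∀ N, θ ⁻¹' (Ai N) = Ai (N + 1) := by
    intro N
    ext ω
    simp only [hAidef, mem_preimage, mem_setOf_eq, hθdef]
    constructor
    · rintro ⟨n, hn, hB'⟩; exact ⟨n + 1, by omega, hB'⟩
    · rintro ⟨n, hn, hB'⟩
      obtain ⟨m, rfl⟩ : ∃ m, n = m + 1 := ⟨n - 1, by omega⟩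
      exact ⟨m, by omega, hB'⟩
  have hshiftA : θ ⁻¹' A = A := by
    ext ω
    simp only [hAdef, mem_preimage, mem_setOf_eq, hθdef]
    constructor
    · intro hω N
      obtain ⟨n, hn, hB'⟩ := hω N
      exact ⟨n + 1, by omega, hB'⟩
    · intro hω N
      obtain ⟨n, hn, hB'⟩ := hω (N + 1)
      obtain ⟨m, rfl⟩ : ∃ m, n = m + 1 := ⟨n - 1, by omega⟩
      exact ⟨m, by omega, hB'⟩
  -- the functions
  set ψ : E → ℝ≥0∞ := fun x => ν x A with hψdef
  set ψi : ℕ → E → ℝ≥0∞ := fun N x => ν x (Ai N) with hψidef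
  have hψm : Measurable ψ := Kernel.measurable_coe ν hAm
  have hψim : ∀ N, Measurable (ψi N) := fun N => Kernel.measurable_coe ν (hAim N)
  have hψle1 : ∀ x, ψ x ≤ 1 := fun x => prob_le_one
  have hψile1 : ∀ N x, ψi N x ≤ 1 := fun N x => prob_le_one
  -- harmonicity
  have hψharm : ∀ x, ψ x = ∫⁻ y, ψ y ∂(P x) := by
    intro x
    have := mapθ x A hAm
    rw [hshiftA] at this
    exact this
  have hψirec : ∀ N x, ψi (N + 1) x = ∫⁻ y, ψi N y ∂(P x) := by
    intro N x
    have := mapθ x (Ai N) (hAim N)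
    rw [hshiftAi] at this
    exact this
  -- invariance for lintegrals
  have hbind : μ.bind (fun x => P x) = μ := by
    ext S hS
    rw [Measure.bind_apply hS (Kernel.measurable P).aemeasurable]
    exact (hinv S hS).symm
  have hinvf : ∀ f : E → ℝ≥0∞, Measurable f →
      ∫⁻ x, ∫⁻ y, f y ∂(P x) ∂μ = ∫⁻ x, f x ∂μ := by
    intro f hf
    conv_rhs => rw [← hbind]
    rw [Measure.lintegral_bind (Kernel.measurable P).aemeasurable hf.aemeasurable]
  -- all ψi have the same integral
  have hint_ψi : ∀ N, ∫⁻ x, ψi N x ∂μ = ∫⁻ x, ψi 0 x ∂μ := by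
    intro N
    induction N with
    | zero => rfl
    | succ N ih =>
      calc ∫⁻ x, ψi (N + 1) x ∂μ = ∫⁻ x, ∫⁻ y, ψi N y ∂(P x) ∂μ := by
            exact lintegral_congr fun x => hψirec N x
        _ = ∫⁻ x, ψi N x ∂μ := hinvf (ψi N) (hψim N)
        _ = ∫⁻ x, ψi 0 x ∂μ := ih
  -- ψ as infimum
  have hAi_anti : Antitone Ai := by
    intro N M hNM ω hω
    obtain ⟨n, hn, hB'⟩ := hω
    exact ⟨n, le_trans hNM hn, hB'⟩
  have hψiInf : ∀ x, ψ x = ⨅ N, ψi N x := by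
    intro x
    rw [hψdef, hAinter]
    exact Directed.measure_iInter (fun N => (hAim N).nullMeasurableSet)
      (hAi_anti.directed_ge) ⟨0, measure_ne_top _ _⟩
  have hintψ : ∫⁻ x, ψ x ∂μ = ∫⁻ x, ψi 0 x ∂μ := by
    have h1 : ∫⁻ x, ψ x ∂μ = ∫⁻ x, ⨅ N, ψi N x ∂μ :=
      lintegral_congr fun x => hψiInf x
    rw [h1, lintegral_iInf hψim
      (fun N M hNM x => measure_mono (hAi_anti hNM)) ?_]
    · calc ⨅ N, ∫⁻ x, ψi N x ∂μ = ⨅ N : ℕ, ∫⁻ x, ψi 0 x ∂μ := by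
            exact iInf_congr fun N => hint_ψi N
        _ = ∫⁻ x, ψi 0 x ∂μ := iInf_const
    · exact ne_top_of_le_ne_top one_ne_top
        (le_trans (lintegral_mono fun x => hψile1 0 x) (by simp))
  have hψleψi0 : ∀ x, ψ x ≤ ψi 0 x := fun x =>
    measure_mono (by rw [hAinter]; exact iInter_subset Ai 0)
  -- ψ = ψi 0 a.e.
  have haeψ : ∀ᵐ x ∂μ, ψi 0 x - ψ x = 0 := by
    have hsub : ∫⁻ x, (ψi 0 x - ψ x) ∂μ = 0 := by
      rw [lintegral_sub hψm
        (ne_top_of_le_ne_top one_ne_top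
          (le_trans (lintegral_mono fun x => hψle1 x) (by simp)))
        (Filter.Eventually.of_forall hψleψi0), hintψ, tsub_self]
    exact (lintegral_eq_zero_iff ((hψim 0).sub hψm)).mp hsub
  -- the defect function h
  set d : E → E → ℝ≥0∞ := fun x y => (ψ y - ψ x)^2 + (ψ x - ψ y)^2 with hddef
  have hdm : Measurable (fun p : E × E => d p.1 p.2) :=
    (((hψm.comp measurable_snd).sub (hψm.comp measurable_fst)).pow_const 2).add
      (((hψm.comp measurable_fst).sub (hψm.comp measurable_snd)).pow_const 2)
  set h : E → ℝ≥0∞ := fun x => ∫⁻ y, d x y ∂(P x) with hhdef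
  have hhm : Measurable h := Measurable.lintegral_kernel_prod_right' hdm
  have hψfin : ∀ z, ψ z ≠ ∞ := fun z => ne_top_of_le_ne_top one_ne_top (hψle1 z)
  -- pointwise identity
  have hident : ∀ x, h x + 2 * ψ x * ψ x = (∫⁻ y, ψ y ^ 2 ∂(P x)) + ψ x ^ 2 := by
    intro x
    have hdxm : Measurable fun y => d x y := hdm.comp measurable_prodMk_left
    calc h x + 2 * ψ x * ψ x
        = (∫⁻ y, d x y ∂(P x)) + 2 * ψ x * ∫⁻ y, ψ y ∂(P x) := by rw [← hψharm x]
      _ = (∫⁻ y, d x y ∂(P x)) + ∫⁻ y, 2 * ψ x * ψ y ∂(P x) := by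
            rw [lintegral_const_mul _ hψm]
      _ = ∫⁻ y, (d x y + 2 * ψ x * ψ y) ∂(P x) := (lintegral_add_left hdxm _).symm
      _ = ∫⁻ y, (ψ y ^ 2 + ψ x ^ 2) ∂(P x) := by
            refine lintegral_congr fun y => ?_
            exact ennreal_sq_identity (ψ y) (ψ x) (hψfin y) (hψfin x)
      _ = (∫⁻ y, ψ y ^ 2 ∂(P x)) + ∫⁻ y, ψ x ^ 2 ∂(P x) :=
            lintegral_add_left (hψm.pow_const 2) _
      _ = (∫⁻ y, ψ y ^ 2 ∂(P x)) + ψ x ^ 2 := by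
            rw [lintegral_const, measure_univ, mul_one]
  -- integral of h is zero
  have hintd : ∫⁻ x, h x ∂μ = 0 := by
    have hsq_m : Measurable fun x => ψ x ^ 2 := hψm.pow_const 2
    have hsq_fin : ∫⁻ x, ψ x ^ 2 ∂μ ≠ ∞ := by
      refine ne_top_of_le_ne_top one_ne_top ?_
      calc ∫⁻ x, ψ x ^ 2 ∂μ ≤ ∫⁻ _, 1 ∂μ :=
            lintegral_mono fun x => pow_le_one' (hψle1 x) 2
        _ = 1 := by rw [lintegral_const, measure_univ, mul_one]
    have h1 : ∫⁻ x, (h x + 2 * ψ x * ψ x) ∂μ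
        = ∫⁻ x, ((∫⁻ y, ψ y ^ 2 ∂(P x)) + ψ x ^ 2) ∂μ :=
      lintegral_congr fun x => hident x
    have h2m : Measurable fun x => 2 * ψ x * ψ x :=
      ((measurable_const.mul hψm).mul hψm)
    rw [lintegral_add_right _ h2m, lintegral_add_right _ hsq_m, hinvf _ hsq_m] at h1
    have h2 : ∫⁻ x, 2 * ψ x * ψ x ∂μ = (∫⁻ x, ψ x ^ 2 ∂μ) + ∫⁻ x, ψ x ^ 2 ∂μ := by
      rw [← lintegral_add_left hsq_m]
      exact lintegral_congr fun x => by ring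
    rw [h2] at h1
    have hc : (∫⁻ x, ψ x ^ 2 ∂μ) + ∫⁻ x, ψ x ^ 2 ∂μ ≠ ∞ :=
      ENNReal.add_ne_top.mpr ⟨hsq_fin, hsq_fin⟩
    nth_rewrite 2 [← zero_add ((∫⁻ x, ψ x ^ 2 ∂μ) + ∫⁻ x, ψ x ^ 2 ∂μ)] at h1
    exact ENNReal.add_left_inj hc |>.mp h1
  have haeh : ∀ᵐ x ∂μ, h x = 0 := by
    filter_upwards [(lintegral_eq_zero_iff hhm).mp hintd] with x hx using hx
  -- the good set G and the absorbing full set F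
  set G : Set E := {x | ψi 0 x - ψ x = 0} ∩ {x | h x = 0} with hGdef
  have hGm : MeasurableSet G :=
    (((hψim 0).sub hψm) (measurableSet_singleton 0)).inter
      (hhm (measurableSet_singleton 0))
  have hGfull : μ Gᶜ = 0 := by
    rw [hGdef, Set.compl_inter]
    refine measure_union_null ?_ ?_
    · simpa [ae_iff, Set.compl_setOf] using haeψ
    · simpa [ae_iff, Set.compl_setOf] using haeh
  obtain ⟨F, hFm, hFnull, hFsub, hFabs⟩ := exists_absorbing_full P μ hinv G hGm hGfull
  -- properties of points of F
  have hxeq : ∀ x ∈ F, ψ x = ψi 0 x := by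
    intro x hx
    exact le_antisymm (hψleψi0 x) (tsub_eq_zero_iff_le.mp (hFsub hx).1) |>.symm ▸
      (le_antisymm (tsub_eq_zero_iff_le.mp (hFsub hx).1) (hψleψi0 x)).symm
  have hconst : ∀ x ∈ F, ∀ᵐ y ∂(P x), ψ y = ψ x := by
    intro x hx
    have h0 : ∫⁻ y, d x y ∂(P x) = 0 := (hFsub hx).2
    filter_upwards [(lintegral_eq_zero_iff (hdm.comp measurable_prodMk_left)).mp h0]
      with y hy
    exact ennreal_eq_of_sq_zero hy
  have hFae : ∀ x ∈ F, ∀ᵐ y ∂(P x), y ∈ F := by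
    intro x hx
    rw [ae_iff]
    simpa [Set.compl_def] using hFabs x hx
  -- the marginal hitting probabilities
  set q : ℕ → E → ℝ≥0∞ := fun n x => ν x ((fun ω : ℕ → E => ω n) ⁻¹' B) with hqdef
  have hqrec : ∀ n x, q (n + 1) x = ∫⁻ y, q n y ∂(P x) := by
    intro n x
    have hpre : θ ⁻¹' ((fun ω : ℕ → E => ω n) ⁻¹' B)
        = (fun ω : ℕ → E => ω (n + 1)) ⁻¹' B := rfl
    have := mapθ x _ ((measurable_pi_apply n) hB)
    rw [hpre] at this
    exact this
  have hq0 : ∀ x, q 0 x = B.indicator 1 x := by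
    intro x
    rw [hqdef]
    simp only
    rw [← Measure.map_apply (measurable_pi_apply 0) hB, hν0 x, Measure.dirac_apply' x hB]
  have hqzero : ∀ n, ∀ x, x ∈ F → ψ x < 1 → q n x = 0 := by
    intro n
    induction n with
    | zero =>
      intro x hx hψx
      have hxB : x ∉ B := by
        intro hxB
        have h1 : q 0 x = 1 := by rw [hq0 x, indicator_of_mem hxB]; rfl
        have h2 : q 0 x ≤ ψi 0 x :=
          measure_mono (fun ω hω => ⟨0, le_refl 0, hω⟩)
        rw [h1, ← hxeq x hx] at h2
        exact absurd h2 (not_le.mpr hψx)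
      rw [hq0 x, indicator_of_notMem hxB]
    | succ n ih =>
      intro x hx hψx
      rw [hqrec n x]
      have hae : ∀ᵐ y ∂(P x), q n y = 0 := by
        filter_upwards [hFae x hx, hconst x hx] with y hyF hyψ
        exact ih y hyF (by rw [hyψ]; exact hψx)
      calc ∫⁻ y, q n y ∂(P x) = ∫⁻ _, (0 : ℝ≥0∞) ∂(P x) := lintegral_congr_ae hae
        _ = 0 := lintegral_zero
  -- conclusion
  have hFae_glob : ∀ᵐ x ∂μ, x ∈ F := by
    rw [ae_iff]
    simpa [Set.compl_def] using hFnull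
  filter_upwards [hFae_glob] with x hx
  have hgoal : ψ x = 0 ∨ ψ x = 1 := by
    rcases (hψle1 x).lt_or_eq with hlt | heq
    · left
      have hsub0 : Ai 0 ⊆ ⋃ n, (fun ω : ℕ → E => ω n) ⁻¹' B := by
        intro ω hω
        obtain ⟨n, _, hn⟩ := hω
        exact mem_iUnion.mpr ⟨n, hn⟩
      have hbound : ψi 0 x ≤ ∑' n, q n x :=
        le_trans (measure_mono hsub0) (measure_iUnion_le _)
      have hzero : ∑' n, q n x = 0 := by
        simp only [ENNReal.tsum_eq_zero]
        exact fun n => hqzero n x hx hlt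
      have := le_trans (le_of_eq (hxeq x hx)) hbound
      rw [hzero] at this
      exact le_antisymm this zero_le
    · right; exact heq
  exact hgoal
end

section
/- Let X be a Markov chain on E with transition kernel P and n-step transition probabilities P_n(x,·), admitting an invariant probability measure μ. Assume that for μ ⊗ μ-almost all (x, y) ∈ E × E there exists n with P_n(x,·) and P_n(y,·) not mutually singular. Then for μ ⊗ μ-almost all pairs (x₁, x₂) ∈ E × E, the total variation distance ‖P_n(x₁,·) − P_n(x₂,·)‖ tends to 0 as n → ∞. -/
open MeasureTheory ProbabilityTheory Filter ENNReal

section Dev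
variable {E : Type*} [MeasurableSpace E]

/-- half total variation distance -/
noncomputable def sdist (ν ρ : Measure E) : ℝ≥0∞ :=
  ⨆ (A : Set E) (_ : MeasurableSet A), ((ν A - ρ A) ⊔ (ρ A - ν A))

lemma tvDist_eq (ν ρ : Measure E) : tvDist ν ρ = 2 * sdist ν ρ := rfl

lemma le_sdist {ν ρ : Measure E} {A : Set E} (hA : MeasurableSet A) :
    (ν A - ρ A) ⊔ (ρ A - ν A) ≤ sdist ν ρ := by
  refine le_iSup₂ (f := fun A (_ : MeasurableSet A) => (ν A - ρ A) ⊔ (ρ A - ν A)) A hA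

lemma sdist_le_one {ν ρ : Measure E} [IsProbabilityMeasure ν] [IsProbabilityMeasure ρ] :
    sdist ν ρ ≤ 1 := by
  refine iSup₂_le fun A _ => sup_le ?_ ?_
  · exact le_trans (tsub_le_self) prob_le_one
  · exact le_trans (tsub_le_self) prob_le_one

lemma sdist_self (ν : Measure E) : sdist ν ν = 0 := by
  simp [sdist]

instance nStep_markov (P : Kernel E E) [IsMarkovKernel P] (n : ℕ) :
    IsMarkovKernel (nStep P n) := by
  induction n with
  | zero => rw [nStep]; infer_instance
  | succ n ih => rw [nStep]; infer_instance

lemma nStep_add (P : Kernel E E) [IsMarkovKernel P] (k l : ℕ) :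
    nStep P (k + l) = nStep P l ∘ₖ nStep P k := by
  induction k with
  | zero => simp [nStep, Kernel.comp_id]
  | succ k ih =>
      have : k + 1 + l = (k + l) + 1 := by omega
      rw [this, nStep, ih, nStep, Kernel.comp_assoc]

lemma nStep_one (P : Kernel E E) [IsMarkovKernel P] : nStep P 1 = P := by
  rw [nStep, nStep, Kernel.id_comp]

lemma nStep_apply_add (P : Kernel E E) [IsMarkovKernel P] (k l : ℕ) (x : E) :
    nStep P (k + l) x = (nStep P k x).bind (nStep P l) := by
  rw [nStep_add, Kernel.comp_apply]

lemma lintegral_sub_lintegral_le_sdist (ν ρ : Measure E) [IsProbabilityMeasure ν]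
    [IsProbabilityMeasure ρ] {f : E → ℝ≥0∞} (hf : Measurable f) (hf1 : ∀ z, f z ≤ 1) :
    ∫⁻ z, f z ∂ν - ∫⁻ z, f z ∂ρ ≤ sdist ν ρ := by
  set σ : Measure E := ν + ρ with hσ
  have hνσ : ν ≪ σ := Measure.absolutelyContinuous_of_le (Measure.le_add_right le_rfl)
  have hρσ : ρ ≪ σ := Measure.absolutelyContinuous_of_le (Measure.le_add_left le_rfl)
  set f₁ := ν.rnDeriv σ with hf₁
  set f₂ := ρ.rnDeriv σ with hf₂
  have m₁ : Measurable f₁ := Measure.measurable_rnDeriv _ _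
  have m₂ : Measurable f₂ := Measure.measurable_rnDeriv _ _
  have hν : σ.withDensity f₁ = ν := Measure.withDensity_rnDeriv_eq _ _ hνσ
  have hρ : σ.withDensity f₂ = ρ := Measure.withDensity_rnDeriv_eq _ _ hρσ
  set B : Set E := {z | f₂ z < f₁ z} with hB
  have mB : MeasurableSet B := measurableSet_lt m₂ m₁
  -- expressions as integrals over σ
  have ea : ∫⁻ z, f z ∂ν = ∫⁻ z, f₁ z * f z ∂σ := by
    rw [← hν, lintegral_withDensity_eq_lintegral_mul _ m₁ hf]; rfl
  have eb : ∫⁻ z, f z ∂ρ = ∫⁻ z, f₂ z * f z ∂σ := by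
    rw [← hρ, lintegral_withDensity_eq_lintegral_mul _ m₂ hf]; rfl
  have ec : ν B = ∫⁻ z, B.indicator f₁ z ∂σ := by
    rw [← hν, withDensity_apply _ mB, lintegral_indicator mB]
  have ed : ρ B = ∫⁻ z, B.indicator f₂ z ∂σ := by
    rw [← hρ, withDensity_apply _ mB, lintegral_indicator mB]
  have key : ∫⁻ z, f z ∂ν + ρ B ≤ ν B + ∫⁻ z, f z ∂ρ := by
    rw [ea, eb, ec, ed, ← lintegral_add_left (f := fun z => f₁ z * f z) (m₁.mul hf),
      ← lintegral_add_left (m₁.indicator mB)]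
    refine lintegral_mono fun z => ?_
    by_cases hz : z ∈ B
    · simp only [Set.indicator_of_mem hz]
      have h21 : f₂ z ≤ f₁ z := le_of_lt hz
      calc f₁ z * f z + f₂ z = (f₂ z + (f₁ z - f₂ z)) * f z + f₂ z := by
            rw [add_tsub_cancel_of_le h21]
        _ = f₂ z * f z + (f₁ z - f₂ z) * f z + f₂ z := by rw [add_mul]
        _ ≤ f₂ z * f z + (f₁ z - f₂ z) + f₂ z := by
            gcongr
            exact mul_le_of_le_one_right zero_le (hf1 z)
        _ = (f₂ z + (f₁ z - f₂ z)) + f₂ z * f z := by ring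
        _ = f₁ z + f₂ z * f z := by rw [add_tsub_cancel_of_le h21]
    · simp only [Set.indicator_of_notMem hz]
      have h12 : f₁ z ≤ f₂ z := not_lt.1 hz
      calc f₁ z * f z + 0 = f₁ z * f z := by rw [add_zero]
        _ ≤ f₂ z * f z := by gcongr
        _ ≤ 0 + f₂ z * f z := by rw [zero_add]
  -- from key, conclude
  have hfin : ρ B ≠ ⊤ := measure_ne_top _ _
  have hdc : ρ B ≤ ν B := by
    rw [ec, ed]
    refine lintegral_mono fun z => ?_
    by_cases hz : z ∈ B
    · simp only [Set.indicator_of_mem hz]; exact le_of_lt hz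
    · simp [Set.indicator_of_notMem hz]
  have : ∫⁻ z, f z ∂ν - ∫⁻ z, f z ∂ρ ≤ ν B - ρ B := by
    rw [tsub_le_iff_right]
    have h1 : ∫⁻ z, f z ∂ν ≤ ν B + ∫⁻ z, f z ∂ρ - ρ B :=
      ENNReal.le_sub_of_add_le_right hfin key
    refine h1.trans ?_
    rw [tsub_le_iff_right]
    calc ν B + ∫⁻ z, f z ∂ρ ≤ (ν B - ρ B + ρ B) + ∫⁻ z, f z ∂ρ := by
          rw [tsub_add_cancel_of_le hdc]
      _ = ν B - ρ B + ∫⁻ z, f z ∂ρ + ρ B := by ring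
  exact this.trans ((le_sup_left).trans (le_sdist mB))

section Countable
variable {E : Type*} [MeasurableSpace E] [MeasurableSpace.CountablyGenerated E]

/-- countable generating algebra -/
noncomputable def cAlg (E : Type*) [MeasurableSpace E] [MeasurableSpace.CountablyGenerated E] :
    Set (Set E) :=
  MeasureTheory.generateSetAlgebra (MeasurableSpace.countableGeneratingSet E)

lemma cAlg_countable : (cAlg E).Countable :=
  countable_generateSetAlgebra MeasurableSpace.countable_countableGeneratingSet

lemma cAlg_isSetAlgebra : IsSetAlgebra (cAlg E) := isSetAlgebra_generateSetAlgebra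

lemma cAlg_generateFrom : ‹MeasurableSpace E› = MeasurableSpace.generateFrom (cAlg E) := by
  rw [cAlg, generateFrom_generateSetAlgebra_eq,
    MeasurableSpace.generateFrom_countableGeneratingSet]

lemma cAlg_measurableSet {A : Set E} (hA : A ∈ cAlg E) : MeasurableSet A := by
  rw [cAlg_generateFrom (E := E)]
  exact MeasurableSpace.measurableSet_generateFrom hA

lemma sdist_eq_countable (ν ρ : Measure E) [IsProbabilityMeasure ν] [IsProbabilityMeasure ρ] :
    sdist ν ρ = ⨆ (A : Set E) (_ : A ∈ cAlg E), ((ν A - ρ A) ⊔ (ρ A - ν A)) := by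
  refine le_antisymm ?_ (iSup₂_le fun A hA => le_sdist (cAlg_measurableSet hA))
  have hdense : (ν + ρ).MeasureDense (cAlg E) :=
    Measure.MeasureDense.of_generateFrom_isSetAlgebra_finite (ν + ρ) cAlg_isSetAlgebra cAlg_generateFrom
  refine iSup₂_le fun A hA => ?_
  set T : ℝ≥0∞ := ⨆ (A : Set E) (_ : A ∈ cAlg E), ((ν A - ρ A) ⊔ (ρ A - ν A)) with hT
  have hTtop : T ≠ ⊤ := by
    refine ne_top_of_le_ne_top (by norm_num : (1:ℝ≥0∞) ≠ ⊤) (iSup₂_le fun A _ => ?_)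
    exact sup_le (le_trans tsub_le_self prob_le_one) (le_trans tsub_le_self prob_le_one)
  refine ENNReal.le_of_forall_pos_le_add fun ε hε _ => ?_
  obtain ⟨t, ht, hεt⟩ := hdense.approx A hA (measure_ne_top _ _) ((ε : ℝ)/2) (by positivity)
  set σ := ν + ρ with hσ
  have hσΔ : σ (symmDiff A t) < ENNReal.ofReal ((ε : ℝ)/2) := hεt
  have key : ∀ (μ₁ μ₂ : Measure E), μ₁ ≤ σ → μ₂ ≤ σ →
      μ₁ A - μ₂ A ≤ (μ₁ t - μ₂ t) + 2 * σ (symmDiff A t) := by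
    intro μ₁ μ₂ h₁ h₂
    have hAt : μ₁ A ≤ μ₁ t + σ (symmDiff A t) := by
      calc μ₁ A ≤ μ₁ (t ∪ symmDiff A t) := by
            refine measure_mono fun z hz => ?_
            by_cases hzt : z ∈ t
            · exact Or.inl hzt
            · exact Or.inr (Or.inl ⟨hz, hzt⟩)
        _ ≤ μ₁ t + μ₁ (symmDiff A t) := measure_union_le _ _
        _ ≤ μ₁ t + σ (symmDiff A t) := by gcongr
    have htA : μ₂ t ≤ μ₂ A + σ (symmDiff A t) := by
      calc μ₂ t ≤ μ₂ (A ∪ symmDiff A t) := by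
            refine measure_mono fun z hz => ?_
            by_cases hzA : z ∈ A
            · exact Or.inl hzA
            · exact Or.inr (Or.inr ⟨hz, hzA⟩)
        _ ≤ μ₂ A + μ₂ (symmDiff A t) := measure_union_le _ _
        _ ≤ μ₂ A + σ (symmDiff A t) := by gcongr
    rw [tsub_le_iff_right]
    calc μ₁ A ≤ μ₁ t + σ (symmDiff A t) := hAt
      _ ≤ ((μ₁ t - μ₂ t) + μ₂ t) + σ (symmDiff A t) := by gcongr; exact le_tsub_add
      _ ≤ ((μ₁ t - μ₂ t) + (μ₂ A + σ (symmDiff A t))) + σ (symmDiff A t) := by gcongr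
      _ = (μ₁ t - μ₂ t) + 2 * σ (symmDiff A t) + μ₂ A := by ring
  have hν' : ν ≤ σ := Measure.le_add_right le_rfl
  have hρ' : ρ ≤ σ := Measure.le_add_left le_rfl
  have h2σ : 2 * σ (symmDiff A t) ≤ (ε : ℝ≥0∞) := by
    calc 2 * σ (symmDiff A t) ≤ 2 * ENNReal.ofReal ((ε:ℝ)/2) := by gcongr
      _ = ENNReal.ofReal (2 * ((ε:ℝ)/2)) := by
          rw [ENNReal.ofReal_mul (by norm_num)]; norm_num
      _ = (ε : ℝ≥0∞) := by
          rw [mul_div_cancel₀ _ (by norm_num : (2:ℝ) ≠ 0)]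
          simp [ENNReal.ofReal_coe_nnreal]
  have hle : (ν A - ρ A) ⊔ (ρ A - ν A) ≤ ((ν t - ρ t) ⊔ (ρ t - ν t)) + (ε : ℝ≥0∞) := by
    refine sup_le ?_ ?_
    · exact le_trans (key ν ρ hν' hρ') (by gcongr; exact le_sup_left)
    · exact le_trans (key ρ ν hρ' hν') (by gcongr; exact le_sup_right)
  refine hle.trans ?_
  gcongr
  exact le_iSup₂ (f := fun A (_ : A ∈ cAlg E) => (ν A - ρ A) ⊔ (ρ A - ν A)) t ht

lemma measurable_sdist_pair (κ η : Kernel E E) [IsMarkovKernel κ] [IsMarkovKernel η] :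
    Measurable fun p : E × E => sdist (κ p.1) (η p.2) := by
  have : (fun p : E × E => sdist (κ p.1) (η p.2))
      = fun p => ⨆ (A : Set E) (_ : A ∈ cAlg E),
        ((κ p.1 A - η p.2 A) ⊔ (η p.2 A - κ p.1 A)) := by
    funext p; exact sdist_eq_countable _ _
  rw [this]
  refine Measurable.biSup _ cAlg_countable fun A hA => ?_
  have hAm := cAlg_measurableSet hA
  have h1 : Measurable fun p : E × E => κ p.1 A := (κ.measurable_coe hAm).comp measurable_fst
  have h2 : Measurable fun p : E × E => η p.2 A := (η.measurable_coe hAm).comp measurable_snd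
  exact (h1.sub h2).sup (h2.sub h1)

end Countable

end Dev

section Chain
variable {E : Type*} [MeasurableSpace E] (P : Kernel E E) [IsMarkovKernel P]

/-- the 2-point product kernel of the `k`-step kernel -/
noncomputable def QK (k : ℕ) : Kernel (E × E) (E × E) :=
  ((nStep P k).comap Prod.fst measurable_fst) ×ₖ ((nStep P k).comap Prod.snd measurable_snd)

instance (k : ℕ) : IsMarkovKernel (QK P k) := by
  rw [QK]; infer_instance

lemma QK_apply (k : ℕ) (p : E × E) :
    QK P k p = (nStep P k p.1).prod (nStep P k p.2) := by
  rw [QK, Kernel.prod_apply, Kernel.comap_apply, Kernel.comap_apply]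

variable (μ : Measure E) [IsProbabilityMeasure μ]
variable (hinv : ∀ A : Set E, MeasurableSet A → μ A = ∫⁻ x, P x A ∂μ)

include hinv in
lemma bind_nStep_eq (n : ℕ) : μ.bind ⇑(nStep P n) = μ := by
  have h1 : μ.bind ⇑P = μ := by
    ext A hA
    rw [Measure.bind_apply hA (Kernel.measurable P).aemeasurable]
    exact (hinv A hA).symm
  induction n with
  | zero =>
      ext A hA
      rw [Measure.bind_apply hA (Kernel.measurable _).aemeasurable]
      simp [nStep, Kernel.id_apply, measure_congr]
      rw [lintegral_congr (fun x => by rw [Measure.dirac_apply' _ hA]), lintegral_indicator_one hA]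
  | succ n ih =>
      have : ⇑(nStep P (n+1)) = fun x => (P x).bind ⇑(nStep P n) := by
        funext x; rw [nStep, Kernel.comp_apply]
      rw [this, ← Measure.bind_bind (Kernel.measurable P).aemeasurable (Kernel.measurable _).aemeasurable, h1, ih]

include hinv in
lemma lintegral_nStep_invariant (n : ℕ) {g : E → ℝ≥0∞} (hg : Measurable g) :
    ∫⁻ x, ∫⁻ z, g z ∂(nStep P n x) ∂μ = ∫⁻ z, g z ∂μ := by
  rw [← Measure.lintegral_bind (Kernel.measurable _).aemeasurable hg.aemeasurable, bind_nStep_eq P μ hinv]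

include hinv in
lemma lintegral_QK_invariant (k : ℕ) {f : E × E → ℝ≥0∞} (hf : Measurable f) :
    ∫⁻ p, ∫⁻ q, f q ∂(QK P k p) ∂(μ.prod μ) = ∫⁻ q, f q ∂(μ.prod μ) := by
  have hout : Measurable fun p : E × E => ∫⁻ q, f q ∂(QK P k p) :=
    Measurable.lintegral_kernel hf
  have hH : Measurable fun q : E × E => ∫⁻ y', f (q.1, y') ∂(nStep P k q.2) := by
    have : Measurable fun r : (E × E) × E => f (r.1.1, r.2) :=
      hf.comp (measurable_fst.fst.prodMk measurable_snd)
    exact Measurable.lintegral_kernel_prod_right' (κ := (nStep P k).comap Prod.snd measurable_snd)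
      this
  have hF : Measurable fun x' : E => ∫⁻ y', f (x', y') ∂μ :=
    Measurable.lintegral_prod_right' hf
  rw [lintegral_prod _ hout.aemeasurable]
  have step1 : ∀ x : E, ∫⁻ y, ∫⁻ q, f q ∂(QK P k (x, y)) ∂μ
      = ∫⁻ x', ∫⁻ y', f (x', y') ∂μ ∂(nStep P k x) := by
    intro x
    have e1 : ∀ y : E, ∫⁻ q, f q ∂(QK P k (x, y))
        = ∫⁻ x', ∫⁻ y', f (x', y') ∂(nStep P k y) ∂(nStep P k x) := by
      intro y
      rw [QK_apply, lintegral_prod _ hf.aemeasurable]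
    simp_rw [e1]
    rw [lintegral_lintegral_swap]
    · congr 1
      funext x'
      exact lintegral_nStep_invariant P μ hinv k (hf.comp (measurable_prodMk_left (x := x')))
    · exact (hH.comp ((measurable_snd.prodMk measurable_fst))).aemeasurable
  simp_rw [step1]
  rw [lintegral_nStep_invariant P μ hinv k hF, ← lintegral_prod _ hf.aemeasurable]

end Chain

section SFun
variable {E : Type*} [MeasurableSpace E] (P : Kernel E E) [IsMarkovKernel P]

/-- helper: ∫f - ∫g ≤ ∫(f-g) -/
lemma lintegral_tsub_le {α : Type*} [MeasurableSpace α] (ν : Measure α) (f g : α → ℝ≥0∞)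
    (hg : Measurable g) (hf : Measurable f) :
    ∫⁻ a, f a ∂ν - ∫⁻ a, g a ∂ν ≤ ∫⁻ a, (f a - g a) ∂ν := by
  rw [tsub_le_iff_right, ← lintegral_add_right _ hg]
  exact lintegral_mono fun a => le_tsub_add

/-- TV contraction under a Markov kernel -/
lemma sdist_bind_le (ν ρ : Measure E) [IsProbabilityMeasure ν] [IsProbabilityMeasure ρ] :
    sdist (ν.bind ⇑P) (ρ.bind ⇑P) ≤ sdist ν ρ := by
  refine iSup₂_le fun A hA => ?_
  rw [Measure.bind_apply hA (Kernel.measurable P).aemeasurable, Measure.bind_apply hA (Kernel.measurable P).aemeasurable]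
  refine sup_le ?_ ?_
  · exact lintegral_sub_lintegral_le_sdist ν ρ (P.measurable_coe hA) fun z => prob_le_one
  · refine le_trans
      (lintegral_sub_lintegral_le_sdist ρ ν (P.measurable_coe hA) fun z => prob_le_one) ?_
    refine iSup₂_le fun B hB => le_trans (sup_comm _ _).le (le_sdist hB)

/-- the TV-distance function at time n -/
noncomputable def Sf (n : ℕ) : E × E → ℝ≥0∞ :=
  fun p => sdist (nStep P n p.1) (nStep P n p.2)

lemma Sf_le_one (n : ℕ) (p : E × E) : Sf P n p ≤ 1 := sdist_le_one

lemma Sf_antitone (p : E × E) : Antitone fun n => Sf P n p := by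
  refine antitone_nat_of_succ_le fun n => ?_
  have h : ∀ x : E, nStep P (n + 1) x = (nStep P n x).bind ⇑P := by
    intro x
    rw [nStep_add P n 1, Kernel.comp_apply, nStep_one]
  simp only [Sf, h]
  exact sdist_bind_le P _ _

lemma Sf_measurable [MeasurableSpace.CountablyGenerated E] (n : ℕ) : Measurable (Sf P n) :=
  measurable_sdist_pair _ _

/-- subharmonicity: `S_{k+l}(p) ≤ ∫ S_l dQ_k(p)` -/
lemma Sf_add_le (k l : ℕ) (p : E × E) :
    Sf P (k + l) p ≤ ∫⁻ q, Sf P l q ∂(QK P k p) := by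
  refine iSup₂_le fun A hA => ?_
  have hg : Measurable fun z : E => nStep P l z A := Kernel.measurable_coe _ hA
  have h1 : ∀ x : E, nStep P (k + l) x A = ∫⁻ x', nStep P l x' A ∂(nStep P k x) := by
    intro x
    rw [nStep_apply_add, Measure.bind_apply hA (Kernel.measurable _).aemeasurable]
  have hu1 : ∫⁻ q, nStep P l q.1 A ∂(QK P k p) = ∫⁻ x', nStep P l x' A ∂(nStep P k p.1) := by
    rw [QK_apply]
    rw [lintegral_prod (fun q : E × E => nStep P l q.1 A)
      ((hg.comp measurable_fst).aemeasurable)]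
    simp [lintegral_const]
  have hu2 : ∫⁻ q, nStep P l q.2 A ∂(QK P k p) = ∫⁻ x', nStep P l x' A ∂(nStep P k p.2) := by
    rw [QK_apply]
    rw [lintegral_prod (fun q : E × E => nStep P l q.2 A)
      ((hg.comp measurable_snd).aemeasurable)]
    simp [lintegral_const]
  have key : ∀ (q : E × E), (nStep P l q.1 A - nStep P l q.2 A) ≤ Sf P l q ∧
      (nStep P l q.2 A - nStep P l q.1 A) ≤ Sf P l q := by
    intro q
    constructor
    · exact le_trans le_sup_left (le_sdist hA)
    · exact le_trans le_sup_right (le_sdist hA)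
  rw [h1, h1]
  refine sup_le ?_ ?_
  · rw [← hu1, ← hu2]
    refine le_trans (lintegral_tsub_le _ _ _ (hg.comp measurable_snd) (hg.comp measurable_fst)) ?_
    exact lintegral_mono fun q => (key q).1
  · rw [← hu1, ← hu2]
    refine le_trans (lintegral_tsub_le _ _ _ (hg.comp measurable_fst) (hg.comp measurable_snd)) ?_
    exact lintegral_mono fun q => (key q).2

/-- the limiting distance function -/
noncomputable def df : E × E → ℝ≥0∞ := fun p => ⨅ n, Sf P n p

lemma df_le_Sf (n : ℕ) (p : E × E) : df P p ≤ Sf P n p := iInf_le _ n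

lemma df_le_one (p : E × E) : df P p ≤ 1 := le_trans (df_le_Sf P 0 p) (Sf_le_one P 0 p)

lemma df_measurable [MeasurableSpace.CountablyGenerated E] : Measurable (df P) :=
  Measurable.iInf fun n => Sf_measurable P n

variable [MeasurableSpace.CountablyGenerated E]

lemma df_subharmonic (k : ℕ) (p : E × E) :
    df P p ≤ ∫⁻ q, df P q ∂(QK P k p) := by
  have h : ∀ l, df P p ≤ ∫⁻ q, Sf P l q ∂(QK P k p) :=
    fun l => le_trans (df_le_Sf P (k + l) p) (Sf_add_le P k l p)
  have heq : ∫⁻ q, df P q ∂(QK P k p) = ⨅ l, ∫⁻ q, Sf P l q ∂(QK P k p) := by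
    rw [← lintegral_iInf (fun n => Sf_measurable P n) (fun _ _ hmn => fun q => Sf_antitone P q hmn)
      (ne_top_of_le_ne_top one_ne_top (le_trans (lintegral_mono fun q => Sf_le_one P 0 q)
        (by simp)))]
    rfl
  rw [heq]
  exact le_iInf h

/-- Cauchy-Schwarz for lintegral on probability measures -/
lemma sq_lintegral_le {α : Type*} [MeasurableSpace α] (ν : Measure α) [IsProbabilityMeasure ν]
    {f : α → ℝ≥0∞} (hf : Measurable f) :
    (∫⁻ a, f a ∂ν) ^ 2 ≤ ∫⁻ a, f a ^ 2 ∂ν := by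
  have hconj : (2:ℝ).HolderConjugate 2 := by constructor <;> norm_num
  have := lintegral_mul_le_Lp_mul_Lq ν hconj hf.aemeasurable
    (aemeasurable_const (b := (1:ℝ≥0∞)))
  simp only [Pi.mul_apply, mul_one, ENNReal.one_rpow, lintegral_const, measure_univ,
    one_mul, ENNReal.one_rpow] at this
  have h2 : ∫⁻ a, f a ∂ν ≤ (∫⁻ a, f a ^ (2:ℝ) ∂ν) ^ ((1:ℝ)/2) := by
    simpa using this
  calc (∫⁻ a, f a ∂ν) ^ 2 ≤ ((∫⁻ a, f a ^ (2:ℝ) ∂ν) ^ ((1:ℝ)/2)) ^ 2 := by gcongr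
    _ = ∫⁻ a, f a ^ (2:ℝ) ∂ν := by
        rw [← ENNReal.rpow_natCast (_ ^ ((1:ℝ)/2)) 2, ← ENNReal.rpow_mul]
        norm_num
    _ = ∫⁻ a, f a ^ 2 ∂ν := by
        congr 1; funext a
        rw [← ENNReal.rpow_natCast (f a) 2]; norm_num

lemma df_sq_subharmonic (k : ℕ) (p : E × E) :
    (df P p) ^ 2 ≤ ∫⁻ q, (df P q) ^ 2 ∂(QK P k p) := by
  calc (df P p) ^ 2 ≤ (∫⁻ q, df P q ∂(QK P k p)) ^ 2 := by gcongr; exact df_subharmonic P k p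
    _ ≤ ∫⁻ q, (df P q) ^ 2 ∂(QK P k p) := sq_lintegral_le _ (df_measurable P)

end SFun

section Harmonic
variable {E : Type*} [MeasurableSpace E] [MeasurableSpace.CountablyGenerated E]
  (P : Kernel E E) [IsMarkovKernel P]
  (μ : Measure E) [IsProbabilityMeasure μ]
  (hinv : ∀ A : Set E, MeasurableSet A → μ A = ∫⁻ x, P x A ∂μ)

include hinv in
lemma ae_harmonic_pattern (k : ℕ) {φ : E × E → ℝ≥0∞} (hφ : Measurable φ)
    (hφ1 : ∀ p, φ p ≤ 1) (hsub : ∀ p, φ p ≤ ∫⁻ q, φ q ∂(QK P k p)) :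
    ∀ᵐ p ∂(μ.prod μ), ∫⁻ q, φ q ∂(QK P k p) = φ p := by
  set ψ : E × E → ℝ≥0∞ := fun p => ∫⁻ q, φ q ∂(QK P k p) with hψdef
  have hψ : Measurable ψ := Measurable.lintegral_kernel hφ
  have hfin : ∫⁻ p, φ p ∂(μ.prod μ) ≠ ⊤ := by
    refine ne_top_of_le_ne_top one_ne_top ?_
    calc ∫⁻ p, φ p ∂(μ.prod μ) ≤ ∫⁻ _, 1 ∂(μ.prod μ) := lintegral_mono hφ1
      _ = 1 := by simp
  have heq : ∫⁻ p, ψ p ∂(μ.prod μ) = ∫⁻ p, φ p ∂(μ.prod μ) :=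
    lintegral_QK_invariant P μ hinv k hφ
  have hzero : ∫⁻ p, (ψ p - φ p) ∂(μ.prod μ) = 0 := by
    rw [lintegral_sub hφ hfin (ae_of_all _ hsub), heq, tsub_self]
  have := (lintegral_eq_zero_iff (hψ.sub hφ)).1 hzero
  filter_upwards [this] with p hp
  have hle : ψ p ≤ φ p := tsub_eq_zero_iff_le.1 hp
  exact le_antisymm hle (hsub p)

/-- equality case in Cauchy-Schwarz -/
lemma ae_eq_const_of_sq {α : Type*} [MeasurableSpace α] (ν : Measure α) [IsProbabilityMeasure ν]
    {g : α → ℝ≥0∞} (hg : Measurable g) (hg1 : ∀ z, g z ≤ 1) {c : ℝ≥0∞} (hc1 : c ≤ 1)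
    (h1 : ∫⁻ z, g z ∂ν = c) (h2 : ∫⁻ z, g z ^ 2 ∂ν = c ^ 2) :
    ∀ᵐ z ∂ν, g z = c := by
  set e : α → ℝ≥0∞ := fun z => ((g z - c) ⊔ (c - g z)) ^ 2 with hedef
  have hkey : ∀ z, e z + 2 * c * g z = g z ^ 2 + c ^ 2 := by
    intro z
    rcases le_total c (g z) with h | h
    · obtain ⟨d, hd⟩ := exists_add_of_le h
      have hcne : c ≠ ⊤ := ne_top_of_le_ne_top one_ne_top hc1
      simp only [hedef, hd]
      rw [ENNReal.add_sub_cancel_left hcne, tsub_eq_zero_of_le (le_add_right le_rfl)]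
      have hd0 : d ⊔ (0:ℝ≥0∞) = d := sup_of_le_left zero_le
      rw [hd0]; ring
    · obtain ⟨d, hd⟩ := exists_add_of_le h
      have hgne : g z ≠ ⊤ := ne_top_of_le_ne_top one_ne_top (hg1 z)
      simp only [hedef, hd]
      rw [ENNReal.add_sub_cancel_left hgne, tsub_eq_zero_of_le (le_add_right le_rfl)]
      have hd0 : (0:ℝ≥0∞) ⊔ d = d := sup_of_le_right zero_le
      rw [hd0]; ring
  have he : Measurable e := by
    apply Measurable.pow_const
    exact (hg.sub measurable_const).sup (measurable_const.sub hg)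
  have hint : ∫⁻ z, e z ∂ν + 2 * c * c = c ^ 2 + c ^ 2 := by
    have : ∫⁻ z, (e z + 2 * c * g z) ∂ν = ∫⁻ z, (g z ^ 2 + c ^ 2) ∂ν := by
      exact lintegral_congr fun z => hkey z
    rw [lintegral_add_left he, lintegral_add_left (hg.pow_const 2), h2] at this
    rw [lintegral_const_mul _ hg, h1] at this
    simpa using this
  have hezero : ∫⁻ z, e z ∂ν = 0 := by
    have hfin : (2 : ℝ≥0∞) * c * c ≠ ⊤ := by
      refine ENNReal.mul_ne_top (ENNReal.mul_ne_top (by norm_num)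
        (ne_top_of_le_ne_top one_ne_top hc1)) (ne_top_of_le_ne_top one_ne_top hc1)
    have h' : ∫⁻ z, e z ∂ν + 2 * c * c = 0 + 2 * c * c := by
      rw [hint]; ring
    exact WithTop.add_right_cancel hfin h'
  have := (lintegral_eq_zero_iff he).1 hezero
  filter_upwards [this] with z hz
  have : (g z - c) ⊔ (c - g z) = 0 := by
    have := pow_eq_zero_iff (n := 2) (by norm_num) |>.1 hz
    exact this
  have h1 : g z - c = 0 := le_antisymm (le_sup_left.trans this.le) zero_le
  have h2 : c - g z = 0 := le_antisymm (le_sup_right.trans this.le) zero_le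
  exact le_antisymm (tsub_eq_zero_iff_le.1 h1) (tsub_eq_zero_iff_le.1 h2)

end Harmonic

section Residual
variable {E : Type*} [MeasurableSpace E] [MeasurableSpace.CountablyGenerated E]
  (P : Kernel E E) [IsMarkovKernel P]

lemma singular_of_df_ne_zero (k : ℕ) (p : E × E)
    (hae : ∀ᵐ q ∂((nStep P k p.1).prod (nStep P k p.2)), df P q = df P p)
    (hd : df P p ≠ 0) :
    (nStep P k p.1) ⟂ₘ (nStep P k p.2) := by
  set m1 : Measure E := nStep P k p.1 with hm1def
  set m2 : Measure E := nStep P k p.2 with hm2def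
  set σ : Measure E := m1 + m2 with hσdef
  have hm1σ : m1 ≪ σ := Measure.absolutelyContinuous_of_le (Measure.le_add_right le_rfl)
  have hm2σ : m2 ≪ σ := Measure.absolutelyContinuous_of_le (Measure.le_add_left le_rfl)
  set f₁ := m1.rnDeriv σ with hf₁def
  set f₂ := m2.rnDeriv σ with hf₂def
  have mf₁ : Measurable f₁ := Measure.measurable_rnDeriv _ _
  have mf₂ : Measurable f₂ := Measure.measurable_rnDeriv _ _
  set lam : Measure E := σ.withDensity (fun z => f₁ z ⊓ f₂ z) with hlamdef
  set R1 : Measure E := σ.withDensity (fun z => f₁ z - f₂ z) with hR1def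
  set R2 : Measure E := σ.withDensity (fun z => f₂ z - f₁ z) with hR2def
  have hfun1 : ((fun z => f₁ z ⊓ f₂ z) + fun z => f₁ z - f₂ z) = f₁ := by
    funext z
    simp only [Pi.add_apply]
    rcases le_total (f₂ z) (f₁ z) with h | h
    · rw [inf_of_le_right h]; exact add_tsub_cancel_of_le h
    · rw [inf_of_le_left h, tsub_eq_zero_of_le h, add_zero]
  have hm1 : m1 = lam + R1 := by
    rw [hlamdef, hR1def, ← withDensity_add_right _ (g := fun z => f₁ z - f₂ z) (mf₁.sub mf₂), hfun1]
    exact (Measure.withDensity_rnDeriv_eq m1 σ hm1σ).symm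
  have hfun2 : ((fun z => f₁ z ⊓ f₂ z) + fun z => f₂ z - f₁ z) = f₂ := by
    funext z
    simp only [Pi.add_apply]
    rcases le_total (f₁ z) (f₂ z) with h | h
    · rw [inf_of_le_left h]; exact add_tsub_cancel_of_le h
    · rw [inf_of_le_right h, tsub_eq_zero_of_le h, add_zero]
  have hm2 : m2 = lam + R2 := by
    rw [hlamdef, hR2def, ← withDensity_add_right _ (g := fun z => f₂ z - f₁ z) (mf₂.sub mf₁), hfun2]
    exact (Measure.withDensity_rnDeriv_eq m2 σ hm2σ).symm
  set α : ℝ≥0∞ := lam Set.univ with hαdef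
  have huniv1 : α + R1 Set.univ = 1 := by
    rw [hαdef, ← Measure.add_apply, ← hm1, hm1def]
    exact measure_univ
  have huniv2 : α + R2 Set.univ = 1 := by
    rw [hαdef, ← Measure.add_apply, ← hm2, hm2def]
    exact measure_univ
  have hα1 : α ≤ 1 := le_trans (le_add_right le_rfl) huniv1.le
  have hR1u : R1 Set.univ = 1 - α := by
    rw [← huniv1, add_comm]; exact (ENNReal.add_sub_cancel_right
      (ne_top_of_le_ne_top one_ne_top hα1)).symm
  have hR2u : R2 Set.univ = 1 - α := by
    rw [← huniv2, add_comm]; exact (ENNReal.add_sub_cancel_right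
      (ne_top_of_le_ne_top one_ne_top hα1)).symm
  haveI hR1fin : IsFiniteMeasure R1 := ⟨by rw [hR1u]; exact lt_of_le_of_lt tsub_le_self one_lt_top⟩
  haveI hR2fin : IsFiniteMeasure R2 := ⟨by rw [hR2u]; exact lt_of_le_of_lt tsub_le_self one_lt_top⟩
  have hcne : (1 : ℝ≥0∞) - α ≠ ⊤ := ne_top_of_le_ne_top one_ne_top tsub_le_self
  -- main residual inequality
  have hres : ∀ l : ℕ, Sf P (k + l) p * (1 - α) ≤ ∫⁻ q, Sf P l q ∂(R1.prod R2) := by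
    intro l
    rw [Sf, sdist, iSup_mul]
    refine iSup_le fun A => ?_
    rw [iSup_mul]
    refine iSup_le fun hA => ?_
    have hg : Measurable fun z : E => nStep P l z A := Kernel.measurable_coe _ hA
    -- decompose the (k+l)-step measures
    have hx : nStep P (k + l) p.1 A
        = ∫⁻ z, nStep P l z A ∂(lam) + ∫⁻ z, nStep P l z A ∂(R1) := by
      rw [nStep_apply_add, Measure.bind_apply hA (Kernel.measurable _).aemeasurable, ← hm1def, hm1,
        lintegral_add_measure]
    have hy : nStep P (k + l) p.2 A
        = ∫⁻ z, nStep P l z A ∂(lam) + ∫⁻ z, nStep P l z A ∂(R2) := by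
      rw [nStep_apply_add, Measure.bind_apply hA (Kernel.measurable _).aemeasurable, ← hm2def, hm2,
        lintegral_add_measure]
    set w : ℝ≥0∞ := ∫⁻ z, nStep P l z A ∂(lam)
    set u : ℝ≥0∞ := ∫⁻ z, nStep P l z A ∂(R1) with hudef
    set v : ℝ≥0∞ := ∫⁻ z, nStep P l z A ∂(R2) with hvdef
    -- integrals against the product
    have hu : ∫⁻ q, nStep P l q.1 A ∂(R1.prod R2) = u * (1 - α) := by
      rw [lintegral_prod (fun q : E × E => nStep P l q.1 A)
        ((hg.comp measurable_fst).aemeasurable)]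
      simp only [lintegral_const]
      rw [lintegral_mul_const _ hg, hR2u]
    have hv : ∫⁻ q, nStep P l q.2 A ∂(R1.prod R2) = v * (1 - α) := by
      rw [lintegral_prod (fun q : E × E => nStep P l q.2 A)
        ((hg.comp measurable_snd).aemeasurable)]
      have hvv : ∀ z : E, ∫⁻ z₂, nStep P l z₂ A ∂(R2) = v := fun _ => rfl
      simp only [hvv, lintegral_const, hR1u]
      try rw [mul_comm]
    have main1 : (nStep P (k + l) p.1 A - nStep P (k + l) p.2 A) * (1 - α)
        ≤ ∫⁻ q, Sf P l q ∂(R1.prod R2) := by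
      have h1 : nStep P (k + l) p.1 A - nStep P (k + l) p.2 A ≤ u - v := by
        rw [hx, hy, tsub_le_iff_right]
        calc w + u ≤ w + ((u - v) + v) := by gcongr; exact le_tsub_add
          _ = (u - v) + (w + v) := by ring
      refine le_trans (mul_le_mul_left h1 _) ?_
      rw [ENNReal.sub_mul (fun _ _ => hcne), ← hu, ← hv]
      refine le_trans (lintegral_tsub_le _ _ _ (hg.comp measurable_snd)
        (hg.comp measurable_fst)) ?_
      refine lintegral_mono fun q => ?_
      exact le_trans le_sup_left (le_sdist hA)
    have main2 : (nStep P (k + l) p.2 A - nStep P (k + l) p.1 A) * (1 - α)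
        ≤ ∫⁻ q, Sf P l q ∂(R1.prod R2) := by
      have h1 : nStep P (k + l) p.2 A - nStep P (k + l) p.1 A ≤ v - u := by
        rw [hx, hy, tsub_le_iff_right]
        calc w + v ≤ w + ((v - u) + u) := by gcongr; exact le_tsub_add
          _ = (v - u) + (w + u) := by ring
      refine le_trans (mul_le_mul_left h1 _) ?_
      rw [ENNReal.sub_mul (fun _ _ => hcne), ← hu, ← hv]
      refine le_trans (lintegral_tsub_le _ _ _ (hg.comp measurable_fst)
        (hg.comp measurable_snd)) ?_
      refine lintegral_mono fun q => ?_
      exact le_trans le_sup_right (le_sdist hA)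
    rcases le_total (nStep P (k + l) p.1 A - nStep P (k + l) p.2 A)
        (nStep P (k + l) p.2 A - nStep P (k + l) p.1 A) with h | h
    · rw [sup_of_le_right h]; exact main2
    · rw [sup_of_le_left h]; exact main1
  -- pass to the limit l → ∞
  have hdres : df P p * (1 - α) ≤ ∫⁻ q, df P q ∂(R1.prod R2) := by
    have hinf : ∫⁻ q, df P q ∂(R1.prod R2) = ⨅ l, ∫⁻ q, Sf P l q ∂(R1.prod R2) := by
      rw [← lintegral_iInf (fun n => Sf_measurable P n)
        (fun _ _ hmn => fun q => Sf_antitone P q hmn)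
        (ne_top_of_le_ne_top (measure_ne_top (R1.prod R2) Set.univ)
          (le_trans (lintegral_mono fun q => Sf_le_one P 0 q) (by simp [lintegral_one])))]
      rfl
    rw [hinf]
    refine le_iInf fun l => le_trans ?_ (hres l)
    exact mul_le_mul_left (df_le_Sf P (k + l) p) _
  -- use local constancy
  have habs : R1.prod R2 ≪ m1.prod m2 := by
    refine Measure.AbsolutelyContinuous.prod ?_ ?_
    · exact Measure.absolutelyContinuous_of_le (hm1 ▸ Measure.le_add_left le_rfl)
    · exact Measure.absolutelyContinuous_of_le (hm2 ▸ Measure.le_add_left le_rfl)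
  have hconst : ∫⁻ q, df P q ∂(R1.prod R2) = df P p * ((1 - α) * (1 - α)) := by
    have hae' : ∀ᵐ q ∂(R1.prod R2), df P q = df P p := habs.ae_le hae
    rw [lintegral_congr_ae hae', lintegral_const]
    congr 1
    rw [← Set.univ_prod_univ, Measure.prod_prod, hR1u, hR2u]
  have hle : df P p * (1 - α) ≤ (df P p * (1 - α)) * (1 - α) := by
    calc df P p * (1 - α) ≤ df P p * ((1 - α) * (1 - α)) := hconst ▸ hdres
      _ = (df P p * (1 - α)) * (1 - α) := by ring
  by_cases h0 : (1:ℝ≥0∞) - α = 0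
  · -- then the two measures coincide and df p = 0, contradiction
    exfalso
    have hR10 : R1 = 0 := Measure.measure_univ_eq_zero.1 (by rw [hR1u, h0])
    have hR20 : R2 = 0 := Measure.measure_univ_eq_zero.1 (by rw [hR2u, h0])
    have hmm : m1 = m2 := by rw [hm1, hm2, hR10, hR20]
    have hSf0 : Sf P k p = 0 := by
      have : Sf P k p = sdist m1 m2 := rfl
      rw [this, hmm]
      exact sdist_self m2
    exact hd (le_antisymm (hSf0 ▸ df_le_Sf P k p) zero_le)
  · -- cancellation forces α = 0, hence mutual singularity
    have hXne : df P p * (1 - α) ≠ 0 := mul_ne_zero hd h0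
    have hXtop : df P p * (1 - α) ≠ ⊤ :=
      ENNReal.mul_ne_top (ne_top_of_le_ne_top one_ne_top (df_le_one P p)) hcne
    have h1le : (1:ℝ≥0∞) ≤ 1 - α := by
      have := (ENNReal.mul_le_mul_iff_right hXne hXtop).1
        (by calc (df P p * (1 - α)) * 1 = df P p * (1 - α) := by ring
              _ ≤ (df P p * (1 - α)) * (1 - α) := hle)
      exact this
    have hα0 : α = 0 := by
      by_contra hαne
      have : (1:ℝ≥0∞) - α < 1 := ENNReal.sub_lt_self one_ne_top one_ne_zero hαne
      exact absurd (lt_of_le_of_lt h1le this) (lt_irrefl _)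
    -- construct the separating set
    have hlamu : ∫⁻ z, f₁ z ⊓ f₂ z ∂σ = 0 := by
      have : lam Set.univ = 0 := by rw [← hαdef, hα0]
      rwa [hlamdef, withDensity_apply _ MeasurableSet.univ, setLIntegral_univ] at this
    have hmin : ∀ᵐ z ∂σ, f₁ z ⊓ f₂ z = 0 := by
      have := (lintegral_eq_zero_iff (mf₁.inf mf₂)).1 hlamu
      exact this
    set s : Set E := {z | f₁ z = 0} with hsdef
    have hs : MeasurableSet s := mf₁ (measurableSet_singleton 0)
    refine ⟨s, hs, ?_, ?_⟩
    · -- m1 s = 0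
      rw [← Measure.withDensity_rnDeriv_eq m1 σ hm1σ, withDensity_apply _ hs]
      rw [setLIntegral_congr_fun_ae hs (ae_of_all _ (fun z (hz : f₁ z = 0) => hz))]
      simp
    · -- m2 sᶜ = 0
      have hf2zero : ∀ᵐ z ∂σ, z ∈ sᶜ → f₂ z = (fun _ => (0:ℝ≥0∞)) z := by
        refine hmin.mono fun z hz hzc => ?_
        have hzc' : f₁ z ≠ 0 := hzc
        rcases le_total (f₂ z) (f₁ z) with h | h
        · rwa [inf_of_le_right h] at hz
        · rw [inf_of_le_left h] at hz
          exact absurd hz hzc'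
      rw [← Measure.withDensity_rnDeriv_eq m2 σ hm2σ, withDensity_apply _ hs.compl,
        setLIntegral_congr_fun_ae hs.compl hf2zero]
      simp

end Residual


/-- If the chain admits an invariant probability measure `μ` and for `μ ⊗ μ`-a.a. `(x,y)`
some `P_n(x,·)`, `P_n(y,·)` are non-singular, then `‖P_n(x₁,·) - P_n(x₂,·)‖ → 0` for
`μ ⊗ μ`-a.a. pairs `(x₁, x₂)`. -/
theorem tv_dist_pairs_tendsto_zero_ae
    {E : Type*} [MeasurableSpace E] [MeasurableSpace.CountablyGenerated E]
    (hΔ : MeasurableSet {p : E × E | p.1 = p.2})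
    (P : ProbabilityTheory.Kernel E E) [IsMarkovKernel P]
    (μ : Measure E) [IsProbabilityMeasure μ]
    (hinv : ∀ A : Set E, MeasurableSet A → μ A = ∫⁻ x, P x A ∂μ)
    (hns : ∀ᵐ p ∂(μ.prod μ), ∃ n : ℕ, ¬ nStep P n p.1 ⟂ₘ nStep P n p.2) :
    ∀ᵐ p ∂(μ.prod μ),
      Tendsto (fun n => tvDist (nStep P n p.1) (nStep P n p.2)) atTop (nhds 0) := by
  have hI : ∀ k : ℕ, ∀ᵐ p ∂(μ.prod μ),
      ∀ᵐ q ∂((nStep P k p.1).prod (nStep P k p.2)), df P q = df P p := by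
    intro k
    have h1 := ae_harmonic_pattern P μ hinv k (df_measurable P) (df_le_one P)
      (df_subharmonic P k)
    have h2 := ae_harmonic_pattern P μ hinv k ((df_measurable P).pow_const 2)
      (fun p => pow_le_one' (df_le_one P p) 2) (df_sq_subharmonic P k)
    filter_upwards [h1, h2] with p hp1 hp2
    have hc := ae_eq_const_of_sq (QK P k p) (df_measurable P) (df_le_one P)
      (df_le_one P p) hp1 hp2
    rwa [QK_apply] at hc
  have hall : ∀ᵐ p ∂(μ.prod μ), ∀ k : ℕ,
      ∀ᵐ q ∂((nStep P k p.1).prod (nStep P k p.2)), df P q = df P p :=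
    ae_all_iff.2 hI
  filter_upwards [hall, hns] with p hp hpns
  have hd0 : df P p = 0 := by
    by_contra hd
    obtain ⟨n, hn⟩ := hpns
    exact hn (singular_of_df_ne_zero P n p (hp n) hd)
  have hS : Tendsto (fun n => Sf P n p) atTop (nhds 0) := by
    have := tendsto_atTop_iInf (fun _ _ hmn => Sf_antitone P p hmn)
    rwa [show (⨅ n, Sf P n p) = 0 from hd0] at this
  have : Tendsto (fun n => 2 * Sf P n p) atTop (nhds (2 * 0)) :=
    ENNReal.Tendsto.const_mul hS (Or.inr (by norm_num))
  rw [mul_zero] at this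
  exact this
end
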